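/- arXiv:1505.06511 — 6 statements merged into one kernel-verified Lean document; each statement's English description precedes it below -/
import Mathlib

section
/- Let (d_k)_{k≥1} be a lacunary sequence of positive integers and (N_k)_{k≥1} positive integers with N_k | N_{k+1} and N_k < N_{k+1} for all k. Suppose there exists a constant c > 0 such that for every n and all analytic trigonometric polynomials f_1,…,f_n on T with deg f_k ≤ d_k, ∫_T (∑_{k=1}^n |f_k(t)|²)^{1/2} dμ(t) ≥ c · ∫_T (∑_{k=1}^n |(E^*_{N_k} f_k)(t)|²)^{1/2} dμ(t). Then there exist a ∈ ℕ and C > 0 such that d_k ≤ C·N_{k+a} for all k. -/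
open MeasureTheory Real

/-- The normalized Lebesgue measure `dt/2π` on (a fundamental domain of) `T = ℝ/2πℤ`,
realized as a probability measure on `ℝ` supported on `(0, 2π]`. -/
noncomputable def circleMeasure : Measure ℝ :=
  (ENNReal.ofReal (2 * π))⁻¹ • (volume.restrict (Set.Ioc 0 (2 * π)))

/-- `f` is an analytic trigonometric polynomial of degree at most `d`:
`f t = ∑_{j=0}^{d} a_j e^{ijt}`. -/
def IsAnalyticTrigPoly (d : ℕ) (f : ℝ → ℂ) : Prop :=
  ∃ a : ℕ → ℂ, f = fun t : ℝ => ∑ j ∈ Finset.range (d + 1), a j * Complex.exp (Complex.I * j * (t : ℂ))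

/-- The periodization operator `(E^*_N f)(t) = (1/N) ∑_{j=0}^{N-1} f(t + 2πj/N)`,
the conditional expectation onto `(2π/N)`-periodic functions. -/
noncomputable def Estar (N : ℕ) (f : ℝ → ℂ) : ℝ → ℂ :=
  fun t => (N : ℂ)⁻¹ * ∑ j ∈ Finset.range N, f (t + 2 * π * j / N)

/-- A sequence of positive integers is lacunary if `inf_k d_{k+1}/d_k > 1`. -/
def IsLacunary (d : ℕ → ℕ) : Prop :=
  ∃ q : ℝ, 1 < q ∧ ∀ k, q * d k ≤ d (k + 1)

/-- The `L¹(ℓ²)` norm of a finite sequence of functions on the circle. -/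
noncomputable def L1l2NormT (n : ℕ) (g : Fin n → ℝ → ℂ) : ℝ :=
  ∫ t, Real.sqrt (∑ k : Fin n, ‖g k t‖ ^ 2) ∂circleMeasure

/-- The independent-sum norm of a finite sequence of functions on the circle. -/
noncomputable def indNormT (n : ℕ) (g : Fin n → ℝ → ℂ) : ℝ :=
  ∫ ω : Fin n → ℝ, Real.sqrt (∑ k : Fin n, ‖g k (ω k)‖ ^ 2) ∂(Measure.pi fun _ => circleMeasure)

noncomputable section SteinAux


def SS (D : ℕ) (t : ℝ) : ℂ := ∑ r ∈ Finset.range D, Complex.exp (Complex.I * t) ^ r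

def fej (D : ℕ) (t : ℝ) : ℝ := ‖SS D t‖ ^ 2

def gf (D : ℕ) (t : ℝ) : ℂ := Complex.exp (Complex.I * t) * (SS D t) ^ 2

lemma fej_nonneg (D : ℕ) (t : ℝ) : 0 ≤ fej D t := by unfold fej; positivity

lemma expIt_mul_exp_neg (t : ℝ) :
    Complex.exp (Complex.I * t) * Complex.exp (Complex.I * (-t : ℝ)) = 1 := by
  rw [← Complex.exp_add, ← Complex.exp_zero]
  congr 1
  push_cast
  ring

lemma conj_expIt (t : ℝ) :
    (starRingEnd ℂ) (Complex.exp (Complex.I * t)) = Complex.exp (Complex.I * (-t : ℝ)) := by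
  rw [← Complex.exp_conj]
  congr 1
  simp [Complex.conj_I]

lemma conj_SS (D : ℕ) (t : ℝ) :
    Complex.exp (Complex.I * t) ^ (D - 1) * (starRingEnd ℂ) (SS D t) = SS D t := by
  rcases Nat.eq_zero_or_pos D with h | h
  · simp [SS, h]
  set e := Complex.exp (Complex.I * t) with he
  set e' := Complex.exp (Complex.I * (-t : ℝ)) with he'
  have hee' : e * e' = 1 := expIt_mul_exp_neg t
  have hconj : (starRingEnd ℂ) (SS D t) = ∑ r ∈ Finset.range D, e' ^ r := by
    simp only [SS, map_sum, map_pow, conj_expIt]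
    rfl
  rw [hconj, Finset.mul_sum]
  have : ∀ r ∈ Finset.range D, e ^ (D - 1) * e' ^ r = e ^ (D - 1 - r) := by
    intro r hr
    rw [Finset.mem_range] at hr
    have hr' : D - 1 - r + r = D - 1 := by omega
    calc e ^ (D - 1) * e' ^ r = e ^ (D - 1 - r) * (e ^ r * e' ^ r) := by
          rw [← mul_assoc, ← pow_add, hr']
      _ = e ^ (D - 1 - r) := by rw [← mul_pow, hee', one_pow, mul_one]
  rw [Finset.sum_congr rfl this]
  exact Finset.sum_range_reflect (fun r => e ^ r) D

lemma fej_eq_mul_conj (D : ℕ) (t : ℝ) :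
    (fej D t : ℂ) = SS D t * (starRingEnd ℂ) (SS D t) := by
  rw [Complex.mul_conj, fej]
  norm_cast
  exact Complex.sq_norm _

lemma gf_eq (D : ℕ) (hD : 1 ≤ D) (t : ℝ) :
    gf D t = Complex.exp (Complex.I * t) ^ D * (fej D t : ℂ) := by
  have h := conj_SS D t
  calc gf D t = Complex.exp (Complex.I * t) * SS D t *
        (Complex.exp (Complex.I * t) ^ (D - 1) * (starRingEnd ℂ) (SS D t)) := by
        rw [h, gf]; ring
    _ = Complex.exp (Complex.I * t) ^ (1 + (D - 1)) * (SS D t * (starRingEnd ℂ) (SS D t)) := by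
        rw [pow_add, pow_one]; ring
    _ = Complex.exp (Complex.I * t) ^ D * (fej D t : ℂ) := by
        rw [fej_eq_mul_conj]; congr 2; omega

lemma norm_expIt (t : ℝ) : ‖Complex.exp (Complex.I * t)‖ = 1 := by
  rw [Complex.norm_exp]
  simp [mul_comm]

lemma norm_gf (D : ℕ) (t : ℝ) : ‖gf D t‖ = fej D t := by
  rw [gf, norm_mul, norm_expIt, one_mul, norm_pow, fej]


-- (defs from a1 assumed; re-declare for this test)

lemma expIt_per (t : ℝ) (k : ℤ) :
    Complex.exp (Complex.I * ((t + 2 * π * k : ℝ) : ℂ)) = Complex.exp (Complex.I * t) := by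
  push_cast
  rw [mul_add, Complex.exp_add]
  have : Complex.I * (2 * ↑π * ↑k) = ↑k * (2 * ↑π * Complex.I) := by ring
  rw [this, Complex.exp_int_mul_two_pi_mul_I, mul_one]

lemma fej_per (D : ℕ) (t : ℝ) (k : ℤ) : fej D (t + 2 * π * k) = fej D t := by
  unfold fej SS
  rw [show Complex.exp (Complex.I * ((t + 2 * π * k : ℝ) : ℂ)) = Complex.exp (Complex.I * t) from expIt_per t k]

lemma conj_expIt' (t : ℝ) :
    (starRingEnd ℂ) (Complex.exp (Complex.I * t)) = Complex.exp (Complex.I * ((-t : ℝ) : ℂ)) := by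
  rw [← Complex.exp_conj]
  congr 1
  simp [Complex.conj_I]

lemma fej_neg (D : ℕ) (t : ℝ) : fej D (-t) = fej D t := by
  unfold fej SS
  have : ∑ r ∈ Finset.range D, Complex.exp (Complex.I * ((-t : ℝ) : ℂ)) ^ r
      = (starRingEnd ℂ) (∑ r ∈ Finset.range D, Complex.exp (Complex.I * t) ^ r) := by
    simp only [map_sum, map_pow, conj_expIt']
  rw [this, Complex.norm_conj]

lemma continuous_expIt : Continuous (fun t : ℝ => Complex.exp (Complex.I * t)) :=
  Complex.continuous_exp.comp (continuous_const.mul Complex.continuous_ofReal)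

lemma continuous_SS (D : ℕ) : Continuous (SS D) :=
  continuous_finset_sum _ (fun r _ => (continuous_expIt).pow r)

lemma continuous_fej (D : ℕ) : Continuous (fej D) := ((continuous_SS D).norm).pow 2

lemma continuous_gf (D : ℕ) : Continuous (gf D) :=
  continuous_expIt.mul ((continuous_SS D).pow 2)



lemma fej_eq_cos_sum (D : ℕ) (t : ℝ) :
    fej D t = ∑ r ∈ Finset.range D, ∑ s ∈ Finset.range D, Real.cos (((r : ℝ) - s) * t) := by
  have h1 : (fej D t : ℂ) = ∑ r ∈ Finset.range D, ∑ s ∈ Finset.range D,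
      Complex.exp (((((r : ℝ) - s) * t : ℝ)) * Complex.I) := by
    rw [fej_eq_mul_conj]
    unfold SS
    rw [map_sum, Finset.sum_mul_sum]
    refine Finset.sum_congr rfl (fun r _ => Finset.sum_congr rfl (fun s _ => ?_))
    rw [map_pow, conj_expIt', ← Complex.exp_nat_mul, ← Complex.exp_nat_mul, ← Complex.exp_add]
    congr 1
    push_cast
    ring
  have h2 := congrArg Complex.re h1
  rw [Complex.ofReal_re] at h2
  rw [h2, Complex.re_sum]
  refine Finset.sum_congr rfl (fun r _ => ?_)
  rw [Complex.re_sum]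
  refine Finset.sum_congr rfl (fun s _ => ?_)
  exact Complex.exp_ofReal_mul_I_re _

lemma integral_cos_ks (r s : ℕ) :
    ∫ t in (0:ℝ)..(2*π), Real.cos (((r : ℝ) - s) * t) = if r = s then 2*π else 0 := by
  by_cases h : r = s
  · subst h
    simp [Real.pi_nonneg]
  · have hk : ((r : ℝ) - s) ≠ 0 := sub_ne_zero.mpr (by exact_mod_cast h)
    rw [if_neg h]
    rw [intervalIntegral.integral_comp_mul_left Real.cos hk, integral_cos]
    have h0 : ((r : ℝ) - s) * 0 = 0 := by ring
    have h2 : Real.sin (((r : ℝ) - s) * (2*π)) = 0 := by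
      have : ((r : ℝ) - s) * (2*π) = ((2*((r : ℤ) - s) : ℤ) : ℝ) * π := by push_cast; ring
      rw [this, Real.sin_int_mul_pi]
    rw [h0, h2, Real.sin_zero]
    simp

lemma integral_fej (D : ℕ) : ∫ t in (0:ℝ)..(2*π), fej D t = 2*π*D := by
  rw [intervalIntegral.integral_congr (g := fun t => ∑ r ∈ Finset.range D, ∑ s ∈ Finset.range D,
      Real.cos (((r : ℝ) - s) * t)) (fun t _ => fej_eq_cos_sum D t)]
  have hcont : ∀ (k : ℝ), Continuous fun t : ℝ => Real.cos (k * t) :=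
    fun k => Real.continuous_cos.comp (continuous_const.mul continuous_id)
  rw [intervalIntegral.integral_finset_sum (fun r _ =>
    (continuous_finset_sum _ (fun s _ => hcont _)).intervalIntegrable _ _)]
  have hrow : ∀ r ∈ Finset.range D,
      (∫ t in (0:ℝ)..(2*π), ∑ s ∈ Finset.range D, Real.cos (((r : ℝ) - s) * t)) = 2*π := by
    intro r hr
    rw [intervalIntegral.integral_finset_sum (fun s _ => (hcont _).intervalIntegrable _ _)]
    rw [Finset.sum_congr rfl (fun s _ => integral_cos_ks r s)]
    rw [Finset.sum_ite_eq (Finset.range D) r (fun _ => 2*π), if_pos hr]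
  rw [Finset.sum_congr rfl hrow, Finset.sum_const, Finset.card_range, nsmul_eq_mul]
  ring


lemma expIt_ne_one (t : ℝ) (h0 : 0 < t) (hπ : t ≤ π) : Complex.exp (Complex.I * t) ≠ 1 := by
  intro h
  rw [Complex.exp_eq_one_iff] at h
  obtain ⟨n, hn⟩ := h
  have hceq : (t : ℂ) = (n : ℂ) * (2 * (π : ℂ)) := by
    have h2 : Complex.I * (t : ℂ) = Complex.I * ((n : ℂ) * (2 * (π : ℂ))) := by rw [hn]; ring
    exact mul_left_cancel₀ Complex.I_ne_zero h2
  have ht : t = (n : ℝ) * (2 * π) := by exact_mod_cast hceq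
  have hπ0 := Real.pi_pos
  rcases le_or_gt n 0 with hn0 | hn0
  · have hn0' : (n : ℝ) ≤ 0 := by exact_mod_cast hn0
    nlinarith
  · have hn1 : (1 : ℝ) ≤ n := by exact_mod_cast hn0
    nlinarith

lemma norm_expIt_sub_one (t : ℝ) (h0 : 0 < t) (hπ : t ≤ π) :
    2 * t / π ≤ ‖Complex.exp (Complex.I * t) - 1‖ := by
  have hπ0 := Real.pi_pos
  have hsq : ‖Complex.exp (Complex.I * t) - 1‖ ^ 2 = 2 - 2 * Real.cos t := by
    rw [show Complex.I * (t : ℂ) = (t : ℂ) * Complex.I by ring, Complex.exp_mul_I]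
    rw [Complex.sq_norm, Complex.normSq_apply]
    simp [Complex.cos_ofReal_re, Complex.sin_ofReal_re]
    nlinarith [Real.sin_sq_add_cos_sq t]
  have hhalf : Real.sin (t / 2) ^ 2 = 1 / 2 - Real.cos t / 2 := by
    have := Real.sin_sq_eq_half_sub (t / 2)
    rw [show 2 * (t / 2) = t by ring] at this
    exact this
  have hsin : t / π ≤ Real.sin (t / 2) := by
    have := Real.mul_le_sin (x := t / 2) (by linarith) (by linarith)
    calc t / π = 2 / π * (t / 2) := by ring
      _ ≤ Real.sin (t / 2) := this
  have h1 : (2 * t / π) ^ 2 ≤ ‖Complex.exp (Complex.I * t) - 1‖ ^ 2 := by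
    rw [hsq, show 2 - 2 * Real.cos t = 4 * Real.sin (t / 2) ^ 2 by rw [hhalf]; ring]
    have h2 : (t / π) ^ 2 ≤ Real.sin (t / 2) ^ 2 :=
      pow_le_pow_left₀ (by positivity) hsin 2
    calc (2 * t / π) ^ 2 = 4 * (t / π) ^ 2 := by ring
      _ ≤ 4 * Real.sin (t / 2) ^ 2 := by linarith
  exact le_of_pow_le_pow_left₀ (by norm_num) (norm_nonneg _) h1

lemma fej_le (D : ℕ) (t : ℝ) (h0 : 0 < t) (hπ : t ≤ π) : fej D t ≤ π ^ 2 / t ^ 2 := by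
  have hπ0 := Real.pi_pos
  have hne := expIt_ne_one t h0 hπ
  have hgeom : SS D t = (Complex.exp (Complex.I * t) ^ D - 1) / (Complex.exp (Complex.I * t) - 1) :=
    geom_sum_eq hne D
  have hnum : ‖Complex.exp (Complex.I * t) ^ D - 1‖ ≤ 2 := by
    calc ‖Complex.exp (Complex.I * t) ^ D - 1‖ ≤ ‖Complex.exp (Complex.I * t) ^ D‖ + ‖(1:ℂ)‖ :=
          norm_sub_le _ _
      _ = 2 := by rw [norm_pow, norm_expIt, one_pow, norm_one]; norm_num
  have hden := norm_expIt_sub_one t h0 hπ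
  have hden0 : (0:ℝ) < 2 * t / π := by positivity
  have hden1 : 0 < ‖Complex.exp (Complex.I * t) - 1‖ := lt_of_lt_of_le hden0 hden
  have hSS : ‖SS D t‖ ≤ π / t := by
    rw [hgeom, norm_div]
    calc ‖Complex.exp (Complex.I * t) ^ D - 1‖ / ‖Complex.exp (Complex.I * t) - 1‖
        ≤ 2 / (2 * t / π) := by
          apply div_le_div₀ (by norm_num) hnum hden0 hden
      _ = π / t := by field_simp
  have h2 : ‖SS D t‖ ^ 2 ≤ (π / t) ^ 2 := pow_le_pow_left₀ (norm_nonneg _) hSS 2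
  calc fej D t = ‖SS D t‖ ^ 2 := rfl
    _ ≤ (π / t) ^ 2 := h2
    _ = π ^ 2 / t ^ 2 := div_pow π t 2


lemma integral_inv_sq_bound (δ : ℝ) (h0 : 0 < δ) (hδ : δ ≤ π) :
    ∫ t in δ..π, π ^ 2 / t ^ 2 ≤ π ^ 2 / δ := by
  have hπ0 := Real.pi_pos
  have hrw : (fun t : ℝ => π ^ 2 / t ^ 2) = fun t : ℝ => π ^ 2 * t ^ (-2 : ℤ) := by
    funext t
    rw [zpow_neg, div_eq_mul_inv]
    norm_num
  rw [hrw, intervalIntegral.integral_const_mul]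
  have hmem : (0:ℝ) ∉ Set.uIcc δ π := by
    rw [Set.uIcc_of_le hδ]
    intro h
    exact absurd (Set.mem_Icc.mp h).1 (by linarith)
  rw [integral_zpow (Or.inr ⟨by norm_num, hmem⟩)]
  have : ((-2:ℤ) + 1 : ℝ) = -1 := by norm_num
  have hval : (π ^ ((-2:ℤ) + 1) - δ ^ ((-2:ℤ) + 1)) / (((-2:ℤ):ℝ) + 1) = δ⁻¹ - π⁻¹ := by
    norm_num
    ring
  rw [hval]
  have hi : 0 ≤ π⁻¹ := by positivity
  have : δ⁻¹ - π⁻¹ ≤ δ⁻¹ := by linarith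
  calc π ^ 2 * (δ⁻¹ - π⁻¹) ≤ π ^ 2 * δ⁻¹ := by nlinarith
    _ = π ^ 2 / δ := by rw [div_eq_mul_inv]

lemma tail_half (D : ℕ) (δ : ℝ) (h0 : 0 < δ) (hδ : δ ≤ π) :
    ∫ t in δ..π, fej D t ≤ π ^ 2 / δ := by
  have h1 : ∫ t in δ..π, fej D t ≤ ∫ t in δ..π, π ^ 2 / t ^ 2 := by
    apply intervalIntegral.integral_mono_on hδ
      ((continuous_fej D).intervalIntegrable _ _)
    · apply ContinuousOn.intervalIntegrable
      apply ContinuousOn.div continuousOn_const (continuous_pow 2).continuousOn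
      intro t ht
      rw [Set.uIcc_of_le hδ] at ht
      have h1 : 0 < t := lt_of_lt_of_le h0 (Set.mem_Icc.mp ht).1
      exact pow_ne_zero 2 h1.ne'
    · intro t ht
      exact fej_le D t (lt_of_lt_of_le h0 (Set.mem_Icc.mp ht).1) (Set.mem_Icc.mp ht).2
  exact le_trans h1 (integral_inv_sq_bound δ h0 hδ)

lemma fej_reflect (D : ℕ) (t : ℝ) : fej D (2 * π - t) = fej D t := by
  have h1 : (2 : ℝ) * π - t = -t + 2 * π * (1:ℤ) := by push_cast; ring
  rw [h1, fej_per, fej_neg]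

lemma tail_bound (D : ℕ) (δ : ℝ) (h0 : 0 < δ) (hδ : δ ≤ π) :
    ∫ t in δ..(2*π - δ), fej D t ≤ 2 * π ^ 2 / δ := by
  have hI : ∀ a b : ℝ, IntervalIntegrable (fej D) volume a b :=
    fun a b => (continuous_fej D).intervalIntegrable a b
  have hsplit : ∫ t in δ..(2*π - δ), fej D t
      = (∫ t in δ..π, fej D t) + ∫ t in π..(2*π - δ), fej D t :=
    (intervalIntegral.integral_add_adjacent_intervals (hI _ _) (hI _ _)).symm
  have hrefl : ∫ t in π..(2*π - δ), fej D t = ∫ t in δ..π, fej D t := by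
    have h2 : ∫ t in δ..π, fej D (2*π - t) = ∫ t in (2*π - π)..(2*π - δ), fej D t :=
      intervalIntegral.integral_comp_sub_left (fej D) (2*π)
    rw [intervalIntegral.integral_congr (g := fej D) (fun t _ => fej_reflect D t)] at h2
    rw [show 2*π - π = π by ring] at h2
    exact h2.symm
  rw [hsplit, hrefl]
  have := tail_half D δ h0 hδ
  calc (∫ t in δ..π, fej D t) + ∫ t in δ..π, fej D t ≤ π^2/δ + π^2/δ := by linarith
    _ = 2 * π ^ 2 / δ := by ring

lemma conc_bound (D : ℕ) (δ : ℝ) (h0 : 0 < δ) (hδ : δ ≤ π) :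
    2*π*(D:ℝ) - 2*π^2/δ ≤ ∫ t in (-δ)..δ, fej D t := by
  have hπ0 := Real.pi_pos
  have hI : ∀ a b : ℝ, IntervalIntegrable (fej D) volume a b :=
    fun a b => (continuous_fej D).intervalIntegrable a b
  have hneg : ∫ t in (-δ)..(0:ℝ), fej D t = ∫ t in (2*π - δ)..(2*π), fej D t := by
    have hcong : ∀ t ∈ Set.uIcc (-δ) (0:ℝ), fej D t = fej D (t + 2*π) := by
      intro t _
      have : t + 2*π = t + 2*π*(1:ℤ) := by push_cast; ring
      rw [this, fej_per]
    rw [intervalIntegral.integral_congr hcong,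
      intervalIntegral.integral_comp_add_right (fej D) (2*π)]
    congr 1 <;> ring
  have hsplitfull : (∫ t in (0:ℝ)..δ, fej D t) + (∫ t in δ..(2*π - δ), fej D t)
      + (∫ t in (2*π - δ)..(2*π), fej D t) = ∫ t in (0:ℝ)..(2*π), fej D t := by
    rw [intervalIntegral.integral_add_adjacent_intervals (hI _ _) (hI _ _)]
    exact intervalIntegral.integral_add_adjacent_intervals (hI _ _) (hI _ _)
  have hsym : ∫ t in (-δ)..δ, fej D t = (∫ t in (-δ)..(0:ℝ), fej D t) + ∫ t in (0:ℝ)..δ, fej D t :=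
    (intervalIntegral.integral_add_adjacent_intervals (hI _ _) (hI _ _)).symm
  have htail := tail_bound D δ h0 hδ
  rw [integral_fej] at hsplitfull
  rw [hsym, hneg]
  linarith


lemma isATP_zero (dd : ℕ) : IsAnalyticTrigPoly dd 0 := by
  refine ⟨fun _ => 0, ?_⟩
  funext t
  simp

lemma isATP_gf (D dd : ℕ) (hD : 1 ≤ D) (hdeg : 2 * D - 1 ≤ dd) :
    IsAnalyticTrigPoly dd (gf D) := by
  classical
  refine ⟨fun l => (((Finset.range D ×ˢ Finset.range D).filter
      (fun x => 1 + x.1 + x.2 = l)).card : ℂ), ?_⟩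
  funext t
  set e := Complex.exp (Complex.I * (t : ℂ)) with he
  have hexpand : gf D t = ∑ x ∈ Finset.range D ×ˢ Finset.range D, e ^ (1 + x.1 + x.2) := by
    rw [gf, sq]
    show e * ((∑ r ∈ Finset.range D, e ^ r) * (∑ r ∈ Finset.range D, e ^ r)) = _
    rw [Finset.sum_mul_sum, Finset.mul_sum, Finset.sum_product]
    refine Finset.sum_congr rfl (fun r _ => ?_)
    rw [Finset.mul_sum]
    refine Finset.sum_congr rfl (fun s _ => ?_)
    rw [pow_add, pow_add, pow_one]
    ring
  have hmaps : ∀ x ∈ Finset.range D ×ˢ Finset.range D,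
      1 + x.1 + x.2 ∈ Finset.range (dd + 1) := by
    intro x hx
    rw [Finset.mem_product, Finset.mem_range, Finset.mem_range] at hx
    rw [Finset.mem_range]
    omega
  have hfib := Finset.sum_fiberwise_of_maps_to hmaps (fun x => e ^ (1 + x.1 + x.2))
  rw [hexpand, ← hfib]
  refine Finset.sum_congr rfl (fun l _ => ?_)
  have hinner : ∑ x ∈ (Finset.range D ×ˢ Finset.range D).filter
      (fun x => 1 + x.1 + x.2 = l), e ^ (1 + x.1 + x.2)
      = ∑ _x ∈ (Finset.range D ×ˢ Finset.range D).filter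
      (fun x => 1 + x.1 + x.2 = l), e ^ l := by
    refine Finset.sum_congr rfl (fun x hx => ?_)
    rw [(Finset.mem_filter.mp hx).2]
  rw [hinner, Finset.sum_const, nsmul_eq_mul]
  congr 1
  rw [← Complex.exp_nat_mul]
  congr 1
  ring

lemma circle_integral_eq (f : ℝ → ℝ) :
    ∫ t, f t ∂circleMeasure = (2*π)⁻¹ * ∫ t in (0:ℝ)..(2*π), f t := by
  have h2π : (0:ℝ) < 2*π := Real.two_pi_pos
  rw [circleMeasure, integral_smul_measure, intervalIntegral.integral_of_le h2π.le]
  rw [ENNReal.toReal_inv, ENNReal.toReal_ofReal h2π.le, smul_eq_mul]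

lemma ofReal_two_pi_inv_ne_top : (ENNReal.ofReal (2 * π))⁻¹ ≠ ⊤ :=
  ENNReal.inv_ne_top.mpr (by
    simp only [ne_eq, ENNReal.ofReal_eq_zero, not_le]
    exact Real.two_pi_pos)

lemma integrable_circle {f : ℝ → ℝ} (hf : Continuous f) : Integrable f circleMeasure := by
  rw [circleMeasure]
  exact Integrable.smul_measure
    ((hf.integrableOn_Icc).mono_set Set.Ioc_subset_Icc_self) ofReal_two_pi_inv_ne_top

lemma integrable_indicator_circle {f : ℝ → ℝ} (hf : Continuous f) (A : Set ℝ)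
    (hA : MeasurableSet A) : Integrable (A.indicator f) circleMeasure := by
  rw [circleMeasure]
  exact Integrable.smul_measure
    (((hf.integrableOn_Icc).mono_set Set.Ioc_subset_Icc_self).indicator hA)
    ofReal_two_pi_inv_ne_top

lemma circle_integral_indicator (A : Set ℝ) (hA : MeasurableSet A)
    (hsub : A ⊆ Set.Ioc 0 (2*π)) (f : ℝ → ℝ) :
    ∫ t, A.indicator f t ∂circleMeasure = (2*π)⁻¹ * ∫ t in A, f t := by
  have h2π : (0:ℝ) < 2*π := Real.two_pi_pos
  rw [circleMeasure, integral_smul_measure, integral_indicator hA,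
    Measure.restrict_restrict hA, Set.inter_eq_left.mpr hsub,
    ENNReal.toReal_inv, ENNReal.toReal_ofReal h2π.le, smul_eq_mul]

lemma card_nondvd (q N' : ℕ) (hq : 2 ≤ q) (hN' : 1 ≤ N') :
    (((Finset.Ico 1 (q * N')).filter (fun s => ¬ q ∣ s)).card) = q * N' - N' := by
  classical
  have hqpos : 0 < q := by omega
  have hdvd : ((Finset.Ico 1 (q * N')).filter (fun s => q ∣ s)).card = N' - 1 := by
    have hset : (Finset.Ico 1 (q * N')).filter (fun s => q ∣ s)
        = (Finset.range (q * N' - 1).succ).filter (fun k => k ≠ 0 ∧ q ∣ k) := by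
      ext s
      simp only [Finset.mem_filter, Finset.mem_Ico, Finset.mem_range, Nat.lt_succ_iff]
      constructor
      · rintro ⟨⟨h1, h2⟩, h3⟩
        exact ⟨by omega, by omega, h3⟩
      · rintro ⟨h1, h2, h3⟩
        have hq1 : 1 ≤ s := by omega
        refine ⟨⟨hq1, ?_⟩, h3⟩
        -- s ≤ qN' - 1 < qN'
        have hqn : 1 ≤ q * N' := Nat.one_le_iff_ne_zero.mpr (by positivity)
        omega
    rw [hset, Nat.card_multiples']
    obtain ⟨m, rfl⟩ : ∃ m, N' = m + 1 := ⟨N' - 1, by omega⟩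
    have h1 : q * (m + 1) - 1 = (q - 1) + q * m := by
      have : q * (m + 1) = q * m + q := by ring
      omega
    rw [h1, Nat.add_mul_div_left _ _ hqpos, Nat.div_eq_of_lt (by omega)]
    omega
  have htot := Finset.card_filter_add_card_filter_not
    (s := Finset.Ico 1 (q * N')) (p := fun s => q ∣ s)
  rw [Nat.card_Ico] at htot
  omega
lemma estar_gf (D Nn : ℕ) (hD : 1 ≤ D) (hN : 0 < Nn) (hdvd : Nn ∣ D) (t : ℝ) :
    ‖Estar Nn (gf D) t‖ = (Nn : ℝ)⁻¹ * ∑ r ∈ Finset.range Nn, fej D (t + 2 * π * r / Nn) := by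
  obtain ⟨q, hq⟩ := hdvd
  have hN0 : (Nn : ℂ) ≠ 0 := Nat.cast_ne_zero.mpr hN.ne'
  have key : ∀ r : ℕ, gf D (t + 2 * π * r / Nn)
      = Complex.exp (Complex.I * t) ^ D * (fej D (t + 2 * π * r / Nn) : ℂ) := by
    intro r
    have harg : (D : ℂ) * (Complex.I * ((t + 2 * π * r / Nn : ℝ) : ℂ))
        = (D : ℂ) * (Complex.I * (t : ℂ)) + ((r * q : ℤ) : ℂ) * (2 * π * Complex.I) := by
      subst hq
      push_cast
      field_simp
    have hpow : Complex.exp (Complex.I * ((t + 2 * π * r / Nn : ℝ) : ℂ)) ^ D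
        = Complex.exp (Complex.I * (t : ℂ)) ^ D := by
      rw [← Complex.exp_nat_mul, ← Complex.exp_nat_mul, harg, Complex.exp_add,
        Complex.exp_int_mul_two_pi_mul_I, mul_one]
    rw [gf_eq D hD, hpow]
  have heq : Estar Nn (gf D) t = Complex.exp (Complex.I * t) ^ D *
      ((((Nn : ℝ)⁻¹ * ∑ r ∈ Finset.range Nn, fej D (t + 2 * π * r / Nn) : ℝ)) : ℂ) := by
    unfold Estar
    rw [Finset.sum_congr rfl (fun r _ => key r), ← Finset.mul_sum]
    push_cast
    ring
  rw [heq, norm_mul, norm_pow, norm_expIt, one_pow, one_mul, Complex.norm_real]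
  rw [Real.norm_eq_abs, abs_of_nonneg]
  have : 0 ≤ ∑ r ∈ Finset.range Nn, fej D (t + 2 * π * r / Nn) :=
    Finset.sum_nonneg (fun r _ => fej_nonneg D _)
  positivity


end SteinAux

set_option maxHeartbeats 2000000 in
/-- Theorem `stein`, implication (ii) ⟹ (i). -/
theorem stmt3 (d N : ℕ → ℕ) (hd : ∀ k, 0 < d k) (hN : ∀ k, 0 < N k)
    (hlac : IsLacunary d) (hdvd : ∀ k, N k ∣ N (k + 1)) (hmono : ∀ k, N k < N (k + 1))
    (c : ℝ) (hc : 0 < c)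
    (hineq : ∀ (n : ℕ) (f : Fin n → ℝ → ℂ),
      (∀ k : Fin n, IsAnalyticTrigPoly (d (k : ℕ)) (f k)) →
      c * ∫ t, Real.sqrt (∑ k : Fin n, ‖Estar (N (k : ℕ)) (f k) t‖ ^ 2) ∂circleMeasure
        ≤ ∫ t, Real.sqrt (∑ k : Fin n, ‖f k t‖ ^ 2) ∂circleMeasure) :
    ∃ (a : ℕ) (C : ℝ), 0 < C ∧ ∀ k, (d k : ℝ) ≤ C * N (k + a) := by
  classical
  by_contra hcon
  push_neg at hcon
  obtain ⟨q, hq1, hqlac⟩ := hlac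
  have hπ0 := Real.pi_pos
  have hdmono : Monotone d := monotone_nat_of_le_succ (fun i => by
    have h1 := hqlac i
    have h2 : (d i : ℝ) ≤ q * d i := by nlinarith [Nat.cast_nonneg (α := ℝ) (d i)]
    exact_mod_cast h2.trans h1)
  have hNmono : Monotone N := monotone_nat_of_le_succ (fun i => (hmono i).le)
  have hNchain : ∀ i j, i ≤ j → N i ∣ N j := by
    intro i j hij
    induction hij with
    | refl => exact dvd_rfl
    | step _ ih => exact ih.trans (hdvd _)
  set a : ℕ := ⌈(64:ℝ) / c^2⌉₊ + 1 with ha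
  have ha1 : 1 ≤ a := Nat.le_add_left 1 _
  obtain ⟨k, hk⟩ := hcon a 4 (by norm_num)
  set M := k + a with hM
  set Dg := 2 * N M with hDg
  have hNM : 0 < N M := hN M
  have hNMr : (0:ℝ) < N M := by exact_mod_cast hNM
  have hDg1 : 1 ≤ Dg := by omega
  have hdk : 4 * N M ≤ d k := by
    have h1 : (4 * N M : ℝ) < d k := by exact_mod_cast hk
    exact_mod_cast h1.le
  set δ := π / N M with hδdef
  have hδ0 : 0 < δ := by positivity
  have hδπ : δ ≤ π := by
    rw [hδdef, div_le_iff₀ hNMr]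
    have h1 : (1:ℝ) ≤ N M := by exact_mod_cast hNM
    nlinarith
  set n := M + 1 with hn
  set f : Fin n → ℝ → ℂ := fun j => if k ≤ (j : ℕ) then gf Dg else 0 with hf
  have hfval : ∀ j : Fin n, k ≤ (j : ℕ) → f j = gf Dg := by
    intro j hj
    show (if k ≤ (j : ℕ) then gf Dg else 0) = gf Dg
    rw [if_pos hj]
  have hfval0 : ∀ j : Fin n, ¬ k ≤ (j : ℕ) → f j = 0 := by
    intro j hj
    show (if k ≤ (j : ℕ) then gf Dg else 0) = 0
    rw [if_neg hj]
  have hpoly : ∀ j : Fin n, IsAnalyticTrigPoly (d (j : ℕ)) (f j) := by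
    intro j
    by_cases hj : k ≤ (j : ℕ)
    · rw [hfval j hj]
      refine isATP_gf Dg (d (j:ℕ)) hDg1 ?_
      have h1 : 2 * Dg - 1 ≤ d k := by omega
      exact h1.trans (hdmono hj)
    · rw [hfval0 j hj]
      exact isATP_zero _
  have key := hineq n f hpoly
  -- RHS computation
  have hRHS : (∫ t, Real.sqrt (∑ j : Fin n, ‖f j t‖ ^ 2) ∂circleMeasure)
      = Real.sqrt ((a:ℝ)+1) * Dg := by
    have hpt : (fun t => Real.sqrt (∑ j : Fin n, ‖f j t‖ ^ 2))
        = fun t => Real.sqrt ((a:ℝ)+1) * fej Dg t := by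
      funext t
      have h1 : ∑ j : Fin n, ‖f j t‖ ^ 2 = ((a:ℝ)+1) * fej Dg t ^ 2 := by
        have h2 : ∀ j : Fin n, ‖f j t‖ ^ 2
            = (fun jn => if k ≤ jn then fej Dg t ^ 2 else 0) (j : ℕ) := by
          intro j
          by_cases hj : k ≤ (j : ℕ)
          · rw [hfval j hj]
            simp only [hj, if_true]
            rw [norm_gf]
          · rw [hfval0 j hj]
            simp only [hj, if_false]
            simp
        have h3 : ∑ j : Fin n, ‖f j t‖ ^ 2
            = ∑ j ∈ Finset.range n, (if k ≤ j then fej Dg t ^ 2 else 0) := by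
          rw [← Fin.sum_univ_eq_sum_range (fun jn => if k ≤ jn then fej Dg t ^ 2 else 0) n]
          exact Finset.sum_congr rfl (fun j _ => h2 j)
        rw [h3, ← Finset.sum_filter]
        have hfil : (Finset.range n).filter (fun j => k ≤ j) = Finset.Ico k n := by
          ext j
          simp only [Finset.mem_filter, Finset.mem_range, Finset.mem_Ico]
          omega
        rw [hfil, Finset.sum_const, Nat.card_Ico, nsmul_eq_mul]
        have h4 : (n - k : ℕ) = a + 1 := by omega
        rw [h4]
        push_cast
        ring
      rw [h1, Real.sqrt_mul (by positivity), Real.sqrt_sq (fej_nonneg _ _)]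
    rw [hpt, MeasureTheory.integral_const_mul, circle_integral_eq, integral_fej]
    have h5 : (2*π)⁻¹ * (2*π*(Dg:ℝ)) = Dg := by field_simp
    rw [h5]
  -- grid points and selection
  set P : Finset ((_ : ℕ) × ℕ) := (Finset.Icc (k+1) M).sigma
    (fun j => (Finset.Ico 1 (N j)).filter (fun s => ¬ (N j / N (j-1)) ∣ s)) with hP
  set pt : (Σ _ : ℕ, ℕ) → ℝ := fun x => 2*π*x.2/(N x.1) with hptdef
  have hmem : ∀ x ∈ P, k+1 ≤ x.1 ∧ x.1 ≤ M ∧ 1 ≤ x.2 ∧ x.2 < N x.1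
      ∧ ¬ (N x.1 / N (x.1 - 1)) ∣ x.2 := by
    intro x hx
    rw [hP, Finset.mem_sigma, Finset.mem_filter, Finset.mem_Ico, Finset.mem_Icc] at hx
    exact ⟨hx.1.1, hx.1.2, hx.2.1.1, hx.2.1.2, hx.2.2⟩
  have hstep : ∀ j, k+1 ≤ j → j ≤ M →
      N j = N (j-1) * (N j / N (j-1)) ∧ 2 ≤ N j / N (j-1) := by
    intro j h1 h2
    obtain ⟨m, rfl⟩ : ∃ m, j = m + 1 := ⟨j - 1, by omega⟩
    have hd1 := hdvd m
    have hm1 := hmono m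
    have heq : N (m+1) = N m * (N (m+1) / N m) := (Nat.mul_div_cancel' hd1).symm
    have hq2 : 2 ≤ N (m+1) / N m := by
      by_contra hlt
      push_neg at hlt
      interval_cases hqq : (N (m+1) / N m) <;> omega
    simpa using ⟨heq, hq2⟩
  have hu : ∀ x ∈ P, (pt x) = 2*π*((x.2 * (N M / N x.1) : ℕ):ℝ)/(N M) := by
    intro x hx
    obtain ⟨h1, h2, h3, h4, h5⟩ := hmem x hx
    have hdvdM : N x.1 ∣ N M := hNchain x.1 M h2
    obtain ⟨A, hA⟩ := hdvdM
    have hx1pos : (0:ℝ) < N x.1 := by exact_mod_cast hN x.1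
    have hApos : 0 < A := by
      rcases Nat.eq_zero_or_pos A with h | h
      · rw [h, mul_zero] at hA; omega
      · exact h
    have hdivA : N M / N x.1 = A := by rw [hA]; exact Nat.mul_div_cancel_left A (hN x.1)
    rw [hptdef, hdivA]
    push_cast [hA]
    field_simp
  have huinj : ∀ x ∈ P, ∀ y ∈ P, x ≠ y →
      (x.2 * (N M / N x.1) : ℕ) ≠ (y.2 * (N M / N y.1) : ℕ) := by
    have hcore : ∀ x ∈ P, ∀ y ∈ P, x.1 ≤ y.1 →
        (x.2 * (N M / N x.1) : ℕ) = (y.2 * (N M / N y.1) : ℕ) → x = y := by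
      intro x hx y hy hle heq
      obtain ⟨hx1, hx2, hx3, hx4, hx5⟩ := hmem x hx
      obtain ⟨hy1, hy2, hy3, hy4, hy5⟩ := hmem y hy
      obtain ⟨A, hA⟩ := hNchain y.1 M hy2
      obtain ⟨B, hB⟩ := hNchain x.1 y.1 hle
      have hApos : 0 < A := by
        rcases Nat.eq_zero_or_pos A with h | h
        · rw [h, mul_zero] at hA; omega
        · exact h
      have hBpos : 0 < B := by
        rcases Nat.eq_zero_or_pos B with h | h
        · rw [h, mul_zero] at hB; have := hN y.1; omega
        · exact h
      have hdivA : N M / N y.1 = A := by rw [hA]; exact Nat.mul_div_cancel_left A (hN y.1)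
      have hdivAB : N M / N x.1 = B * A := by
        have h6 : N M = N x.1 * (B * A) := by rw [hA, hB]; ring
        rw [h6]; exact Nat.mul_div_cancel_left _ (hN x.1)
      rw [hdivA, hdivAB] at heq
      have heq2 : y.2 = x.2 * B := by
        have h1 : (x.2 * B) * A = y.2 * A := by rw [← heq]; ring
        exact (Nat.eq_of_mul_eq_mul_right hApos h1).symm
      rcases eq_or_lt_of_le hle with hjeq | hjlt
      · have hB1 : B = 1 := by
          rw [← hjeq] at hB
          have h7 : N x.1 * 1 = N x.1 * B := by rw [mul_one]; exact hB
          exact (Nat.eq_of_mul_eq_mul_left (hN x.1) h7).symm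
        have h8 : x.2 = y.2 := by rw [heq2, hB1, mul_one]
        exact Sigma.ext hjeq (heq_of_eq h8)
      · exfalso
        obtain ⟨hyeq, hyq2⟩ := hstep y.1 hy1 hy2
        obtain ⟨C, hC⟩ := hNchain x.1 (y.1 - 1) (by omega)
        have h2 : N x.1 * B = N x.1 * (C * (N y.1 / N (y.1 - 1))) := by
          rw [← hB]
          calc N y.1 = N (y.1-1) * (N y.1 / N (y.1-1)) := hyeq
            _ = N x.1 * (C * (N y.1 / N (y.1 - 1))) := by rw [hC]; ring
        have hBCQ : B = C * (N y.1 / N (y.1 - 1)) := Nat.eq_of_mul_eq_mul_left (hN x.1) h2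
        exact hy5 ⟨x.2 * C, by rw [heq2, hBCQ]; ring⟩
    intro x hx y hy hxy heq
    rcases le_total x.1 y.1 with h | h
    · exact hxy (hcore x hx y hy h heq)
    · exact hxy ((hcore y hy x hx h heq.symm).symm)
  have hsep : ∀ x ∈ P, ∀ y ∈ P, x ≠ y → 2*δ ≤ |pt x - pt y| := by
    intro x hx y hy hxy
    have h1 := hu x hx
    have h2 := hu y hy
    have h3 := huinj x hx y hy hxy
    set ux := (x.2 * (N M / N x.1) : ℕ) with hux
    set uy := (y.2 * (N M / N y.1) : ℕ) with huy
    have h4 : (1:ℝ) ≤ |(ux:ℝ) - uy| := by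
      rcases lt_or_gt_of_ne h3 with h | h
      · have h6 : (ux:ℝ) + 1 ≤ uy := by exact_mod_cast h
        rw [abs_sub_comm, abs_of_nonneg (by linarith)]
        linarith
      · have h6 : (uy:ℝ) + 1 ≤ ux := by exact_mod_cast h
        rw [abs_of_nonneg (by linarith)]
        linarith
    rw [h1, h2, hδdef]
    rw [show 2*π*(ux:ℝ)/(N M) - 2*π*(uy:ℝ)/(N M) = (2*π/(N M)) * ((ux:ℝ) - uy) by ring]
    rw [abs_mul, abs_of_pos (by positivity)]
    calc 2 * (π / N M) = (2*π/(N M)) * 1 := by ring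
      _ ≤ (2*π/(N M)) * |(ux:ℝ) - uy| := by
          apply mul_le_mul_of_nonneg_left h4 (by positivity)
  have hloc : ∀ x ∈ P, Set.Ioo (pt x - δ) (pt x + δ) ⊆ Set.Ioc 0 (2*π) := by
    intro x hx
    obtain ⟨h1, h2, h3, h4, h5⟩ := hmem x hx
    have hNx : (0:ℝ) < N x.1 := by exact_mod_cast hN x.1
    have hNle : (N x.1 : ℝ) ≤ N M := by exact_mod_cast hNmono h2
    have hδx : 2*δ ≤ 2*π / N x.1 := by
      rw [hδdef]
      have h6 : π / (N M : ℝ) ≤ π / (N x.1 : ℝ) := div_le_div_of_nonneg_left hπ0.le hNx hNle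
      have h9 : 2*π/(N x.1 : ℝ) = 2*(π/(N x.1 : ℝ)) := by ring
      rw [h9]
      linarith
    have hlow : 2*π/(N x.1) ≤ pt x := by
      rw [hptdef]
      have h7 : (1:ℝ) ≤ x.2 := by exact_mod_cast h3
      have h7' : 2*π ≤ 2*π*(x.2:ℝ) := by nlinarith
      exact (div_le_div_iff_of_pos_right hNx).mpr h7'
    have hhigh : pt x ≤ 2*π - 2*π/(N x.1) := by
      rw [hptdef]
      have h8 : (x.2:ℝ) + 1 ≤ N x.1 := by exact_mod_cast h4
      rw [div_le_iff₀ hNx]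
      have h9 : (2*π - 2*π/(N x.1)) * N x.1 = 2*π*(N x.1) - 2*π := by field_simp
      rw [h9]
      have h10 : 2*π*(x.2:ℝ) ≤ 2*π*((N x.1:ℝ) - 1) := by nlinarith
      linarith
    intro u hu'
    obtain ⟨hu1, hu2⟩ := hu'
    constructor
    · linarith
    · linarith
  -- continuity facts
  have hfcont : ∀ j : Fin n, Continuous (f j) := by
    intro j
    by_cases hj : k ≤ (j : ℕ)
    · rw [hfval j hj]; exact continuous_gf Dg
    · rw [hfval0 j hj]; exact continuous_const
  have hEcont : ∀ j : Fin n, Continuous (Estar (N (j:ℕ)) (f j)) := by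
    intro j
    show Continuous fun t => (N (j:ℕ) : ℂ)⁻¹ * ∑ r ∈ Finset.range (N (j:ℕ)),
      f j (t + 2 * π * r / (N (j:ℕ)))
    exact continuous_const.mul (continuous_finset_sum _ (fun r _ =>
      (hfcont j).comp (continuous_id.add continuous_const)))
  have hsqrtEcont : Continuous (fun t => Real.sqrt (∑ j : Fin n, ‖Estar (N (j:ℕ)) (f j) t‖ ^ 2)) :=
    Real.continuous_sqrt.comp (continuous_finset_sum _ (fun j _ => ((hEcont j).norm).pow 2))
  -- the comparison function G
  set G : ℝ → ℝ := fun t => ∑ x ∈ P, Set.indicator (Set.Ioo (pt x - δ) (pt x + δ))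
    (fun u => (N x.1 : ℝ)⁻¹ * fej Dg (u - pt x)) t with hGdef
  have hgcont : ∀ x : (Σ _ : ℕ, ℕ), Continuous (fun u => (N x.1 : ℝ)⁻¹ * fej Dg (u - pt x)) :=
    fun x => continuous_const.mul ((continuous_fej Dg).comp (continuous_id.sub continuous_const))
  -- pointwise bound
  have hGle : ∀ t, G t ≤ Real.sqrt (∑ j : Fin n, ‖Estar (N (j:ℕ)) (f j) t‖ ^ 2) := by
    intro t
    by_cases hex : ∃ x ∈ P, t ∈ Set.Ioo (pt x - δ) (pt x + δ)
    · obtain ⟨x₀, hx₀, ht₀⟩ := hex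
      obtain ⟨h1, h2, h3, h4, h5⟩ := hmem x₀ hx₀
      have hothers : ∀ b ∈ P, b ≠ x₀ → Set.indicator (Set.Ioo (pt b - δ) (pt b + δ))
          (fun u => (N b.1 : ℝ)⁻¹ * fej Dg (u - pt b)) t = 0 := by
        intro b hb hbx
        apply Set.indicator_of_notMem
        intro htb
        have hs := hsep b hb x₀ hx₀ hbx
        obtain ⟨hb1, hb2⟩ := htb
        obtain ⟨hc1, hc2⟩ := ht₀
        have habs : |pt b - pt x₀| < 2*δ := by
          rw [abs_lt]
          constructor <;> linarith
        linarith
      have hGt : G t = (N x₀.1 : ℝ)⁻¹ * fej Dg (t - pt x₀) := by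
        have hG' : G t = ∑ x ∈ P, Set.indicator (Set.Ioo (pt x - δ) (pt x + δ))
            (fun u => (N x.1 : ℝ)⁻¹ * fej Dg (u - pt x)) t := rfl
        rw [hG', Finset.sum_eq_single_of_mem x₀ hx₀ hothers, Set.indicator_of_mem ht₀]
      obtain ⟨j0, hj0val⟩ : ∃ j0 : Fin n, (j0 : ℕ) = x₀.1 := ⟨⟨x₀.1, by omega⟩, rfl⟩
      have hj0k : k ≤ (j0 : ℕ) := by rw [hj0val]; omega
      have hEnorm : ‖Estar (N (j0 : ℕ)) (f j0) t‖
          = (N x₀.1 : ℝ)⁻¹ * ∑ r ∈ Finset.range (N x₀.1), fej Dg (t + 2*π*r/(N x₀.1)) := by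
        rw [hfval j0 hj0k, hj0val]
        exact estar_gf Dg (N x₀.1) hDg1 (hN x₀.1)
          (Dvd.dvd.mul_left (hNchain x₀.1 M h2) 2) t
      have hval : (N x₀.1 : ℝ)⁻¹ * fej Dg (t - pt x₀) ≤ ‖Estar (N (j0 : ℕ)) (f j0) t‖ := by
        rw [hEnorm]
        have hr : N x₀.1 - x₀.2 ∈ Finset.range (N x₀.1) := Finset.mem_range.mpr (by omega)
        have hterm : fej Dg (t - pt x₀) = fej Dg (t + 2*π*((N x₀.1 - x₀.2 : ℕ):ℝ)/(N x₀.1)) := by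
          have hNx : (0:ℝ) < N x₀.1 := by exact_mod_cast hN x₀.1
          have hcast : ((N x₀.1 - x₀.2 : ℕ):ℝ) = (N x₀.1 : ℝ) - x₀.2 := by
            push_cast [h4.le]
            ring
          rw [hcast]
          have harg : t + 2*π*((N x₀.1 : ℝ) - x₀.2)/(N x₀.1) = (t - pt x₀) + 2*π*((1:ℤ):ℝ) := by
            rw [hptdef]
            push_cast
            field_simp
            ring
          rw [harg, fej_per]
        rw [hterm]
        apply mul_le_mul_of_nonneg_left ?_ (inv_nonneg.mpr (by positivity))
        have h20 : ∀ r ∈ Finset.range (N x₀.1),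
            0 ≤ (fun r : ℕ => fej Dg (t + 2*π*(r:ℝ)/(N x₀.1))) r := fun r _ => fej_nonneg Dg _
        exact Finset.single_le_sum h20 hr
      have hs1 : ‖Estar (N (j0 : ℕ)) (f j0) t‖ ^ 2
          ≤ ∑ j : Fin n, ‖Estar (N (j:ℕ)) (f j) t‖ ^ 2 := by
        have h21 : ∀ j ∈ (Finset.univ : Finset (Fin n)),
            0 ≤ (fun j : Fin n => ‖Estar (N (j:ℕ)) (f j) t‖ ^ 2) j := fun j _ => sq_nonneg _
        exact Finset.single_le_sum h21 (Finset.mem_univ j0)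
      have hsq : ‖Estar (N (j0 : ℕ)) (f j0) t‖
          ≤ Real.sqrt (∑ j : Fin n, ‖Estar (N (j:ℕ)) (f j) t‖ ^ 2) := by
        have hs2 := Real.sqrt_le_sqrt hs1
        rwa [Real.sqrt_sq (norm_nonneg _)] at hs2
      rw [hGt]
      exact hval.trans hsq
    · have hG0 : G t = 0 := by
        rw [hGdef]
        exact Finset.sum_eq_zero (fun x hx =>
          Set.indicator_of_notMem (fun ht => hex ⟨x, hx, ht⟩) _)
      rw [hG0]
      exact Real.sqrt_nonneg _
  -- integral of G
  have hGint : ∫ t, G t ∂circleMeasure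
      = ∑ x ∈ P, (N x.1 : ℝ)⁻¹ * ((2*π)⁻¹ * ∫ u in (-δ)..δ, fej Dg u) := by
    rw [hGdef]
    rw [MeasureTheory.integral_finset_sum P (fun x _ =>
      integrable_indicator_circle (hgcont x) _ measurableSet_Ioo)]
    refine Finset.sum_congr rfl (fun x hx => ?_)
    rw [circle_integral_indicator _ measurableSet_Ioo (hloc x hx) _]
    have h1 : ∫ u in Set.Ioo (pt x - δ) (pt x + δ), (N x.1 : ℝ)⁻¹ * fej Dg (u - pt x)
        = (N x.1 : ℝ)⁻¹ * ∫ u in (-δ)..δ, fej Dg u := by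
      rw [← MeasureTheory.integral_Ioc_eq_integral_Ioo,
        ← intervalIntegral.integral_of_le (by linarith)]
      rw [intervalIntegral.integral_const_mul]
      congr 1
      have h2 := intervalIntegral.integral_comp_sub_right
        (a := pt x - δ) (b := pt x + δ) (fun u => fej Dg u) (pt x)
      rw [show pt x - δ - pt x = -δ by ring, show pt x + δ - pt x = δ by ring] at h2
      exact h2
    rw [h1]
    ring
  -- lower bound for the concentration integral
  have hIδ : (N M : ℝ) ≤ (2*π)⁻¹ * ∫ u in (-δ)..δ, fej Dg u := by
    have h1 := conc_bound Dg δ hδ0 hδπ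
    have harith : 2*π*(Dg:ℝ) - 2*π^2/δ = 2*π*(N M : ℝ) := by
      rw [hδdef, hDg]
      push_cast
      field_simp
      ring
    rw [harith] at h1
    calc (N M : ℝ) = (2*π)⁻¹ * (2*π*(N M : ℝ)) := by field_simp
      _ ≤ (2*π)⁻¹ * ∫ u in (-δ)..δ, fej Dg u := by
          apply mul_le_mul_of_nonneg_left h1 (by positivity)
  -- counting lower bound
  have hsum : (a:ℝ)/2 ≤ ∑ x ∈ P, (N x.1 : ℝ)⁻¹ := by
    rw [hP, Finset.sum_sigma]
    have hterm : ∀ j ∈ Finset.Icc (k+1) M, (1:ℝ)/2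
        ≤ ∑ s ∈ (Finset.Ico 1 (N j)).filter (fun s => ¬ (N j / N (j-1)) ∣ s), (N j : ℝ)⁻¹ := by
      intro j hj
      rw [Finset.mem_Icc] at hj
      obtain ⟨heq, hq2⟩ := hstep j hj.1 hj.2
      have hN' : 1 ≤ N (j-1) := hN (j-1)
      have hcard : ((Finset.Ico 1 (N j)).filter (fun s => ¬ (N j / N (j-1)) ∣ s)).card
          = N j - N (j-1) := by
        have h1 : (Finset.Ico 1 (N j)) = Finset.Ico 1 ((N j / N (j-1)) * N (j-1)) := by
          congr 1
          rw [mul_comm]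
          exact heq
        rw [h1, card_nondvd _ _ hq2 hN', mul_comm, ← heq]
      rw [Finset.sum_const, hcard, nsmul_eq_mul]
      have h2N : 2 * N (j-1) ≤ N j := by
        calc 2 * N (j-1) ≤ (N j / N (j-1)) * N (j-1) := by
              apply Nat.mul_le_mul_right _ hq2
          _ = N j := by rw [mul_comm, ← heq]
      have hNj1 : N (j-1) ≤ N j := by omega
      have hcast : ((N j - N (j-1) : ℕ):ℝ) = (N j : ℝ) - N (j-1) := by
        push_cast [hNj1]
        ring
      rw [hcast]
      have hNjr : (0:ℝ) < N j := by exact_mod_cast hN j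
      have h2Nr : 2 * (N (j-1) : ℝ) ≤ N j := by exact_mod_cast h2N
      have h11 : ((N j : ℝ)/2) * (N j : ℝ)⁻¹ ≤ ((N j : ℝ) - N (j-1)) * (N j : ℝ)⁻¹ :=
        mul_le_mul_of_nonneg_right (by linarith) (by positivity)
      have h3 : ((N j : ℝ)/2) * (N j : ℝ)⁻¹ = 1/2 := by field_simp
      linarith
    calc (a:ℝ)/2 = ∑ _j ∈ Finset.Icc (k+1) M, (1:ℝ)/2 := by
          rw [Finset.sum_const, Nat.card_Icc, nsmul_eq_mul]
          have : (M + 1 - (k+1) : ℕ) = a := by omega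
          rw [this]
          ring
      _ ≤ _ := Finset.sum_le_sum hterm
  -- assemble the lower bound on the Estar side
  have hGint2 : (a:ℝ)/2 * (N M : ℝ) ≤ ∫ t, G t ∂circleMeasure := by
    rw [hGint, ← Finset.sum_mul]
    have hIδ0 : 0 ≤ (2*π)⁻¹ * ∫ u in (-δ)..δ, fej Dg u := le_trans hNMr.le hIδ
    calc (a:ℝ)/2 * (N M : ℝ)
        ≤ (∑ x ∈ P, (N x.1 : ℝ)⁻¹) * ((2*π)⁻¹ * ∫ u in (-δ)..δ, fej Dg u) := by
          apply mul_le_mul hsum hIδ hNMr.le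
          exact le_trans (by positivity) hsum
      _ = _ := rfl
  have hGintegrable : Integrable G circleMeasure := by
    rw [hGdef]
    exact MeasureTheory.integrable_finset_sum P (fun x _ =>
      integrable_indicator_circle (hgcont x) _ measurableSet_Ioo)
  have hLHS : (a:ℝ)/2 * (N M : ℝ)
      ≤ ∫ t, Real.sqrt (∑ j : Fin n, ‖Estar (N (j:ℕ)) (f j) t‖ ^ 2) ∂circleMeasure := by
    refine le_trans hGint2 ?_
    exact MeasureTheory.integral_mono hGintegrable (integrable_circle hsqrtEcont) hGle
  -- final contradiction
  rw [hRHS] at key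
  have hfinal : c * ((a:ℝ)/2 * (N M : ℝ)) ≤ Real.sqrt ((a:ℝ)+1) * Dg :=
    le_trans (mul_le_mul_of_nonneg_left hLHS hc.le) key
  have hDgr : (Dg:ℝ) = 2 * (N M : ℝ) := by rw [hDg]; push_cast; ring
  rw [hDgr] at hfinal
  have h2 : c * ((a:ℝ)/2) ≤ 2 * Real.sqrt ((a:ℝ)+1) := by
    have := mul_le_mul_of_nonneg_right hfinal (by positivity : (0:ℝ) ≤ (N M : ℝ)⁻¹)
    calc c * ((a:ℝ)/2) = c * ((a:ℝ)/2 * (N M:ℝ)) * (N M : ℝ)⁻¹ := by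
          field_simp
      _ ≤ Real.sqrt ((a:ℝ)+1) * (2 * (N M:ℝ)) * (N M : ℝ)⁻¹ := this
      _ = 2 * Real.sqrt ((a:ℝ)+1) := by field_simp
  have hsqv : Real.sqrt ((a:ℝ)+1) ^ 2 = (a:ℝ)+1 := Real.sq_sqrt (by positivity)
  have hca : (64:ℝ) ≤ c^2 * a := by
    have h1 : (64:ℝ)/c^2 ≤ (⌈(64:ℝ)/c^2⌉₊ : ℝ) := Nat.le_ceil _
    have h1' : ((⌈(64:ℝ)/c^2⌉₊ : ℕ) : ℝ) ≤ a := by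
      rw [ha]
      push_cast
      linarith
    have h2' : (64:ℝ)/c^2 ≤ a := le_trans h1 h1'
    calc (64:ℝ) = c^2 * (64/c^2) := by field_simp
      _ ≤ c^2 * a := by
          apply mul_le_mul_of_nonneg_left h2' (sq_nonneg c)
  have ha1r : (1:ℝ) ≤ a := by exact_mod_cast ha1
  have h3 : c^2 * (a:ℝ)^2 / 4 ≤ 4*((a:ℝ)+1) := by
    have h4 : (0:ℝ) ≤ c * ((a:ℝ)/2) := by positivity
    have h5 := mul_self_le_mul_self h4 h2
    have h6 : 2 * Real.sqrt ((a:ℝ)+1) * (2 * Real.sqrt ((a:ℝ)+1)) = 4*((a:ℝ)+1) := by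
      have : Real.sqrt ((a:ℝ)+1) * Real.sqrt ((a:ℝ)+1) = (a:ℝ)+1 := by
        rw [← sq]
        exact hsqv
      nlinarith [this]
    nlinarith [h5, h6]
  have h7 : (64:ℝ) * a ≤ c^2 * (a:ℝ)^2 := by
    have := mul_le_mul_of_nonneg_right hca (by positivity : (0:ℝ) ≤ (a:ℝ))
    nlinarith [this]
  nlinarith [h3, h7, ha1r]
end

section
/- Let (Ω,F,μ) be a probability space and F^*_1 ⊇ F^*_2 ⊇ … ⊇ F^*_{n+1} a decreasing sequence of sub-σ-algebras of F. Let φ_1,…,φ_n be integrable real-valued functions such that φ_k is F^*_k-measurable for each k. Define λ_0 = 0 and λ_k = E[ (φ_k² + λ_{k−1}²)^{1/2} | F^*_{k+1} ] for k = 1,…,n. Then the infimum of E (∑_{k=1}^n f_k²)^{1/2} over all n-tuples of integrable real-valued functions f_1,…,f_n satisfying E[f_k | F^*_k] = φ_k a.e. for each k, equals E λ_n. -/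
set_option maxHeartbeats 2000000

open MeasureTheory Filter

lemma cauchy2 (a b x y : ℝ) (h : a^2 + b^2 ≤ 1) : a*x + b*y ≤ Real.sqrt (x^2 + y^2) := by
  rcases le_or_gt (a*x + b*y) 0 with h0 | h0
  · exact h0.trans (Real.sqrt_nonneg _)
  · rw [show a*x+b*y = Real.sqrt ((a*x+b*y)^2) from (Real.sqrt_sq h0.le).symm]
    apply Real.sqrt_le_sqrt
    nlinarith [sq_nonneg (a*y - b*x), sq_nonneg (a*x+b*y), sq_nonneg x, sq_nonneg y]

lemma sqrt_le_of_rat (X Y Z : ℝ)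
    (h : ∀ a b : ℚ, (a:ℝ)^2 + (b:ℝ)^2 ≤ 1 → (a:ℝ)*X + (b:ℝ)*Y ≤ Z) :
    Real.sqrt (X^2 + Y^2) ≤ Z := by
  have hZ : 0 ≤ Z := by simpa using h 0 0 (by norm_num)
  rcases eq_or_lt_of_le (Real.sqrt_nonneg (X^2+Y^2)) with h0 | h0
  · rw [← h0]; exact hZ
  · set r := Real.sqrt (X^2 + Y^2) with hr
    have hr2 : r^2 = X^2 + Y^2 := Real.sq_sqrt (by positivity)
    have hXr : |X| ≤ r := by
      rw [← Real.sqrt_sq_eq_abs]; apply Real.sqrt_le_sqrt; nlinarith [sq_nonneg Y]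
    have hYr : |Y| ≤ r := by
      rw [← Real.sqrt_sq_eq_abs]; apply Real.sqrt_le_sqrt; nlinarith [sq_nonneg X]
    refine le_of_forall_pos_le_add fun ε hε => ?_
    set δ : ℝ := min (ε / (2 * r)) (1/2) with hδ
    have hδ0 : 0 < δ := lt_min (by positivity) (by norm_num)
    have hδ1 : δ ≤ 1/2 := min_le_right _ _
    have hδε : δ * r ≤ ε / 2 := by
      have h1 : δ ≤ ε / (2*r) := min_le_left _ _
      have h2 : δ * (2*r) ≤ ε := (le_div_iff₀ (by positivity : (0:ℝ) < 2*r)).1 h1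
      linarith
    set u := X / r with hu
    set v := Y / r with hv
    have hX : X = u * r := by rw [hu, div_mul_cancel₀ _ h0.ne']
    have hY : Y = v * r := by rw [hv, div_mul_cancel₀ _ h0.ne']
    have huv : u^2 + v^2 = 1 := by
      rw [hu, hv, div_pow, div_pow, ← add_div, ← hr2, div_self (by positivity)]
    have hu1 : |u| ≤ 1 := by rw [hu, abs_div, abs_of_pos h0]; exact div_le_one_of_le₀ hXr h0.le
    have hv1 : |v| ≤ 1 := by rw [hv, abs_div, abs_of_pos h0]; exact div_le_one_of_le₀ hYr h0.le
    obtain ⟨a, ha1, ha2⟩ := exists_rat_btwn (show (1-δ)*u - δ/4 < (1-δ)*u + δ/4 by linarith)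
    obtain ⟨b, hb1, hb2⟩ := exists_rat_btwn (show (1-δ)*v - δ/4 < (1-δ)*v + δ/4 by linarith)
    have hea : |(a:ℝ) - (1-δ)*u| ≤ δ/4 := abs_le.2 ⟨by linarith, by linarith⟩
    have heb : |(b:ℝ) - (1-δ)*v| ≤ δ/4 := abs_le.2 ⟨by linarith, by linarith⟩
    have hue : |u * ((a:ℝ) - (1-δ)*u)| ≤ δ/4 := by
      rw [abs_mul]
      calc |u| * |(a:ℝ) - (1-δ)*u| ≤ 1 * (δ/4) :=
            mul_le_mul hu1 hea (abs_nonneg _) zero_le_one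
        _ = δ/4 := one_mul _
    have hve : |v * ((b:ℝ) - (1-δ)*v)| ≤ δ/4 := by
      rw [abs_mul]
      calc |v| * |(b:ℝ) - (1-δ)*v| ≤ 1 * (δ/4) :=
            mul_le_mul hv1 heb (abs_nonneg _) zero_le_one
        _ = δ/4 := one_mul _
    have hsqa : ((a:ℝ) - (1-δ)*u)^2 ≤ (δ/4)^2 := sq_le_sq' (by linarith [abs_le.1 hea]) (abs_le.1 hea).2
    have hsqb : ((b:ℝ) - (1-δ)*v)^2 ≤ (δ/4)^2 := sq_le_sq' (by linarith [abs_le.1 heb]) (abs_le.1 heb).2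
    have hab : (a:ℝ)^2 + (b:ℝ)^2 ≤ 1 := by
      have expand : (a:ℝ)^2 + (b:ℝ)^2 = (1-δ)^2*(u^2+v^2)
          + 2*(1-δ)*(u*((a:ℝ) - (1-δ)*u) + v*((b:ℝ) - (1-δ)*v))
          + (((a:ℝ) - (1-δ)*u)^2 + ((b:ℝ) - (1-δ)*v)^2) := by ring
      have hmid : u*((a:ℝ) - (1-δ)*u) + v*((b:ℝ) - (1-δ)*v) ≤ δ/2 := by
        have := abs_le.1 hue; have := abs_le.1 hve; linarith
      have hmid2 : 2*(1-δ)*(u*((a:ℝ) - (1-δ)*u) + v*((b:ℝ) - (1-δ)*v)) ≤ 2*(1-δ)*(δ/2) :=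
        mul_le_mul_of_nonneg_left hmid (by linarith)
      rw [expand, huv]
      have hδδ : δ*δ ≤ δ*(1/2) := mul_le_mul_of_nonneg_left hδ1 hδ0.le
      nlinarith [hmid2, hsqa, hsqb, hδδ, hδ0.le]
    have hZab := h a b hab
    have hlow : (1-δ)*r - (δ/2)*r ≤ (a:ℝ)*X + (b:ℝ)*Y := by
      have e1 : -((δ/4)*r) ≤ ((a:ℝ) - (1-δ)*u) * X := by
        have h3 := neg_abs_le (((a:ℝ) - (1-δ)*u) * X)
        have h2 : |((a:ℝ) - (1-δ)*u) * X| ≤ (δ/4) * r := by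
          rw [abs_mul]; exact mul_le_mul hea hXr (abs_nonneg _) (by linarith)
        linarith
      have e2 : -((δ/4)*r) ≤ ((b:ℝ) - (1-δ)*v) * Y := by
        have h3 := neg_abs_le (((b:ℝ) - (1-δ)*v) * Y)
        have h2 : |((b:ℝ) - (1-δ)*v) * Y| ≤ (δ/4) * r := by
          rw [abs_mul]; exact mul_le_mul heb hYr (abs_nonneg _) (by linarith)
        linarith
      have huXvY : u*X + v*Y = r := by
        rw [hu, hv]; field_simp; linarith [hr2]
      have hsplit : (a:ℝ)*X + (b:ℝ)*Y
          = (1-δ)*(u*X + v*Y) + ((a:ℝ) - (1-δ)*u)*X + ((b:ℝ) - (1-δ)*v)*Y := by ring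
      rw [hsplit, huXvY]; linarith
    linarith

lemma sqrt_sq_add_sq_le (x y : ℝ) : Real.sqrt (x^2 + y^2) ≤ |x| + |y| := by
  rw [show |x| + |y| = Real.sqrt ((|x| + |y|)^2) from
    (Real.sqrt_sq (by positivity)).symm]
  apply Real.sqrt_le_sqrt
  have : x^2 = |x|^2 := (sq_abs x).symm
  have : y^2 = |y|^2 := (sq_abs y).symm
  nlinarith [abs_nonneg x, abs_nonneg y, mul_nonneg (abs_nonneg x) (abs_nonneg y), sq_abs x, sq_abs y]

lemma integrable_sqrt_sq_add_sq {Ω : Type*} [m0 : MeasurableSpace Ω] {μ : Measure Ω}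
    {u v : Ω → ℝ} (hu : Integrable u μ) (hv : Integrable v μ) :
    Integrable (fun ω => Real.sqrt (u ω ^ 2 + v ω ^ 2)) μ := by
  refine (hu.abs.add hv.abs).mono' ?_ ?_
  · exact (Real.continuous_sqrt).comp_aestronglyMeasurable
      ((hu.1.pow 2).add (hv.1.pow 2))
  · filter_upwards with ω
    rw [Real.norm_eq_abs, abs_of_nonneg (Real.sqrt_nonneg _)]
    exact sqrt_sq_add_sq_le _ _

lemma jensen2 {Ω : Type*} {m : MeasurableSpace Ω} [m0 : MeasurableSpace Ω] {μ : Measure Ω} [IsProbabilityMeasure μ]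
    (hm : m ≤ m0) {u v : Ω → ℝ}
    (hu : Integrable u μ) (hv : Integrable v μ) :
    ∀ᵐ ω ∂μ, Real.sqrt ((μ[u|m]) ω ^ 2 + (μ[v|m]) ω ^ 2)
      ≤ (μ[(fun ω => Real.sqrt (u ω ^ 2 + v ω ^ 2))|m]) ω := by
  have hSint : Integrable (fun ω => Real.sqrt (u ω ^ 2 + v ω ^ 2)) μ :=
    integrable_sqrt_sq_add_sq hu hv
  have key : ∀ p : ℚ × ℚ, ∀ᵐ ω ∂μ, (p.1:ℝ)^2 + (p.2:ℝ)^2 ≤ 1 →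
      (p.1:ℝ) * (μ[u|m]) ω + (p.2:ℝ) * (μ[v|m]) ω
        ≤ (μ[(fun ω => Real.sqrt (u ω ^ 2 + v ω ^ 2))|m]) ω := by
    rintro ⟨a, b⟩
    by_cases hab : (a:ℝ)^2 + (b:ℝ)^2 ≤ 1
    swap
    · exact Eventually.of_forall fun ω h => absurd h hab
    have h1 : μ[(a:ℝ) • u + (b:ℝ) • v|m] =ᵐ[μ] (a:ℝ) • μ[u|m] + (b:ℝ) • μ[v|m] :=
      (condExp_add (hu.smul (a:ℝ)) (hv.smul (b:ℝ)) m).trans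
        ((condExp_smul (a:ℝ) u m).add (condExp_smul (b:ℝ) v m))
    have h2 : μ[(a:ℝ) • u + (b:ℝ) • v|m]
        ≤ᵐ[μ] μ[(fun ω => Real.sqrt (u ω ^ 2 + v ω ^ 2))|m] := by
      refine condExp_mono ((hu.smul (a:ℝ)).add (hv.smul (b:ℝ))) hSint ?_
      exact Eventually.of_forall fun ω => cauchy2 a b (u ω) (v ω) hab
    filter_upwards [h1, h2] with ω hω1 hω2 _
    have : (a:ℝ) * (μ[u|m]) ω + (b:ℝ) * (μ[v|m]) ω
        = ((a:ℝ) • μ[u|m] + (b:ℝ) • μ[v|m]) ω := by simp [smul_eq_mul]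
    rw [this, ← hω1]; exact hω2
  have hall := (ae_all_iff).2 key
  filter_upwards [hall] with ω hω
  exact sqrt_le_of_rat _ _ _ fun a b hab => hω (a, b) hab

lemma wkey {Ω : Type*} {m' : MeasurableSpace Ω} [m0 : MeasurableSpace Ω] {μ : Measure Ω}
    [IsProbabilityMeasure μ] (hm' : m' ≤ m0)
    {G lamf ψ : Ω → ℝ} (hG : Measurable G) (hGpos : ∀ ω, 0 ≤ G ω)
    (hGint : Integrable G μ) (hlamm : Measurable[m'] lamf)
    (hψm : Measurable[m'] ψ) (hψpos : ∀ ω, 0 ≤ ψ ω) (hψint : Integrable ψ μ)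
    (hcond : μ[G|m'] =ᵐ[μ] lamf) :
    Integrable (fun ω => if lamf ω ≤ 0 then 0 else ψ ω * G ω / lamf ω) μ := by
  set W : Ω → ℝ := fun ω => if lamf ω ≤ 0 then 0 else ψ ω * G ω / lamf ω with hW
  have hlam0 : Measurable lamf := hlamm.mono hm' le_rfl
  have hψ0 : Measurable ψ := hψm.mono hm' le_rfl
  have hWmeas : Measurable W := by
    apply Measurable.ite (measurableSet_le hlam0 measurable_const) measurable_const
    exact ((hψ0.mul hG).div hlam0)
  have hWpos : ∀ ω, 0 ≤ W ω := by
    intro ω; rw [hW]; dsimp only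
    split_ifs with h
    · exact le_refl 0
    · exact div_nonneg (mul_nonneg (hψpos ω) (hGpos ω)) (le_of_lt (not_le.1 h))
  -- truncated versions
  set d : ℕ → Ω → ℝ := fun M ω => if ((M:ℝ)+1)⁻¹ ≤ lamf ω then min (ψ ω) M / lamf ω else 0
    with hd
  set Wm : ℕ → Ω → ℝ := fun M ω => d M ω * G ω with hWm
  have hdmeas : ∀ M, Measurable[m'] (d M) := by
    intro M
    apply Measurable.ite (measurableSet_le measurable_const hlamm) _ measurable_const
    exact (hψm.min measurable_const).div hlamm
  have hdbd : ∀ M ω, ‖d M ω‖ ≤ (M:ℝ) * ((M:ℝ)+1) := by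
    intro M ω
    rw [Real.norm_eq_abs, hd]; dsimp only
    split_ifs with h
    · have hpos : 0 < lamf ω := lt_of_lt_of_le (by positivity) h
      have h1 : (0:ℝ) ≤ min (ψ ω) M := le_min (hψpos ω) (Nat.cast_nonneg M)
      rw [abs_of_nonneg (div_nonneg h1 hpos.le)]
      rw [div_le_iff₀ hpos]
      calc min (ψ ω) M ≤ (M:ℝ) := min_le_right _ _
        _ = (M:ℝ) * (((M:ℝ)+1) * ((M:ℝ)+1)⁻¹) := by
            rw [mul_inv_cancel₀ (by positivity), mul_one]
        _ ≤ (M:ℝ) * (((M:ℝ)+1) * lamf ω) := by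
            apply mul_le_mul_of_nonneg_left _ (Nat.cast_nonneg M)
            exact mul_le_mul_of_nonneg_left h (by positivity)
        _ = (M:ℝ) * ((M:ℝ)+1) * lamf ω := by ring
    · rw [abs_zero]; positivity
  have hWmint : ∀ M, Integrable (Wm M) μ := by
    intro M
    exact hGint.bdd_mul (((hdmeas M).mono hm' le_rfl).aestronglyMeasurable)
      (Eventually.of_forall (hdbd M))
  -- integral bound
  have hint_bound : ∀ M, ∫ ω, Wm M ω ∂μ ≤ ∫ ω, ψ ω ∂μ := by
    intro M
    have hpull : μ[d M * G|m'] =ᵐ[μ] d M * μ[G|m'] :=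
      condExp_mul_of_stronglyMeasurable_left ((hdmeas M).stronglyMeasurable) (hWmint M) hGint
    have h1 : ∫ ω, Wm M ω ∂μ = ∫ ω, (μ[d M * G|m']) ω ∂μ := (integral_condExp hm').symm
    rw [h1]
    have h2 : ∫ ω, (μ[d M * G|m']) ω ∂μ = ∫ ω, d M ω * lamf ω ∂μ := by
      apply integral_congr_ae
      refine hpull.trans ?_
      filter_upwards [hcond] with ω hω
      simp only [Pi.mul_apply]; rw [hω]
    rw [h2]
    apply integral_mono_ae _ hψint
    · filter_upwards with ω
      rw [hd]; dsimp only
      split_ifs with h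
      · have hpos : 0 < lamf ω := lt_of_lt_of_le (by positivity) h
        rw [div_mul_cancel₀ _ hpos.ne']
        exact min_le_left _ _
      · simp [hψpos ω]
    · -- integrability of d M * lamf
      refine hψint.mono' ?_ ?_
      · exact ((((hψm.min measurable_const).div hlamm).ite
          (measurableSet_le measurable_const hlamm) measurable_const).mul hlamm).mono hm' le_rfl
          |>.aestronglyMeasurable
      · filter_upwards with ω
        rw [Real.norm_eq_abs, hd]; dsimp only
        split_ifs with h
        · have hpos : 0 < lamf ω := lt_of_lt_of_le (by positivity) h
          rw [div_mul_cancel₀ _ hpos.ne', abs_of_nonneg (le_min (hψpos ω) (Nat.cast_nonneg M))]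
          exact min_le_left _ _
        · simp only [zero_mul, abs_zero]; exact hψpos ω
  -- pointwise monotone convergence
  have hdivle : ∀ (a b c : ℝ), a ≤ b → 0 ≤ c → a / c ≤ b / c := fun a b c hab hc => by
    rw [div_eq_mul_inv, div_eq_mul_inv]; exact mul_le_mul_of_nonneg_right hab (inv_nonneg.2 hc)
  have hWmle : ∀ M ω, Wm M ω ≤ W ω := by
    intro M ω
    rw [hWm, hd, hW]; dsimp only
    by_cases h : ((M:ℝ)+1)⁻¹ ≤ lamf ω
    · have hpos : 0 < lamf ω := lt_of_lt_of_le (by positivity) h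
      rw [if_pos h, if_neg (not_le.2 hpos), div_mul_eq_mul_div]
      exact hdivle _ _ _ (mul_le_mul_of_nonneg_right (min_le_left _ _) (hGpos ω)) hpos.le
    · rw [if_neg h, zero_mul]
      split_ifs with h2
      · exact le_refl 0
      · exact div_nonneg (mul_nonneg (hψpos ω) (hGpos ω)) (le_of_lt (not_le.1 h2))
  have hWmpos : ∀ M ω, 0 ≤ Wm M ω := by
    intro M ω
    rw [hWm, hd]; dsimp only
    by_cases h : ((M:ℝ)+1)⁻¹ ≤ lamf ω
    · have hpos : 0 < lamf ω := lt_of_lt_of_le (by positivity) h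
      rw [if_pos h]
      exact mul_nonneg (div_nonneg (le_min (hψpos ω) (Nat.cast_nonneg M)) hpos.le) (hGpos ω)
    · rw [if_neg h, zero_mul]
  have hWmmono : ∀ (M N : ℕ), M ≤ N → ∀ ω, Wm M ω ≤ Wm N ω := by
    intro M N hMN ω
    by_cases h : ((M:ℝ)+1)⁻¹ ≤ lamf ω
    · have hMN' : ((N:ℝ)+1)⁻¹ ≤ ((M:ℝ)+1)⁻¹ := by
        apply inv_anti₀ (by positivity)
        have : (M:ℝ) ≤ (N:ℝ) := Nat.cast_le.2 hMN
        linarith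
      have hN : ((N:ℝ)+1)⁻¹ ≤ lamf ω := hMN'.trans h
      have hpos : 0 < lamf ω := lt_of_lt_of_le (by positivity) h
      rw [hWm, hd]; dsimp only
      rw [if_pos h, if_pos hN]
      refine mul_le_mul_of_nonneg_right (hdivle _ _ _ ?_ hpos.le) (hGpos ω)
      exact le_min (min_le_left _ _) ((min_le_right _ _).trans (Nat.cast_le.2 hMN))
    · have hz : Wm M ω = 0 := by rw [hWm, hd]; dsimp only; rw [if_neg h, zero_mul]
      rw [hz]; exact hWmpos N ω
  have hsup : ∀ ω, (⨆ M, ENNReal.ofReal (Wm M ω)) = ENNReal.ofReal (W ω) := by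
    intro ω
    apply le_antisymm
    · exact iSup_le fun M => ENNReal.ofReal_le_ofReal (hWmle M ω)
    · rcases le_or_gt (lamf ω) 0 with h | h
      · have hW0 : W ω = 0 := by rw [hW]; simp [h]
        rw [hW0]; simp
      · obtain ⟨M, hM⟩ := exists_nat_ge (max (lamf ω)⁻¹ (ψ ω))
        have hinv : (lamf ω)⁻¹ ≤ (M:ℝ)+1 := le_trans (le_trans (le_max_left _ _) hM) (by linarith)
        have h1 : ((M:ℝ)+1)⁻¹ ≤ lamf ω := by
          have := inv_anti₀ (inv_pos.2 h) hinv
          rwa [inv_inv] at this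
        have h2 : min (ψ ω) (M:ℝ) = ψ ω := min_eq_left ((le_max_right _ _).trans hM)
        have hEq : Wm M ω = W ω := by
          rw [hWm, hd, hW]; dsimp only
          rw [if_pos h1, if_neg (not_le.2 h), h2, div_mul_eq_mul_div]
        rw [← hEq]
        exact le_iSup (fun M => ENNReal.ofReal (Wm M ω)) M
  have hWm_meas : ∀ M, Measurable (fun ω => ENNReal.ofReal (Wm M ω)) := by
    intro M
    exact ENNReal.measurable_ofReal.comp (((hdmeas M).mono hm' le_rfl).mul hG)
  have hMCT : ∫⁻ ω, ⨆ M, ENNReal.ofReal (Wm M ω) ∂μ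
      = ⨆ M, ∫⁻ ω, ENNReal.ofReal (Wm M ω) ∂μ := by
    apply lintegral_iSup hWm_meas
    intro M N hMN ω
    exact ENNReal.ofReal_le_ofReal (hWmmono M N hMN ω)
  refine ⟨hWmeas.aestronglyMeasurable, ?_⟩
  rw [hasFiniteIntegral_iff_ofReal (Eventually.of_forall hWpos)]
  have hcalc : ∫⁻ ω, ENNReal.ofReal (W ω) ∂μ = ⨆ M, ∫⁻ ω, ENNReal.ofReal (Wm M ω) ∂μ := by
    rw [← hMCT]
    exact lintegral_congr fun ω => (hsup ω).symm
  rw [hcalc]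
  have hbd : ∀ M, ∫⁻ ω, ENNReal.ofReal (Wm M ω) ∂μ ≤ ENNReal.ofReal (∫ ω, ψ ω ∂μ) := by
    intro M
    rw [← ofReal_integral_eq_lintegral_ofReal (hWmint M) (Eventually.of_forall (hWmpos M))]
    exact ENNReal.ofReal_le_ofReal (hint_bound M)
  exact lt_of_le_of_lt (iSup_le hbd) ENNReal.ofReal_lt_top

/-- the exact infimum in the Stein-type inequality (Lemma `inf`). -/
theorem stmt5 {Ω : Type*} [m0 : MeasurableSpace Ω] (μ : Measure Ω) [IsProbabilityMeasure μ]
    (n : ℕ) (F : ℕ → MeasurableSpace Ω)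
    (hFle : ∀ k, F k ≤ m0)
    (hFdec : ∀ k, 1 ≤ k → k ≤ n → F (k + 1) ≤ F k)
    (φ : ℕ → Ω → ℝ)
    (hφint : ∀ k, 1 ≤ k → k ≤ n → Integrable (φ k) μ)
    (hφmeas : ∀ k, 1 ≤ k → k ≤ n → Measurable[F k] (φ k))
    (lam : ℕ → Ω → ℝ)
    (hlam0 : lam 0 = fun _ => 0)
    (hlam : ∀ k, 1 ≤ k → k ≤ n →
      lam k = μ[(fun ω => Real.sqrt ((φ k ω) ^ 2 + (lam (k - 1) ω) ^ 2)) | F (k + 1)]) :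
    sInf {r : ℝ | ∃ f : ℕ → Ω → ℝ,
        (∀ k, 1 ≤ k → k ≤ n → Integrable (f k) μ ∧ μ[f k | F k] =ᵐ[μ] φ k) ∧
        r = ∫ ω, Real.sqrt (∑ k ∈ Finset.Icc 1 n, (f k ω) ^ 2) ∂μ}
      = ∫ ω, lam n ω ∂μ := by
  -- basic facts about lam
  have hlam_int : ∀ k, k ≤ n → Integrable (lam k) μ := by
    intro k hk
    rcases Nat.eq_zero_or_pos k with rfl | hk1
    · rw [hlam0]; exact integrable_const 0
    · rw [hlam k hk1 hk]; exact integrable_condExp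
  have hlam_nonneg : ∀ k, k ≤ n → (0:Ω → ℝ) ≤ᵐ[μ] lam k := by
    intro k hk
    rcases Nat.eq_zero_or_pos k with rfl | hk1
    · rw [hlam0]; exact Eventually.of_forall fun ω => le_refl 0
    · rw [hlam k hk1 hk]
      exact condExp_nonneg (Eventually.of_forall fun ω => Real.sqrt_nonneg _)
  have hq_int : ∀ k, 1 ≤ k → k ≤ n →
      Integrable (fun ω => Real.sqrt ((φ k ω) ^ 2 + (lam (k-1) ω) ^ 2)) μ := by
    intro k hk1 hkn
    exact integrable_sqrt_sq_add_sq (hφint k hk1 hkn)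
      (hlam_int (k-1) (le_trans (Nat.sub_le _ _) hkn))
  -- The lower bound
  have hlb : ∀ r ∈ {r : ℝ | ∃ f : ℕ → Ω → ℝ,
      (∀ k, 1 ≤ k → k ≤ n → Integrable (f k) μ ∧ μ[f k | F k] =ᵐ[μ] φ k) ∧
      r = ∫ ω, Real.sqrt (∑ k ∈ Finset.Icc 1 n, (f k ω) ^ 2) ∂μ},
      ∫ ω, lam n ω ∂μ ≤ r := by
    rintro r ⟨f, hf, rfl⟩
    set g : ℕ → Ω → ℝ := fun k ω => Real.sqrt (∑ j ∈ Finset.Icc 1 k, (f j ω) ^ 2) with hg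
    have hg_aesm : ∀ k, k ≤ n → AEStronglyMeasurable (g k) μ := by
      intro k hk
      have : AEMeasurable (fun ω => ∑ j ∈ Finset.Icc 1 k, (f j ω) ^ 2) μ := by
        apply Finset.aemeasurable_fun_sum
        intro j hj
        have hj' := Finset.mem_Icc.1 hj
        exact (((hf j hj'.1 (hj'.2.trans hk)).1.aemeasurable).pow_const 2)
      exact (Measurable.comp_aemeasurable Real.continuous_sqrt.measurable this).aestronglyMeasurable
    have hg_int : ∀ k, k ≤ n → Integrable (g k) μ := by
      intro k hk
      refine Integrable.mono' (g := fun ω => ∑ j ∈ Finset.Icc 1 k, |f j ω|) ?_ (hg_aesm k hk) ?_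
      · apply integrable_finset_sum
        intro j hj
        have hj' := Finset.mem_Icc.1 hj
        exact (hf j hj'.1 (hj'.2.trans hk)).1.abs
      · refine Eventually.of_forall fun ω => ?_
        rw [Real.norm_eq_abs, abs_of_nonneg (Real.sqrt_nonneg _)]
        show Real.sqrt (∑ j ∈ Finset.Icc 1 k, (f j ω) ^ 2) ≤ ∑ j ∈ Finset.Icc 1 k, |f j ω|
        rw [show (∑ j ∈ Finset.Icc 1 k, |f j ω|)
            = Real.sqrt ((∑ j ∈ Finset.Icc 1 k, |f j ω|)^2) from
          (Real.sqrt_sq (Finset.sum_nonneg fun j _ => abs_nonneg _)).symm]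
        apply Real.sqrt_le_sqrt
        calc ∑ j ∈ Finset.Icc 1 k, (f j ω) ^ 2
            = ∑ j ∈ Finset.Icc 1 k, |f j ω| ^ 2 := by
              apply Finset.sum_congr rfl; intro j _; rw [sq_abs]
          _ ≤ (∑ j ∈ Finset.Icc 1 k, |f j ω|) ^ 2 :=
              Finset.sum_sq_le_sq_sum_of_nonneg fun j _ => abs_nonneg _
    have hg0 : g 0 = fun _ => (0:ℝ) := by
      funext ω; rw [hg]; dsimp only
      rw [show Finset.Icc 1 0 = ∅ from Finset.Icc_eq_empty (by norm_num)]
      simp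
    have hgsucc : ∀ k ω, g (k+1) ω = Real.sqrt ((f (k+1) ω)^2 + (g k ω)^2) := by
      intro k ω
      show Real.sqrt (∑ j ∈ Finset.Icc 1 (k+1), (f j ω) ^ 2)
        = Real.sqrt ((f (k+1) ω)^2 + (Real.sqrt (∑ j ∈ Finset.Icc 1 k, (f j ω) ^ 2))^2)
      rw [Real.sq_sqrt (Finset.sum_nonneg fun j _ => sq_nonneg _)]
      congr 1
      rw [Finset.sum_Icc_succ_top (Nat.succ_le_succ (Nat.zero_le k)), add_comm]
    have key : ∀ k, k ≤ n → lam k ≤ᵐ[μ] μ[g k|F (k+1)] := by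
      intro k
      induction k with
      | zero =>
        intro _
        rw [hlam0, hg0]
        rw [show (fun _:Ω => (0:ℝ)) = (0:Ω → ℝ) from rfl, condExp_zero]
      | succ k ih =>
        intro hkn
        have hk : k ≤ n := le_trans (Nat.le_succ k) hkn
        have ihk := ih hk
        have hK1 : 1 ≤ k + 1 := Nat.succ_le_succ (Nat.zero_le k)
        have hfK := hf (k+1) hK1 hkn
        -- step 1 : pointwise a.e. sqrt(φ² + lam²) ≤ sqrt(φ² + condexp²)
        have h1 : (fun ω => Real.sqrt ((φ (k+1) ω)^2 + (lam k ω)^2))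
            ≤ᵐ[μ] fun ω => Real.sqrt (((μ[f (k+1)|F (k+1)]) ω)^2 + ((μ[g k|F (k+1)]) ω)^2) := by
          filter_upwards [ihk, hlam_nonneg k hk, hfK.2] with ω h₁ h₂ h₃
          rw [h₃]
          apply Real.sqrt_le_sqrt
          have h₂' : (0:ℝ) ≤ lam k ω := h₂
          have : (lam k ω)^2 ≤ ((μ[g k|F (k+1)]) ω)^2 := by nlinarith [h₁, h₂']
          linarith
        have h2 := jensen2 (hFle (k+1)) hfK.1 (hg_int k hk)
        have h3 : (fun ω => Real.sqrt ((f (k+1) ω)^2 + (g k ω)^2)) = g (k+1) := by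
          funext ω; rw [hgsucc]
        have h4 : (fun ω => Real.sqrt ((φ (k+1) ω)^2 + (lam k ω)^2))
            ≤ᵐ[μ] μ[g (k+1)|F (k+1)] := by
          rw [← h3]
          filter_upwards [h1, h2] with ω hω1 hω2
          exact hω1.trans hω2
        have h5 : μ[(fun ω => Real.sqrt ((φ (k+1) ω)^2 + (lam k ω)^2))|F (k+2)]
            ≤ᵐ[μ] μ[μ[g (k+1)|F (k+1)]|F (k+2)] :=
          condExp_mono (hq_int (k+1) hK1 hkn) integrable_condExp h4
        have h6 : μ[μ[g (k+1)|F (k+1)]|F (k+2)] =ᵐ[μ] μ[g (k+1)|F (k+2)] :=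
          condExp_condExp_of_le (hFdec (k+1) hK1 hkn) (hFle (k+1))
        rw [hlam (k+1) hK1 hkn]
        exact EventuallyLE.trans h5 h6.le
    -- conclude
    have h7 : ∫ ω, lam n ω ∂μ ≤ ∫ ω, (μ[g n|F (n+1)]) ω ∂μ :=
      integral_mono_ae (hlam_int n le_rfl) integrable_condExp (key n le_rfl)
    rw [integral_condExp (hFle (n+1))] at h7
    exact h7
  
  -- strong measurability of lam
  have hlam_sm : ∀ k, k ≤ n → StronglyMeasurable[F (k+1)] (lam k) := by
    intro k hk
    rcases Nat.eq_zero_or_pos k with rfl | hk1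
    · rw [hlam0]; exact stronglyMeasurable_const
    · rw [hlam k hk1 hk]; exact stronglyMeasurable_condExp
  -- the optimal construction
  let gs : ℕ → Ω → ℝ := fun k => Nat.rec (motive := fun _ => Ω → ℝ) (fun _ => (0:ℝ))
    (fun k Gk ω =>
      Real.sqrt ((φ (k+1) ω * (if lam k ω ≤ 0 then 1 else Gk ω / lam k ω))^2 + (Gk ω)^2)) k
  let fs : ℕ → Ω → ℝ := fun k ω =>
    φ k ω * (if lam (k-1) ω ≤ 0 then 1 else gs (k-1) ω / lam (k-1) ω)
  have hgssucc : ∀ k, gs (k+1) = fun ω => Real.sqrt ((fs (k+1) ω)^2 + (gs k ω)^2) :=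
    fun k => rfl
  -- facts about the auxiliary multiplier c
  have cfact : ∀ k, k ≤ n → Measurable (gs k) → (∀ ω, 0 ≤ gs k ω) → Integrable (gs k) μ →
      (μ[gs k|F (k+1)] =ᵐ[μ] lam k) →
      Integrable (fun ω => if lam k ω ≤ 0 then (1:ℝ) else gs k ω / lam k ω) μ ∧
      (μ[(fun ω => if lam k ω ≤ 0 then (1:ℝ) else gs k ω / lam k ω)|F (k+1)]
        =ᵐ[μ] fun _ => 1) := by
    intro k hk hGmeas hGpos hGint hGcond
    have hlm' : Measurable[F (k+1)] (lam k) := (hlam_sm k hk).measurable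
    have hlm : Measurable (lam k) := hlm'.mono (hFle (k+1)) le_rfl
    have hW := wkey (hFle (k+1)) hGmeas hGpos hGint hlm' measurable_const
      (fun ω => zero_le_one) (integrable_const 1) hGcond
    have hAm' : MeasurableSet[F (k+1)] {ω | lam k ω ≤ 0} :=
      measurableSet_le hlm' measurable_const
    have hAm : MeasurableSet {ω | lam k ω ≤ 0} := (hFle (k+1)) _ hAm'
    have hindint : Integrable (fun ω => if lam k ω ≤ 0 then (1:ℝ) else 0) μ := by
      refine (integrable_const (1:ℝ)).mono' ?_ (Eventually.of_forall fun ω => ?_)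
      · exact (Measurable.ite hAm measurable_const measurable_const).aestronglyMeasurable
      · rw [Real.norm_eq_abs]; split_ifs <;> simp
    have hceq : (fun ω => if lam k ω ≤ 0 then (1:ℝ) else gs k ω / lam k ω)
        = (fun ω => if lam k ω ≤ 0 then (1:ℝ) else 0)
          + (fun ω => if lam k ω ≤ 0 then 0 else (1:ℝ) * gs k ω / lam k ω) := by
      funext ω
      simp only [Pi.add_apply]
      split_ifs with h
      · rw [add_zero]
      · rw [zero_add, one_mul]
    refine ⟨by rw [hceq]; exact hindint.add hW, ?_⟩
    have hcadd : μ[(fun ω => if lam k ω ≤ 0 then (1:ℝ) else gs k ω / lam k ω)|F (k+1)]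
        =ᵐ[μ] μ[(fun ω => if lam k ω ≤ 0 then (1:ℝ) else 0)|F (k+1)]
          + μ[(fun ω => if lam k ω ≤ 0 then 0 else (1:ℝ) * gs k ω / lam k ω)|F (k+1)] := by
      rw [hceq]; exact condExp_add hindint hW (F (k+1))
    have hind_sm : StronglyMeasurable[F (k+1)] (fun ω => if lam k ω ≤ 0 then (1:ℝ) else 0) :=
      (Measurable.ite hAm' measurable_const measurable_const).stronglyMeasurable
    have h1 : μ[(fun ω => if lam k ω ≤ 0 then (1:ℝ) else 0)|F (k+1)]
        = fun ω => if lam k ω ≤ 0 then (1:ℝ) else 0 :=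
      condExp_of_stronglyMeasurable (hFle (k+1)) hind_sm hindint
    set d : Ω → ℝ := fun ω => if lam k ω ≤ 0 then 0 else 1 / lam k ω with hd
    have hdm' : Measurable[F (k+1)] d :=
      Measurable.ite hAm' measurable_const (measurable_const.div hlm')
    have hWd : (fun ω => if lam k ω ≤ 0 then 0 else (1:ℝ) * gs k ω / lam k ω) = d * gs k := by
      funext ω
      simp only [Pi.mul_apply, hd]
      split_ifs with h
      · rw [zero_mul]
      · rw [one_mul, one_div, div_eq_inv_mul]
    have hWint' : Integrable (d * gs k) μ := by rw [← hWd]; exact hW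
    have h2 : μ[d * gs k|F (k+1)] =ᵐ[μ] d * μ[gs k|F (k+1)] :=
      condExp_mul_of_stronglyMeasurable_left hdm'.stronglyMeasurable hWint' hGint
    rw [hWd] at hcadd
    filter_upwards [hcadd, h2, hGcond] with ω hω1 hω2 hω3
    rw [hω1]
    simp only [Pi.add_apply, Pi.mul_apply] at hω2 ⊢
    rw [h1, hω2, hω3]
    show (if lam k ω ≤ 0 then (1:ℝ) else 0) + (if lam k ω ≤ 0 then (0:ℝ) else 1/lam k ω) * lam k ω = 1
    split_ifs with h
    · rw [zero_mul, add_zero]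
    · rw [zero_add, one_div, inv_mul_cancel₀ (ne_of_gt (not_le.1 h))]
  -- a.e. facts on the set {lam k ≤ 0}
  have hAfact : ∀ k, k ≤ n → Integrable (gs k) μ → (μ[gs k|F (k+1)] =ᵐ[μ] lam k) →
      (∀ ω, 0 ≤ gs k ω) →
      ∀ᵐ ω ∂μ, lam k ω ≤ 0 → (gs k ω = 0 ∧ lam k ω = 0) := by
    intro k hk hGint hGcond hGpos
    have hlm' : Measurable[F (k+1)] (lam k) := (hlam_sm k hk).measurable
    have hA' : MeasurableSet[F (k+1)] {ω | lam k ω ≤ 0} := measurableSet_le hlm' measurable_const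
    have hA : MeasurableSet {ω | lam k ω ≤ 0} := (hFle (k+1)) _ hA'
    have h1 : ∫ ω in {ω | lam k ω ≤ 0}, (μ[gs k|F (k+1)]) ω ∂μ
        = ∫ ω in {ω | lam k ω ≤ 0}, gs k ω ∂μ :=
      setIntegral_condExp (hFle (k+1)) hGint hA'
    have h2 : ∫ ω in {ω | lam k ω ≤ 0}, (μ[gs k|F (k+1)]) ω ∂μ
        = ∫ ω in {ω | lam k ω ≤ 0}, lam k ω ∂μ :=
      integral_congr_ae (ae_restrict_of_ae hGcond)
    have h3 : ∫ ω in {ω | lam k ω ≤ 0}, lam k ω ∂μ ≤ 0 := by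
      apply setIntegral_nonpos_of_ae_restrict
      exact (ae_restrict_iff' hA).2 (Eventually.of_forall fun ω hω => hω)
    have h4 : 0 ≤ ∫ ω in {ω | lam k ω ≤ 0}, gs k ω ∂μ :=
      setIntegral_nonneg hA fun ω _ => hGpos ω
    have h5 : ∫ ω in {ω | lam k ω ≤ 0}, gs k ω ∂μ = 0 :=
      le_antisymm (by rw [← h1, h2]; exact h3) h4
    have h6 : gs k =ᵐ[μ.restrict {ω | lam k ω ≤ 0}] 0 := by
      refine (integral_eq_zero_iff_of_nonneg_ae ?_ hGint.integrableOn).1 h5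
      exact ae_restrict_of_ae (Eventually.of_forall hGpos)
    have h7 : ∀ᵐ ω ∂μ, ω ∈ {ω | lam k ω ≤ 0} → gs k ω = 0 := (ae_restrict_iff' hA).1 h6
    filter_upwards [h7, hlam_nonneg k hk] with ω hω1 hω2 hle
    exact ⟨hω1 hle, le_antisymm hle hω2⟩
  -- main induction: properties of gs
  have main : ∀ k, k ≤ n → Measurable (gs k) ∧ (∀ ω, 0 ≤ gs k ω) ∧ Integrable (gs k) μ ∧
      (μ[gs k|F (k+1)] =ᵐ[μ] lam k) := by
    intro k
    induction k with
    | zero =>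
      intro _
      refine ⟨measurable_const, fun ω => le_refl 0, integrable_const 0, ?_⟩
      rw [hlam0, show gs 0 = (0:Ω → ℝ) from rfl, condExp_zero]
      exact Eventually.of_forall fun ω => rfl
    | succ k ih =>
      intro hk1n
      have hk : k ≤ n := (Nat.le_succ k).trans hk1n
      obtain ⟨hGmeas, hGpos, hGint, hGcond⟩ := ih hk
      have hK1 : 1 ≤ k+1 := Nat.succ_le_succ (Nat.zero_le k)
      have hlm' : Measurable[F (k+1)] (lam k) := (hlam_sm k hk).measurable
      have hlm : Measurable (lam k) := hlm'.mono (hFle (k+1)) le_rfl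
      have hφm' : Measurable[F (k+1)] (φ (k+1)) := hφmeas (k+1) hK1 hk1n
      have hφm : Measurable (φ (k+1)) := hφm'.mono (hFle (k+1)) le_rfl
      have hq_m' : Measurable[F (k+1)] (fun ω => Real.sqrt ((φ (k+1) ω)^2 + (lam k ω)^2)) :=
        Real.continuous_sqrt.measurable.comp ((hφm'.pow_const 2).add (hlm'.pow_const 2))
      have hqint : Integrable (fun ω => Real.sqrt ((φ (k+1) ω)^2 + (lam k ω)^2)) μ :=
        hq_int (k+1) hK1 hk1n
      have hqpos : ∀ ω, 0 ≤ Real.sqrt ((φ (k+1) ω)^2 + (lam k ω)^2) :=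
        fun ω => Real.sqrt_nonneg _
      have hcm : Measurable (fun ω => if lam k ω ≤ 0 then (1:ℝ) else gs k ω / lam k ω) :=
        Measurable.ite (measurableSet_le hlm measurable_const) measurable_const
          (hGmeas.div hlm)
      have hfm : Measurable (fs (k+1)) := hφm.mul hcm
      have hgsm : Measurable (gs (k+1)) := by
        rw [hgssucc k]
        exact Real.continuous_sqrt.measurable.comp ((hfm.pow_const 2).add (hGmeas.pow_const 2))
      have hgspos : ∀ ω, 0 ≤ gs (k+1) ω := by
        intro ω; simp only [hgssucc k]; exact Real.sqrt_nonneg _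
      have hfs_pos_case : ∀ ω, lam k ω ≤ 0 → fs (k+1) ω = φ (k+1) ω := by
        intro ω hω
        show φ (k+1) ω * (if lam k ω ≤ 0 then 1 else gs k ω / lam k ω) = φ (k+1) ω
        rw [if_pos hω, mul_one]
      have hfs_neg_case : ∀ ω, ¬ lam k ω ≤ 0 →
          fs (k+1) ω = φ (k+1) ω * (gs k ω / lam k ω) := by
        intro ω hω
        show φ (k+1) ω * (if lam k ω ≤ 0 then 1 else gs k ω / lam k ω) = _
        rw [if_neg hω]
      have hpoint : ∀ ω, ¬ lam k ω ≤ 0 → gs (k+1) ω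
          = (gs k ω / lam k ω) * Real.sqrt ((φ (k+1) ω)^2 + (lam k ω)^2) := by
        intro ω hω
        have hlpos : 0 < lam k ω := not_le.1 hω
        simp only [hgssucc k]
        rw [hfs_neg_case ω hω]
        have hexp : (φ (k+1) ω * (gs k ω / lam k ω))^2 + (gs k ω)^2
            = ((φ (k+1) ω)^2 + (lam k ω)^2) * (gs k ω / lam k ω)^2 := by
          field_simp
        rw [hexp, Real.sqrt_mul (by positivity) _,
          Real.sqrt_sq (div_nonneg (hGpos ω) hlpos.le), mul_comm]
      have hWq := wkey (hFle (k+1)) hGmeas hGpos hGint hlm' hq_m' hqpos hqint hGcond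
      have hgsint : Integrable (gs (k+1)) μ := by
        refine Integrable.mono' (((hφint (k+1) hK1 hk1n).abs.add hGint).add hWq)
          hgsm.aestronglyMeasurable (Eventually.of_forall fun ω => ?_)
        rw [Real.norm_eq_abs, abs_of_nonneg (hgspos ω)]
        simp only [Pi.add_apply]
        by_cases hω : lam k ω ≤ 0
        · rw [if_pos hω]
          have h8 : gs (k+1) ω = Real.sqrt ((φ (k+1) ω)^2 + (gs k ω)^2) := by
            simp only [hgssucc k]; rw [hfs_pos_case ω hω]
          rw [h8, add_zero]
          calc Real.sqrt ((φ (k+1) ω)^2 + (gs k ω)^2) ≤ |φ (k+1) ω| + |gs k ω| :=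
              sqrt_sq_add_sq_le _ _
            _ = |φ (k+1) ω| + gs k ω := by rw [abs_of_nonneg (hGpos ω)]
        · rw [if_neg hω, hpoint ω hω]
          have h9 : Real.sqrt ((φ (k+1) ω)^2 + (lam k ω)^2) * gs k ω / lam k ω
              = gs k ω / lam k ω * Real.sqrt ((φ (k+1) ω)^2 + (lam k ω)^2) := by
            ring
          rw [h9]
          have h10 : 0 ≤ |φ (k+1) ω| + gs k ω := add_nonneg (abs_nonneg _) (hGpos ω)
          linarith
      obtain ⟨hcint, hccond⟩ := cfact k hk hGmeas hGpos hGint hGcond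
      have hAf := hAfact k hk hGint hGcond hGpos
      have hgs_eq_cq : gs (k+1) =ᵐ[μ] fun ω => Real.sqrt ((φ (k+1) ω)^2 + (lam k ω)^2)
          * (if lam k ω ≤ 0 then (1:ℝ) else gs k ω / lam k ω) := by
        filter_upwards [hAf] with ω hω
        by_cases hle : lam k ω ≤ 0
        · obtain ⟨hG0, hl0⟩ := hω hle
          simp only [hgssucc k]
          rw [hfs_pos_case ω hle, hG0, if_pos hle, mul_one, hl0]
        · rw [hpoint ω hle, if_neg hle, mul_comm]
      have hqc_int : Integrable (fun ω => Real.sqrt ((φ (k+1) ω)^2 + (lam k ω)^2)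
          * (if lam k ω ≤ 0 then (1:ℝ) else gs k ω / lam k ω)) μ :=
        (integrable_congr hgs_eq_cq).1 hgsint
      have hpull : μ[(fun ω => Real.sqrt ((φ (k+1) ω)^2 + (lam k ω)^2)
            * (if lam k ω ≤ 0 then (1:ℝ) else gs k ω / lam k ω))|F (k+1)]
          =ᵐ[μ] (fun ω => Real.sqrt ((φ (k+1) ω)^2 + (lam k ω)^2))
            * μ[(fun ω => if lam k ω ≤ 0 then (1:ℝ) else gs k ω / lam k ω)|F (k+1)] :=
        condExp_mul_of_stronglyMeasurable_left hq_m'.stronglyMeasurable hqc_int hcint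
      have hinner : μ[(fun ω => Real.sqrt ((φ (k+1) ω)^2 + (lam k ω)^2)
            * (if lam k ω ≤ 0 then (1:ℝ) else gs k ω / lam k ω))|F (k+1)]
          =ᵐ[μ] fun ω => Real.sqrt ((φ (k+1) ω)^2 + (lam k ω)^2) := by
        refine hpull.trans ?_
        filter_upwards [hccond] with ω hω
        simp only [Pi.mul_apply]
        rw [hω, mul_one]
      have htower : μ[gs (k+1)|F (k+2)]
          =ᵐ[μ] μ[(fun ω => Real.sqrt ((φ (k+1) ω)^2 + (lam k ω)^2))|F (k+2)] := by
        refine (condExp_congr_ae hgs_eq_cq).trans ?_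
        refine ((condExp_condExp_of_le (hFdec (k+1) hK1 hk1n) (hFle (k+1))).symm).trans ?_
        exact condExp_congr_ae hinner
      refine ⟨hgsm, hgspos, hgsint, ?_⟩
      rw [hlam (k+1) hK1 hk1n]
      exact htower
  -- the constructed functions satisfy the constraints
  have hfs_prop : ∀ k, 1 ≤ k → k ≤ n → Integrable (fs k) μ ∧ μ[fs k|F k] =ᵐ[μ] φ k := by
    intro k hk1 hkn
    obtain ⟨j, rfl⟩ : ∃ j, k = j + 1 := ⟨k - 1, (Nat.succ_pred_eq_of_pos hk1).symm⟩
    have hj : j ≤ n := (Nat.le_succ j).trans hkn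
    obtain ⟨hGmeas, hGpos, hGint, hGcond⟩ := main j hj
    obtain ⟨hgsm1, hgspos1, hgsint1, _⟩ := main (j+1) hkn
    obtain ⟨hcint, hccond⟩ := cfact j hj hGmeas hGpos hGint hGcond
    have hlm : Measurable (lam j) := ((hlam_sm j hj).measurable).mono (hFle (j+1)) le_rfl
    have hφm : Measurable (φ (j+1)) := (hφmeas (j+1) hk1 hkn).mono (hFle (j+1)) le_rfl
    have hcm : Measurable (fun ω => if lam j ω ≤ 0 then (1:ℝ) else gs j ω / lam j ω) :=
      Measurable.ite (measurableSet_le hlm measurable_const) measurable_const (hGmeas.div hlm)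
    have hfint : Integrable (fs (j+1)) μ := by
      refine hgsint1.mono' (hφm.mul hcm).aestronglyMeasurable
        (Eventually.of_forall fun ω => ?_)
      rw [Real.norm_eq_abs, ← Real.sqrt_sq_eq_abs]
      simp only [hgssucc j]
      apply Real.sqrt_le_sqrt
      have := sq_nonneg (gs j ω)
      linarith
    refine ⟨hfint, ?_⟩
    have hfmul : fs (j+1) = φ (j+1) * (fun ω => if lam j ω ≤ 0 then (1:ℝ) else gs j ω / lam j ω) :=
      rfl
    have hpull : μ[fs (j+1)|F (j+1)]
        =ᵐ[μ] φ (j+1) * μ[(fun ω => if lam j ω ≤ 0 then (1:ℝ) else gs j ω / lam j ω)|F (j+1)] := by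
      rw [hfmul]
      exact condExp_mul_of_stronglyMeasurable_left (hφmeas (j+1) hk1 hkn).stronglyMeasurable
        (by rw [← hfmul]; exact hfint) hcint
    refine hpull.trans ?_
    filter_upwards [hccond] with ω hω
    simp only [Pi.mul_apply]
    rw [hω, mul_one]
  -- gs n is the square root of the sum
  have hgs_sum : ∀ k ω, gs k ω = Real.sqrt (∑ j ∈ Finset.Icc 1 k, (fs j ω)^2) := by
    intro k
    induction k with
    | zero =>
      intro ω
      show (0:ℝ) = Real.sqrt (∑ j ∈ Finset.Icc 1 0, (fs j ω)^2)
      rw [show Finset.Icc 1 0 = ∅ from Finset.Icc_eq_empty (by norm_num)]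
      simp
    | succ k ih =>
      intro ω
      simp only [hgssucc k]
      rw [ih ω, Real.sq_sqrt (Finset.sum_nonneg fun j _ => sq_nonneg _)]
      congr 1
      rw [Finset.sum_Icc_succ_top (Nat.succ_le_succ (Nat.zero_le k)), add_comm]
  -- membership
  have hmem : (∫ ω, lam n ω ∂μ) ∈ {r : ℝ | ∃ f : ℕ → Ω → ℝ,
      (∀ k, 1 ≤ k → k ≤ n → Integrable (f k) μ ∧ μ[f k | F k] =ᵐ[μ] φ k) ∧
      r = ∫ ω, Real.sqrt (∑ k ∈ Finset.Icc 1 n, (f k ω) ^ 2) ∂μ} := by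
    refine ⟨fs, hfs_prop, ?_⟩
    have h8 : ∫ ω, (μ[gs n|F (n+1)]) ω ∂μ = ∫ ω, gs n ω ∂μ := integral_condExp (hFle (n+1))
    have h9 : ∫ ω, (μ[gs n|F (n+1)]) ω ∂μ = ∫ ω, lam n ω ∂μ :=
      integral_congr_ae (main n le_rfl).2.2.2
    rw [← h9, h8]
    exact integral_congr_ae (Eventually.of_forall fun ω => hgs_sum n ω)
  exact le_antisymm (csInf_le ⟨∫ ω, lam n ω ∂μ, fun x hx => hlb x hx⟩ hmem)
    (le_csInf ⟨_, hmem⟩ hlb)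
end

section
/- Let φ_1,…,φ_n be nonnegative integrable random variables on a probability space (Ω,μ), and define real numbers λ_0 = 0 and λ_k = E (φ_k² + λ_{k−1}²)^{1/2} for k = 1,…,n. Then both ‖(φ_k)_{k=1}^n‖_{L¹(ℓ²)} ≤ 2 λ_n and ‖(φ_k)_{k=1}^n‖_{ind} ≤ 2 λ_n. -/
open MeasureTheory

lemma sqrt_lip {A u t : ℝ} (hA : 0 ≤ A) (hu : 0 ≤ u) (hut : u ≤ t) :
    Real.sqrt (A + t ^ 2) ≤ Real.sqrt (A + u ^ 2) + (t - u) := by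
  have h1 : u ≤ Real.sqrt (A + u ^ 2) := by
    rw [Real.le_sqrt hu (by positivity)]; linarith
  have h2 : 0 ≤ Real.sqrt (A + u ^ 2) := Real.sqrt_nonneg _
  have h3 : Real.sqrt (A + u ^ 2) ^ 2 = A + u ^ 2 := Real.sq_sqrt (by positivity)
  rw [Real.sqrt_le_iff]
  exact ⟨by linarith, by nlinarith⟩

lemma telescope_main {X : Type*} [MeasurableSpace X] (ν : Measure X) [IsProbabilityMeasure ν]
    (n : ℕ) (ψ : Fin n → X → ℝ)
    (hnn : ∀ k x, 0 ≤ ψ k x) (hint : ∀ k, Integrable (ψ k) ν)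
    (lam : ℕ → ℝ) (hlam0 : lam 0 = 0)
    (hmono : ∀ k < n, lam k ≤ lam (k + 1))
    (hrec : ∀ k : Fin n,
      (∫ x, Real.sqrt ((ψ k x) ^ 2 + (lam (k : ℕ)) ^ 2) ∂ν) ≤ lam ((k : ℕ) + 1)) :
    (∫ x, Real.sqrt (∑ k, (ψ k x) ^ 2) ∂ν) ≤ 2 * lam n := by
  classical
  -- nonnegativity of lam up to n
  have hpos : ∀ m ≤ n, 0 ≤ lam m := by
    intro m hm
    induction m with
    | zero => simp [hlam0]
    | succ m ih => exact (ih (by omega)).trans (hmono m (by omega))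
  -- integrability helper
  have hintS : ∀ (s : Finset (Fin n)) (t : ℝ),
      Integrable (fun x => Real.sqrt (∑ j ∈ s, (ψ j x) ^ 2 + t ^ 2)) ν := by
    intro s t
    have hmeas : AEStronglyMeasurable
        (fun x => Real.sqrt (∑ j ∈ s, (ψ j x) ^ 2 + t ^ 2)) ν := by
      apply Real.continuous_sqrt.comp_aestronglyMeasurable
      apply AEStronglyMeasurable.add _ aestronglyMeasurable_const
      exact Finset.aestronglyMeasurable_fun_sum s
        (fun j _ => ((hint j).aestronglyMeasurable.mul (hint j).aestronglyMeasurable).congr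
          (by filter_upwards with x; simp [Pi.mul_apply, pow_two]))
    refine Integrable.mono' ((integrable_finset_sum s fun j _ => hint j).add
      (integrable_const |t|)) hmeas ?_
    filter_upwards with x
    simp only [Pi.add_apply]
    rw [Real.norm_eq_abs, abs_of_nonneg (Real.sqrt_nonneg _)]
    rw [Real.sqrt_le_iff]
    have h1 : ∑ j ∈ s, (ψ j x) ^ 2 ≤ (∑ j ∈ s, ψ j x) ^ 2 :=
      Finset.sum_sq_le_sq_sum_of_nonneg fun j _ => hnn j x
    have h2 : (0:ℝ) ≤ ∑ j ∈ s, ψ j x := Finset.sum_nonneg fun j _ => hnn j x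
    have h3 : t ^ 2 = |t| ^ 2 := (sq_abs t).symm
    exact ⟨by positivity, by nlinarith [abs_nonneg t]⟩
  -- decreasing property of t ↦ ∫ sqrt(ψ_k² + t²) − t
  have hdec : ∀ (k : Fin n) (u t : ℝ), 0 ≤ u → u ≤ t →
      (∫ x, Real.sqrt ((ψ k x) ^ 2 + t ^ 2) ∂ν) - t
        ≤ (∫ x, Real.sqrt ((ψ k x) ^ 2 + u ^ 2) ∂ν) - u := by
    intro k u t hu hut
    have key : (∫ x, Real.sqrt ((ψ k x) ^ 2 + t ^ 2) ∂ν)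
        ≤ (∫ x, Real.sqrt ((ψ k x) ^ 2 + u ^ 2) ∂ν) + (t - u) := by
      have h1 := hintS {k} t
      have h2 := hintS {k} u
      simp only [Finset.sum_singleton] at h1 h2
      calc (∫ x, Real.sqrt ((ψ k x) ^ 2 + t ^ 2) ∂ν)
          ≤ ∫ x, (Real.sqrt ((ψ k x) ^ 2 + u ^ 2) + (t - u)) ∂ν := by
            refine integral_mono h1 (h2.add (integrable_const _)) fun x => ?_
            exact sqrt_lip (sq_nonneg _) hu hut
        _ = (∫ x, Real.sqrt ((ψ k x) ^ 2 + u ^ 2) ∂ν) + (t - u) := by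
            rw [integral_add h2 (integrable_const _), integral_const]
            simp
    linarith
  -- main induction
  have key : ∀ m : ℕ, m ≤ n → ∀ t : ℝ, lam m ≤ t →
      (∫ x, Real.sqrt (∑ j ∈ Finset.univ.filter (fun j : Fin n => (j : ℕ) < m),
        (ψ j x) ^ 2 + t ^ 2) ∂ν) ≤ lam m + t := by
    intro m
    induction m with
    | zero =>
      intro _ t ht
      rw [hlam0] at ht
      have : (Finset.univ.filter (fun j : Fin n => (j : ℕ) < 0)) = ∅ := by
        ext j; simp
      rw [this]
      simp only [Finset.sum_empty, zero_add, Real.sqrt_sq ht, integral_const]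
      simp [hlam0]
    | succ m ih =>
      intro hm t ht
      have hmn : m < n := by omega
      set k : Fin n := ⟨m, hmn⟩ with hk
      have hlmt : lam m ≤ t := (hmono m hmn).trans ht
      have hlm : 0 ≤ lam m := hpos m (by omega)
      have ht0 : 0 ≤ t := hlm.trans hlmt
      have hsplit : (Finset.univ.filter (fun j : Fin n => (j : ℕ) < m + 1))
          = insert k (Finset.univ.filter (fun j : Fin n => (j : ℕ) < m)) := by
        ext j
        simp only [Finset.mem_filter, Finset.mem_univ, true_and, Finset.mem_insert]
        constructor
        · intro h
          rcases Nat.lt_succ_iff_lt_or_eq.mp h with h | h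
          · exact Or.inr (by simpa using h)
          · exact Or.inl (Fin.ext h)
        · rintro (rfl | h)
          · show m < m + 1; omega
          · omega
      have hknotmem : k ∉ Finset.univ.filter (fun j : Fin n => (j : ℕ) < m) := by
        simp [hk]
      set s := Finset.univ.filter (fun j : Fin n => (j : ℕ) < m) with hs
      -- pointwise bound
      have hpt : ∀ x, Real.sqrt (∑ j ∈ insert k s, (ψ j x) ^ 2 + t ^ 2)
          ≤ Real.sqrt (∑ j ∈ s, (ψ j x) ^ 2 + t ^ 2)
            + (Real.sqrt ((ψ k x) ^ 2 + t ^ 2) - t) := by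
        intro x
        rw [Finset.sum_insert hknotmem]
        have hT : t ≤ Real.sqrt ((ψ k x) ^ 2 + t ^ 2) := by
          rw [Real.le_sqrt ht0 (by positivity)]; nlinarith [sq_nonneg (ψ k x)]
        have hTs : Real.sqrt ((ψ k x) ^ 2 + t ^ 2) ^ 2 = (ψ k x) ^ 2 + t ^ 2 :=
          Real.sq_sqrt (by positivity)
        have hA : 0 ≤ ∑ j ∈ s, (ψ j x) ^ 2 := Finset.sum_nonneg fun j _ => sq_nonneg _
        have := sqrt_lip (A := ∑ j ∈ s, (ψ j x) ^ 2) (u := t)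
          (t := Real.sqrt ((ψ k x) ^ 2 + t ^ 2)) hA ht0 hT
        rw [hTs] at this
        calc Real.sqrt ((ψ k x) ^ 2 + ∑ j ∈ s, (ψ j x) ^ 2 + t ^ 2)
            = Real.sqrt (∑ j ∈ s, (ψ j x) ^ 2 + ((ψ k x) ^ 2 + t ^ 2)) := by ring_nf
          _ ≤ _ := by linarith
      rw [hsplit]
      have h1 := hintS (insert k s) t
      have h2 := hintS s t
      have h3 := hintS {k} t
      simp only [Finset.sum_singleton] at h3
      calc (∫ x, Real.sqrt (∑ j ∈ insert k s, (ψ j x) ^ 2 + t ^ 2) ∂ν)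
          ≤ ∫ x, (Real.sqrt (∑ j ∈ s, (ψ j x) ^ 2 + t ^ 2)
              + (Real.sqrt ((ψ k x) ^ 2 + t ^ 2) - t)) ∂ν := by
            exact integral_mono h1 (h2.add (h3.sub (integrable_const _))) hpt
        _ = (∫ x, Real.sqrt (∑ j ∈ s, (ψ j x) ^ 2 + t ^ 2) ∂ν)
              + ((∫ x, Real.sqrt ((ψ k x) ^ 2 + t ^ 2) ∂ν) - t) := by
            have h4 : Integrable (fun x => Real.sqrt ((ψ k x) ^ 2 + t ^ 2) - t) ν :=
              h3.sub (integrable_const t)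
            rw [integral_add h2 h4, integral_sub h3 (integrable_const t), integral_const]
            simp
        _ ≤ (lam m + t) + ((∫ x, Real.sqrt ((ψ k x) ^ 2 + (lam m) ^ 2) ∂ν) - lam m) := by
            have := hdec k (lam m) t hlm hlmt
            have := ih (by omega) t hlmt
            linarith
        _ ≤ (lam m + t) + (lam (m + 1) - lam m) := by
            have := hrec k
            simp only [hk] at this
            linarith
        _ = lam (m + 1) + t := by ring
  -- conclude
  have hfin : (Finset.univ.filter (fun j : Fin n => (j : ℕ) < n)) = Finset.univ := by
    ext j; simp [j.isLt]
  have hln : 0 ≤ lam n := hpos n le_rfl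
  have h1 := key n le_rfl (lam n) le_rfl
  rw [hfin] at h1
  have h2 : (∫ x, Real.sqrt (∑ j, (ψ j x) ^ 2) ∂ν)
      ≤ ∫ x, Real.sqrt (∑ j, (ψ j x) ^ 2 + (lam n) ^ 2) ∂ν := by
    refine integral_mono_of_nonneg ?_ (hintS Finset.univ (lam n)) ?_
    · filter_upwards with x; exact Real.sqrt_nonneg _
    · filter_upwards with x
      exact Real.sqrt_le_sqrt (by nlinarith [sq_nonneg (lam n)])
  linarith

lemma map_eval_pi_meas {Ω : Type*} [MeasurableSpace Ω] (μ : Measure Ω) [IsProbabilityMeasure μ]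
    (n : ℕ) (k : Fin n) :
    (Measure.pi fun _ : Fin n => μ).map (fun ω => ω k) = μ := by
  ext s hs
  rw [Measure.map_apply (measurable_pi_apply k) hs]
  have hpre : (fun ω : Fin n → Ω => ω k) ⁻¹' s
      = Set.pi Set.univ (Function.update (fun _ : Fin n => Set.univ) k s) := by
    ext ω
    simp only [Set.mem_preimage, Set.mem_pi, Set.mem_univ, true_implies]
    constructor
    · intro h i
      rcases eq_or_ne i k with rfl | hik
      · simpa using h
      · simp [Function.update_of_ne hik]
    · intro h
      have := h k
      simpa using this
  rw [hpre, Measure.pi_pi]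
  rw [Fintype.prod_eq_single k (fun i hik => by simp [Function.update_of_ne hik])]
  simp

lemma integral_eval_pi {Ω : Type*} [MeasurableSpace Ω] (μ : Measure Ω) [IsProbabilityMeasure μ]
    (n : ℕ) (k : Fin n) {f : Ω → ℝ} (hf : AEStronglyMeasurable f μ) :
    ∫ ω : Fin n → Ω, f (ω k) ∂(Measure.pi fun _ => μ) = ∫ ω, f ω ∂μ := by
  conv_rhs => rw [← map_eval_pi_meas μ n k]
  rw [integral_map (measurable_pi_apply k).aemeasurable]
  rwa [map_eval_pi_meas]

lemma integrable_eval_pi {Ω : Type*} [MeasurableSpace Ω] (μ : Measure Ω) [IsProbabilityMeasure μ]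
    (n : ℕ) (k : Fin n) {f : Ω → ℝ} (hf : Integrable f μ) :
    Integrable (fun ω : Fin n → Ω => f (ω k)) (Measure.pi fun _ => μ) := by
  have h1 : Integrable f ((Measure.pi fun _ : Fin n => μ).map (fun ω => ω k)) := by
    rwa [map_eval_pi_meas]
  have h2 : AEStronglyMeasurable f ((Measure.pi fun _ : Fin n => μ).map (fun ω => ω k)) := by
    rw [map_eval_pi_meas]; exact hf.aestronglyMeasurable
  exact (integrable_map_measure h2 (measurable_pi_apply k).aemeasurable).mp h1

lemma int_sqrt {X : Type*} [MeasurableSpace X] {ν : Measure X} [IsFiniteMeasure ν] {f : X → ℝ}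
    (hnn : ∀ x, 0 ≤ f x) (hf : Integrable f ν) (c : ℝ) :
    Integrable (fun x => Real.sqrt (f x ^ 2 + c ^ 2)) ν := by
  have hmeas : AEStronglyMeasurable (fun x => Real.sqrt (f x ^ 2 + c ^ 2)) ν := by
    apply Real.continuous_sqrt.comp_aestronglyMeasurable
    exact ((hf.aestronglyMeasurable.mul hf.aestronglyMeasurable).congr
      (by filter_upwards with x; simp [Pi.mul_apply, pow_two])).add aestronglyMeasurable_const
  refine Integrable.mono' (hf.add (integrable_const |c|)) hmeas ?_
  filter_upwards with x
  simp only [Pi.add_apply]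
  rw [Real.norm_eq_abs, abs_of_nonneg (Real.sqrt_nonneg _), Real.sqrt_le_iff]
  have h1 := hnn x
  have h2 : c ^ 2 = |c| ^ 2 := (sq_abs c).symm
  exact ⟨by positivity, by nlinarith [abs_nonneg c]⟩

/-- the non-linear telescoping lemma, part (i). -/
theorem stmt7 {Ω : Type*} [MeasurableSpace Ω] (μ : Measure Ω) [IsProbabilityMeasure μ]
    (n : ℕ) (φ : Fin n → Ω → ℝ)
    (hφnonneg : ∀ k, ∀ ω, 0 ≤ φ k ω)
    (hφint : ∀ k, Integrable (φ k) μ)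
    (lam : ℕ → ℝ) (hlam0 : lam 0 = 0)
    (hlam : ∀ k : Fin n,
      lam ((k : ℕ) + 1) = ∫ ω, Real.sqrt ((φ k ω) ^ 2 + (lam (k : ℕ)) ^ 2) ∂μ) :
    (∫ ω, Real.sqrt (∑ k, (φ k ω) ^ 2) ∂μ) ≤ 2 * lam n ∧
    (∫ ω : Fin n → Ω, Real.sqrt (∑ k, (φ k (ω k)) ^ 2) ∂(Measure.pi fun _ => μ))
      ≤ 2 * lam n := by
  have hmono : ∀ k : ℕ, k < n → lam k ≤ lam (k + 1) := by
    intro k hk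
    have h := hlam ⟨k, hk⟩
    have hint' := int_sqrt (hφnonneg ⟨k, hk⟩) (hφint ⟨k, hk⟩) (lam k)
    have hle : |lam k| ≤ ∫ ω, Real.sqrt ((φ ⟨k, hk⟩ ω) ^ 2 + (lam k) ^ 2) ∂μ := by
      have h2 := integral_mono (integrable_const |lam k|) hint' (fun ω => by
        rw [← Real.sqrt_sq_eq_abs]
        exact Real.sqrt_le_sqrt (by nlinarith [sq_nonneg (φ ⟨k, hk⟩ ω)]))
      simpa using h2
    calc lam k ≤ |lam k| := le_abs_self _
      _ ≤ ∫ ω, Real.sqrt ((φ ⟨k, hk⟩ ω) ^ 2 + (lam k) ^ 2) ∂μ := hle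
      _ = lam (k + 1) := h.symm
  constructor
  · exact telescope_main μ n φ hφnonneg hφint lam hlam0 hmono
      (fun k => le_of_eq (hlam k).symm)
  · refine telescope_main (Measure.pi fun _ : Fin n => μ) n (fun k ω => φ k (ω k))
      (fun k ω => hφnonneg k (ω k)) (fun k => integrable_eval_pi μ n k (hφint k))
      lam hlam0 hmono ?_
    intro k
    have hf : AEStronglyMeasurable
        (fun ω => Real.sqrt ((φ k ω) ^ 2 + (lam (k : ℕ)) ^ 2)) μ :=
      (int_sqrt (hφnonneg k) (hφint k) (lam (k : ℕ))).aestronglyMeasurable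
    have heq := integral_eval_pi μ n k hf
    exact le_of_eq (heq.trans (hlam k).symm)
end

section
/- Let φ_1,…,φ_n be nonnegative integrable random variables and λ_1,…,λ_n nonnegative bounded random variables on a probability space (Ω,μ), with λ_0 := 0, such that E λ_k ≥ E (φ_k² + λ_{k−1}²)^{1/2} for each k = 1,…,n. Then max( ‖(φ_k)_{k=1}^n‖_{L¹(ℓ²)}, ‖(φ_k)_{k=1}^n‖_{ind} ) ≤ (1+√2) · (E λ_n)^{1/2} · (max_{1≤k≤n} ess sup λ_k)^{1/2}. -/
open MeasureTheory Function

lemma sqrt_le_half_add (x : ℝ) : Real.sqrt x ≤ (1 + |x|) / 2 := by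
  rcases le_or_gt x 0 with h | h
  · rw [Real.sqrt_eq_zero'.mpr h]
    positivity
  · nlinarith [Real.sq_sqrt h.le, Real.sqrt_nonneg x, sq_nonneg (Real.sqrt x - 1), abs_of_pos h]

lemma integrable_sqrt {α : Type*} [MeasurableSpace α] {ν : Measure α} [IsProbabilityMeasure ν]
    {f : α → ℝ} (hf : Integrable f ν) :
    Integrable (fun x => Real.sqrt (f x)) ν := by
  refine Integrable.mono' (((integrable_const (1:ℝ)).add hf.abs).div_const 2)
    (Real.continuous_sqrt.comp_aestronglyMeasurable hf.1) (Filter.Eventually.of_forall fun x => ?_)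
  rw [Real.norm_of_nonneg (Real.sqrt_nonneg _)]
  exact sqrt_le_half_add _

lemma jensen_sqrt {α : Type*} [MeasurableSpace α] (ν : Measure α) [IsProbabilityMeasure ν]
    {f : α → ℝ} (hf : Integrable f ν) (h0 : ∀ᵐ x ∂ν, 0 ≤ f x) :
    ∫ x, Real.sqrt (f x) ∂ν ≤ Real.sqrt (∫ x, f x ∂ν) := by
  exact Real.strictConcaveOn_sqrt.concaveOn.le_map_integral
    Real.continuous_sqrt.continuousOn isClosed_Ici h0 hf (integrable_sqrt hf)

lemma mp_eval {Ω : Type*} [MeasurableSpace Ω] (μ : Measure Ω) [IsProbabilityMeasure μ]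
    {n : ℕ} (i : Fin n) :
    MeasurePreserving (fun ω : Fin n → Ω => ω i) (Measure.pi fun _ => μ) μ := by
  refine ⟨measurable_pi_apply i, ?_⟩
  ext s hs
  rw [Measure.map_apply (measurable_pi_apply i) hs]
  have h1 : (fun ω : Fin n → Ω => ω i) ⁻¹' s
      = Set.pi Set.univ (Function.update (fun _ => Set.univ) i s) :=
    (Set.univ_pi_update_univ (α := fun _ : Fin n => Ω) i s).symm
  rw [h1, Measure.pi_pi]
  rw [Finset.prod_eq_single i (fun j _ hj => by simp [Function.update_of_ne hj]) (by simp)]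
  simp

lemma aux_bound {α : Type*} [MeasurableSpace α] (ν : Measure α) [IsProbabilityMeasure ν]
    {F G : α → ℝ} {M L : ℝ} (hM : 0 ≤ M) (hL0 : 0 ≤ L) (hLM : L ≤ M)
    (hG0 : ∀ᵐ x ∂ν, 0 ≤ G x) (hGint : Integrable G ν) (hGL : ∫ x, G x ∂ν ≤ L)
    (hFmeas : AEStronglyMeasurable F ν) (hF0 : ∀ᵐ x ∂ν, 0 ≤ F x)
    (hFG : ∀ᵐ x ∂ν, (F x)^2 ≤ (G x)^2 + 2*M*(G x)) :
    ∫ x, F x ∂ν ≤ (1 + Real.sqrt 2) * Real.sqrt L * Real.sqrt M := by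
  set c := Real.sqrt (2*M) with hc
  have hc0 : 0 ≤ c := Real.sqrt_nonneg _
  have hc2 : c^2 = 2*M := Real.sq_sqrt (by positivity)
  have hpt : ∀ᵐ x ∂ν, F x ≤ G x + c * Real.sqrt (G x) := by
    filter_upwards [hG0, hF0, hFG] with x hg hf hfg
    have hs : Real.sqrt (G x) ^ 2 = G x := Real.sq_sqrt hg
    have h1 : F x ^ 2 ≤ (G x + c * Real.sqrt (G x))^2 := by
      nlinarith [Real.sqrt_nonneg (G x), mul_nonneg (mul_nonneg hc0 hg) (Real.sqrt_nonneg (G x))]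
    calc F x = Real.sqrt (F x ^ 2) := (Real.sqrt_sq hf).symm
    _ ≤ Real.sqrt ((G x + c * Real.sqrt (G x))^2) := Real.sqrt_le_sqrt h1
    _ = G x + c * Real.sqrt (G x) := Real.sqrt_sq (by positivity)
  have hRint : Integrable (fun x => G x + c * Real.sqrt (G x)) ν :=
    hGint.add ((integrable_sqrt hGint).const_mul c)
  have hFint : Integrable F ν := by
    refine Integrable.mono' hRint hFmeas ?_
    filter_upwards [hpt, hF0] with x h1 h2
    rwa [Real.norm_of_nonneg h2]
  have hIG0 : 0 ≤ ∫ x, G x ∂ν := integral_nonneg_of_ae hG0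
  calc ∫ x, F x ∂ν ≤ ∫ x, (G x + c * Real.sqrt (G x)) ∂ν := integral_mono_ae hFint hRint hpt
  _ = (∫ x, G x ∂ν) + c * ∫ x, Real.sqrt (G x) ∂ν := by
      rw [integral_add hGint ((integrable_sqrt hGint).const_mul c), MeasureTheory.integral_const_mul]
  _ ≤ L + c * Real.sqrt L := by
      have h2 : ∫ x, Real.sqrt (G x) ∂ν ≤ Real.sqrt (∫ x, G x ∂ν) := jensen_sqrt ν hGint hG0
      have h3 : Real.sqrt (∫ x, G x ∂ν) ≤ Real.sqrt L := Real.sqrt_le_sqrt hGL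
      nlinarith [Real.sqrt_nonneg (∫ x, G x ∂ν)]
  _ ≤ (1 + Real.sqrt 2) * Real.sqrt L * Real.sqrt M := by
      have h1 : L = Real.sqrt L * Real.sqrt L := (Real.mul_self_sqrt hL0).symm
      have h2 : Real.sqrt L ≤ Real.sqrt M := Real.sqrt_le_sqrt hLM
      have h3 : c = Real.sqrt 2 * Real.sqrt M := by rw [hc, Real.sqrt_mul (by norm_num)]
      have h4 : 0 ≤ Real.sqrt L := Real.sqrt_nonneg L
      have h5 : 0 ≤ Real.sqrt 2 := Real.sqrt_nonneg 2
      nlinarith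

/-- the non-linear telescoping lemma, part (ii). -/
theorem stmt8 {Ω : Type*} [MeasurableSpace Ω] (μ : Measure Ω) [IsProbabilityMeasure μ]
    (n : ℕ) (φ : Fin n → Ω → ℝ)
    (hφnonneg : ∀ k, ∀ ω, 0 ≤ φ k ω)
    (hφint : ∀ k, Integrable (φ k) μ)
    (lam : ℕ → Ω → ℝ) (hlam0 : lam 0 = fun _ => 0)
    (hlamnonneg : ∀ k, 1 ≤ k → k ≤ n → ∀ ω, 0 ≤ lam k ω)
    (hlammeas : ∀ k, 1 ≤ k → k ≤ n → Measurable (lam k))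
    (hlambdd : ∀ k, 1 ≤ k → k ≤ n → ∃ M : ℝ, ∀ ω, lam k ω ≤ M)
    (hlam : ∀ k : Fin n,
      (∫ ω, Real.sqrt ((φ k ω) ^ 2 + (lam (k : ℕ) ω) ^ 2) ∂μ)
        ≤ ∫ ω, lam ((k : ℕ) + 1) ω ∂μ) :
    max (∫ ω, Real.sqrt (∑ k, (φ k ω) ^ 2) ∂μ)
        (∫ ω : Fin n → Ω, Real.sqrt (∑ k, (φ k (ω k)) ^ 2) ∂(Measure.pi fun _ => μ))
      ≤ (1 + Real.sqrt 2) * Real.sqrt (∫ ω, lam n ω ∂μ)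
          * Real.sqrt (⨆ k ∈ Finset.Icc 1 n, essSup (lam k) μ) := by
  rcases Nat.eq_zero_or_pos n with hn | hn
  · subst hn
    simp [hlam0]
  have hn1 : 1 ≤ n := hn
  set M := ⨆ k ∈ Finset.Icc 1 n, essSup (lam k) μ with hMdef
  set L := ∫ ω, lam n ω ∂μ with hLdef
  -- the family whose iSup is M is bounded above
  have hbdd : BddAbove (Set.range fun k => ⨆ _ : k ∈ Finset.Icc 1 n, essSup (lam k) μ) := by
    apply Set.Finite.bddAbove
    apply Set.Finite.subset (Set.Finite.insert 0
      ((Set.finite_Icc 1 n).image fun k => ⨆ _ : k ∈ Finset.Icc 1 n, essSup (lam k) μ))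
    rintro x ⟨k, rfl⟩
    by_cases hk : k ∈ Finset.Icc 1 n
    · exact Set.mem_insert_of_mem _ ⟨k, by simpa using hk, rfl⟩
    · refine Set.mem_insert_iff.mpr (Or.inl ?_)
      haveI : IsEmpty (k ∈ Finset.Icc 1 n) := ⟨hk⟩
      exact Real.iSup_of_isEmpty _
  have hME : ∀ k, 1 ≤ k → k ≤ n → essSup (lam k) μ ≤ M := by
    intro k h1 h2
    have hmem : k ∈ Finset.Icc 1 n := Finset.mem_Icc.mpr ⟨h1, h2⟩
    have := le_ciSup hbdd k
    rwa [ciSup_pos hmem] at this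
  have hbddae : ∀ k, 1 ≤ k → k ≤ n → Filter.IsBoundedUnder (· ≤ ·) (ae μ) (lam k) := by
    intro k h1 h2
    obtain ⟨B, hB⟩ := hlambdd k h1 h2
    exact ⟨B, Filter.eventually_map.mpr (Filter.Eventually.of_forall hB)⟩
  have haelam : ∀ k, 1 ≤ k → k ≤ n → ∀ᵐ ω ∂μ, lam k ω ≤ essSup (lam k) μ :=
    fun k h1 h2 => ae_le_essSup (hbddae k h1 h2)
  have hint : ∀ k, k ≤ n → Integrable (lam k) μ := by
    intro k hk
    rcases Nat.eq_zero_or_pos k with h | h1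
    · subst h; rw [hlam0]; exact integrable_const 0
    · obtain ⟨B, hB⟩ := hlambdd k h1 hk
      refine Integrable.mono' (integrable_const B) (hlammeas k h1 hk).aestronglyMeasurable
        (Filter.Eventually.of_forall fun ω => ?_)
      rw [Real.norm_of_nonneg (hlamnonneg k h1 hk ω)]
      exact hB ω
  have hL0 : (0:ℝ) ≤ L := integral_nonneg (hlamnonneg n hn1 le_rfl)
  have hLlam : L ≤ essSup (lam n) μ := by
    have h1 : ∫ ω, lam n ω ∂μ ≤ ∫ _, essSup (lam n) μ ∂μ :=
      integral_mono_ae (hint n le_rfl) (integrable_const _) (haelam n hn1 le_rfl)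
    simpa using h1
  have hLM : L ≤ M := hLlam.trans (hME n hn1 le_rfl)
  have hM0 : (0:ℝ) ≤ M := hL0.trans hLM
  -- basic facts about lam at Fin n indices
  have hkn : ∀ k : Fin n, (k : ℕ) ≤ n := fun k => (k.isLt).le
  have lamnonneg' : ∀ k : Fin n, ∀ ω, 0 ≤ lam (k : ℕ) ω := by
    intro k ω
    rcases Nat.eq_zero_or_pos (k : ℕ) with h | h
    · rw [h, hlam0]
    · exact hlamnonneg k h (hkn k) ω
  have lam_aem : ∀ k : Fin n, AEMeasurable (lam (k : ℕ)) μ := by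
    intro k
    rcases Nat.eq_zero_or_pos (k : ℕ) with h | h
    · rw [h, hlam0]; exact aemeasurable_const
    · exact (hlammeas k h (hkn k)).aemeasurable
  have lam_le_M : ∀ k : Fin n, ∀ᵐ ω ∂μ, lam (k : ℕ) ω ≤ M := by
    intro k
    rcases Nat.eq_zero_or_pos (k : ℕ) with h | h
    · rw [h, hlam0]; exact Filter.Eventually.of_forall fun _ => hM0
    · exact (haelam k h (hkn k)).mono fun ω h' => h'.trans (hME k h (hkn k))
  -- the telescoping functions
  set D : Fin n → Ω → ℝ :=
    fun k ω => Real.sqrt ((φ k ω) ^ 2 + (lam (k : ℕ) ω) ^ 2) - lam (k : ℕ) ω with hDdef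
  have hD0 : ∀ k ω, 0 ≤ D k ω := by
    intro k ω
    rw [hDdef, sub_nonneg]
    calc lam (k : ℕ) ω = Real.sqrt ((lam (k : ℕ) ω) ^ 2) := (Real.sqrt_sq (lamnonneg' k ω)).symm
    _ ≤ _ := Real.sqrt_le_sqrt (by nlinarith [sq_nonneg (φ k ω)])
  have hDadd : ∀ k ω, D k ω + lam (k : ℕ) ω
      = Real.sqrt ((φ k ω) ^ 2 + (lam (k : ℕ) ω) ^ 2) := by
    intro k ω; rw [hDdef]; ring
  have hDle : ∀ k ω, D k ω ≤ φ k ω := by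
    intro k ω
    have h2 : Real.sqrt ((φ k ω) ^ 2 + (lam (k : ℕ) ω) ^ 2) ≤ φ k ω + lam (k : ℕ) ω := by
      have h3 : (φ k ω) ^ 2 + (lam (k : ℕ) ω) ^ 2 ≤ (φ k ω + lam (k : ℕ) ω) ^ 2 := by
        nlinarith [mul_nonneg (hφnonneg k ω) (lamnonneg' k ω)]
      have := Real.sqrt_le_sqrt h3
      rwa [Real.sqrt_sq (add_nonneg (hφnonneg k ω) (lamnonneg' k ω))] at this
    rw [hDdef]; simp only; linarith
  have hDsm : ∀ k : Fin n, AEStronglyMeasurable (D k) μ := by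
    intro k
    have h1 : AEMeasurable (fun ω => (φ k ω) ^ 2 + (lam (k : ℕ) ω) ^ 2) μ :=
      ((hφint k).aemeasurable.pow_const 2).add ((lam_aem k).pow_const 2)
    exact ((Real.continuous_sqrt.measurable.comp_aemeasurable h1).sub (lam_aem k)).aestronglyMeasurable
  have hDint : ∀ k : Fin n, Integrable (D k) μ := by
    intro k
    refine Integrable.mono' (hφint k) (hDsm k) (Filter.Eventually.of_forall fun ω => ?_)
    rw [Real.norm_of_nonneg (hD0 k ω)]
    exact hDle k ω
  have hsqint : ∀ k : Fin n,
      Integrable (fun ω => Real.sqrt ((φ k ω) ^ 2 + (lam (k : ℕ) ω) ^ 2)) μ := by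
    intro k
    have := (hDint k).add (hint (k : ℕ) (hkn k))
    refine this.congr (Filter.Eventually.of_forall fun ω => ?_)
    exact hDadd k ω
  -- telescoping
  have htel : ∑ k : Fin n, ∫ ω, D k ω ∂μ ≤ L := by
    have h1 : ∀ k : Fin n, ∫ ω, D k ω ∂μ
        ≤ (∫ ω, lam ((k : ℕ) + 1) ω ∂μ) - ∫ ω, lam (k : ℕ) ω ∂μ := by
      intro k
      rw [hDdef]
      rw [integral_sub (hsqint k) (hint (k : ℕ) (hkn k))]
      exact sub_le_sub_right (hlam k) _
    calc ∑ k : Fin n, ∫ ω, D k ω ∂μ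
        ≤ ∑ k : Fin n, ((∫ ω, lam ((k : ℕ) + 1) ω ∂μ) - ∫ ω, lam (k : ℕ) ω ∂μ) :=
          Finset.sum_le_sum fun k _ => h1 k
    _ = (∫ ω, lam n ω ∂μ) - ∫ ω, lam 0 ω ∂μ := by
        rw [Fin.sum_univ_eq_sum_range
          (fun i => (∫ ω, lam (i + 1) ω ∂μ) - ∫ ω, lam i ω ∂μ)]
        exact Finset.sum_range_sub (fun j => ∫ ω, lam j ω ∂μ) n
    _ = L := by rw [hlam0]; simp; rfl
  -- a.e. key inequality
  have hkey : ∀ k : Fin n, ∀ᵐ ω ∂μ, (φ k ω) ^ 2 ≤ (D k ω) ^ 2 + 2 * M * (D k ω) := by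
    intro k
    filter_upwards [lam_le_M k] with ω hω
    have h0 := hD0 k ω
    have hsq : (D k ω + lam (k : ℕ) ω) ^ 2 = (φ k ω) ^ 2 + (lam (k : ℕ) ω) ^ 2 := by
      rw [hDadd k ω, Real.sq_sqrt (by positivity)]
    nlinarith [lamnonneg' k ω]
  -- first component
  have hbound1 : (∫ ω, Real.sqrt (∑ k, (φ k ω) ^ 2) ∂μ)
      ≤ (1 + Real.sqrt 2) * Real.sqrt L * Real.sqrt M := by
    refine aux_bound μ (G := fun ω => ∑ k, D k ω) hM0 hL0 hLM
      (Filter.Eventually.of_forall fun ω => Finset.sum_nonneg fun k _ => hD0 k ω)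
      (integrable_finset_sum _ fun k _ => hDint k) ?_ ?_
      (Filter.Eventually.of_forall fun ω => Real.sqrt_nonneg _) ?_
    · rw [integral_finset_sum _ fun k _ => hDint k]; exact htel
    · have h1 : AEMeasurable (fun ω => ∑ k, (φ k ω) ^ 2) μ :=
        Finset.aemeasurable_fun_sum _ fun k _ => (hφint k).aemeasurable.pow_const 2
      exact (Real.continuous_sqrt.measurable.comp_aemeasurable h1).aestronglyMeasurable
    · have hae : ∀ᵐ ω ∂μ, ∀ k : Fin n, (φ k ω) ^ 2 ≤ (D k ω) ^ 2 + 2 * M * (D k ω) :=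
        (ae_all_iff).mpr hkey
      filter_upwards [hae] with ω hω
      rw [Real.sq_sqrt (Finset.sum_nonneg fun k _ => sq_nonneg _)]
      calc ∑ k, (φ k ω) ^ 2 ≤ ∑ k, ((D k ω) ^ 2 + 2 * M * (D k ω)) :=
            Finset.sum_le_sum fun k _ => hω k
      _ = (∑ k, (D k ω) ^ 2) + 2 * M * ∑ k, D k ω := by
            rw [Finset.sum_add_distrib, Finset.mul_sum]
      _ ≤ (∑ k, D k ω) ^ 2 + 2 * M * ∑ k, D k ω := by
            have := Finset.sum_sq_le_sq_sum_of_nonneg (s := Finset.univ)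
              (f := fun k => D k ω) (fun k _ => hD0 k ω)
            linarith
  -- second component
  have hmp : ∀ k : Fin n, MeasurePreserving (fun ω : Fin n → Ω => ω k)
      (Measure.pi fun _ : Fin n => μ) μ := fun k => mp_eval μ k
  have hDint' : ∀ k : Fin n,
      Integrable (fun ω : Fin n → Ω => D k (ω k)) (Measure.pi fun _ : Fin n => μ) := by
    intro k
    have h2 : Integrable (D k)
        (Measure.map (fun ω : Fin n → Ω => ω k) (Measure.pi fun _ : Fin n => μ)) := by
      rw [(hmp k).map_eq]; exact hDint k
    exact (integrable_map_measure h2.aestronglyMeasurable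
      (hmp k).measurable.aemeasurable).mp h2
  have hDieq : ∀ k : Fin n,
      (∫ ω : Fin n → Ω, D k (ω k) ∂(Measure.pi fun _ : Fin n => μ)) = ∫ ω, D k ω ∂μ := by
    intro k
    have h2 : AEStronglyMeasurable (D k)
        (Measure.map (fun ω : Fin n → Ω => ω k) (Measure.pi fun _ : Fin n => μ)) := by
      rw [(hmp k).map_eq]; exact hDsm k
    rw [← integral_map (hmp k).measurable.aemeasurable h2, (hmp k).map_eq]
  have hbound2 : (∫ ω : Fin n → Ω, Real.sqrt (∑ k, (φ k (ω k)) ^ 2)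
        ∂(Measure.pi fun _ : Fin n => μ))
      ≤ (1 + Real.sqrt 2) * Real.sqrt L * Real.sqrt M := by
    refine aux_bound _ (G := fun ω : Fin n → Ω => ∑ k, D k (ω k)) hM0 hL0 hLM
      (Filter.Eventually.of_forall fun ω => Finset.sum_nonneg fun k _ => hD0 k _)
      (integrable_finset_sum _ fun k _ => hDint' k) ?_ ?_
      (Filter.Eventually.of_forall fun ω => Real.sqrt_nonneg _) ?_
    · rw [integral_finset_sum _ fun k _ => hDint' k]
      calc ∑ k : Fin n, ∫ ω : Fin n → Ω, D k (ω k) ∂(Measure.pi fun _ : Fin n => μ)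
          = ∑ k : Fin n, ∫ ω, D k ω ∂μ := Finset.sum_congr rfl fun k _ => hDieq k
      _ ≤ L := htel
    · have h1 : AEMeasurable (fun ω : Fin n → Ω => ∑ k, (φ k (ω k)) ^ 2)
          (Measure.pi fun _ : Fin n => μ) := by
        refine Finset.aemeasurable_fun_sum _ fun k _ => AEMeasurable.pow_const ?_ 2
        exact (hφint k).aemeasurable.comp_quasiMeasurePreserving
          (hmp k).quasiMeasurePreserving
      exact (Real.continuous_sqrt.measurable.comp_aemeasurable h1).aestronglyMeasurable
    · have hae : ∀ᵐ ω : Fin n → Ω ∂(Measure.pi fun _ : Fin n => μ),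
          ∀ k : Fin n, (φ k (ω k)) ^ 2 ≤ (D k (ω k)) ^ 2 + 2 * M * (D k (ω k)) := by
        rw [ae_all_iff]
        intro k
        exact (MeasureTheory.Measure.tendsto_eval_ae_ae (μ := fun _ : Fin n => μ) (i := k)).eventually (hkey k)
      filter_upwards [hae] with ω hω
      rw [Real.sq_sqrt (Finset.sum_nonneg fun k _ => sq_nonneg _)]
      calc ∑ k, (φ k (ω k)) ^ 2 ≤ ∑ k, ((D k (ω k)) ^ 2 + 2 * M * (D k (ω k))) :=
            Finset.sum_le_sum fun k _ => hω k
      _ = (∑ k, (D k (ω k)) ^ 2) + 2 * M * ∑ k, D k (ω k) := by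
            rw [Finset.sum_add_distrib, Finset.mul_sum]
      _ ≤ (∑ k, D k (ω k)) ^ 2 + 2 * M * ∑ k, D k (ω k) := by
            have := Finset.sum_sq_le_sq_sum_of_nonneg (s := Finset.univ)
              (f := fun k => D k (ω k)) (fun k _ => hD0 k _)
            linarith
  exact max_le hbound1 hbound2
end

section
/- Let φ_1,…,φ_n be integrable real-valued random variables on a probability space (Ω,μ), and let ψ_1,…,ψ_n be independent random variables on a probability space (Ω',μ') such that for each k the distribution of ψ_k equals the distribution of φ_k. Then E (∑_{k=1}^n |φ_k|²)^{1/2} ≤ 2 · E (∑_{k=1}^n |ψ_k|²)^{1/2}. Equivalently, ‖(φ_k)_{k=1}^n‖_{L¹(ℓ²)} ≤ 2 ‖(φ_k)_{k=1}^n‖_{ind}. -/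
open MeasureTheory Finset ProbabilityTheory

lemma sqrtL1 {a b c : ℝ} (hc : 0 ≤ c) (ha : 0 ≤ a) (hab : a ≤ b) :
    Real.sqrt (b + c) - Real.sqrt b ≤ Real.sqrt (a + c) - Real.sqrt a := by
  have h1 : Real.sqrt (a+c) ^ 2 = a + c := Real.sq_sqrt (by linarith)
  have h2 : Real.sqrt a ^ 2 = a := Real.sq_sqrt ha
  have h3 : Real.sqrt (b+c) ^ 2 = b + c := Real.sq_sqrt (by linarith)
  have h4 : Real.sqrt b ^ 2 = b := Real.sq_sqrt (by linarith)
  have p2 : 0 ≤ Real.sqrt a := Real.sqrt_nonneg _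
  have p4 : 0 ≤ Real.sqrt b := Real.sqrt_nonneg _
  have m1 : Real.sqrt a ≤ Real.sqrt b := Real.sqrt_le_sqrt hab
  have m3 : Real.sqrt a ≤ Real.sqrt (a+c) := Real.sqrt_le_sqrt (by linarith)
  have m4 : Real.sqrt b ≤ Real.sqrt (b+c) := Real.sqrt_le_sqrt (by linarith)
  nlinarith [sq_nonneg (Real.sqrt (a+c) - Real.sqrt a), sq_nonneg (Real.sqrt (b+c) - Real.sqrt b)]

lemma sqrtL1' {w y : ℝ} (hw : 0 ≤ w) (hy : 0 ≤ y) :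
    Real.sqrt (y + w) - Real.sqrt w ≤ Real.sqrt y := by
  have := sqrtL1 hy le_rfl hw
  rw [add_comm w y] at this
  simpa using this

lemma sqrtL2 {ι : Type*} [DecidableEq ι] (s : Finset ι) (x : ι → ℝ) (hx : ∀ i, 0 ≤ x i)
    {t : ℝ} (ht : 0 ≤ t) :
    Real.sqrt (∑ i ∈ s, x i) ≤ Real.sqrt t + ∑ i ∈ s, (Real.sqrt (x i + t) - Real.sqrt t) := by
  have key : Real.sqrt (t + ∑ i ∈ s, x i) - Real.sqrt t
      ≤ ∑ i ∈ s, (Real.sqrt (x i + t) - Real.sqrt t) := by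
    induction s using Finset.induction_on with
    | empty => simp
    | insert a s' hnot ih =>
      rw [Finset.sum_insert hnot, Finset.sum_insert hnot]
      have hsum : 0 ≤ ∑ i ∈ s', x i := Finset.sum_nonneg fun i _ => hx i
      have step : Real.sqrt (t + (x a + ∑ i ∈ s', x i)) - Real.sqrt (t + ∑ i ∈ s', x i)
          ≤ Real.sqrt (x a + t) - Real.sqrt t := by
        have h := sqrtL1 (hx a) ht (by linarith : t ≤ t + ∑ i ∈ s', x i)
        have e1 : t + ∑ i ∈ s', x i + x a = t + (x a + ∑ i ∈ s', x i) := by ring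
        have e2 : t + x a = x a + t := by ring
        rw [e1, e2] at h
        exact h
      linarith
  have h0 : Real.sqrt (∑ i ∈ s, x i) ≤ Real.sqrt (t + ∑ i ∈ s, x i) :=
    Real.sqrt_le_sqrt (by linarith [Finset.sum_nonneg (fun i (_ : i ∈ s) => hx i)])
  linarith

lemma sqrtL4 {n : ℕ} (a : Fin n → ℝ) :
    Real.sqrt (∑ k, (a k) ^ 2) ≤ ∑ k, |a k| := by
  have := sqrtL2 univ (fun k => (a k)^2) (fun k => sq_nonneg _) (le_refl (0:ℝ))
  simpa [Real.sqrt_sq_eq_abs] using this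

lemma sqrtL3 {n : ℕ} (y : Fin n → ℝ) (hy : ∀ k, 0 ≤ y k) :
    ∑ k, (Real.sqrt (∑ j, y j) - Real.sqrt (∑ j ∈ univ.erase k, y j))
      ≤ Real.sqrt (∑ j, y j) := by
  set T := ∑ j, y j with hT
  have hT0 : 0 ≤ T := Finset.sum_nonneg fun j _ => hy j
  rcases eq_or_lt_of_le hT0 with h0 | hpos
  · have hall : ∀ k, y k = 0 := by
      intro k
      have := Finset.sum_eq_zero_iff_of_nonneg (fun j (_ : j ∈ univ) => hy j) |>.mp h0.symm
      exact this k (mem_univ k)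
    have hz : ∀ k : Fin n, (∑ j ∈ univ.erase k, y j) = 0 :=
      fun k => Finset.sum_eq_zero fun j _ => hall j
    simp [← hT, ← h0, hz]
  · have key : ∀ k : Fin n, Real.sqrt T - Real.sqrt (∑ j ∈ univ.erase k, y j)
        ≤ (y k / T) * Real.sqrt T := by
      intro k
      set W := ∑ j ∈ univ.erase k, y j with hW
      have hWT : W + y k = T := by
        rw [hW, hT]; exact Finset.sum_erase_add _ _ (mem_univ k)
      have hW0 : 0 ≤ W := Finset.sum_nonneg fun j _ => hy j
      have hWle : W ≤ T := by linarith [hy k]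
      have hstep : (W / T) * Real.sqrt T ≤ Real.sqrt W := by
        have h1 : Real.sqrt W = Real.sqrt (W / T) * Real.sqrt T := by
          rw [← Real.sqrt_mul (by positivity)]
          congr 1
          field_simp
        have hu0 : (0:ℝ) ≤ W / T := by positivity
        have hle1 : W / T ≤ 1 := (div_le_one hpos).mpr hWle
        have hs := Real.sq_sqrt hu0
        have hs0 := Real.sqrt_nonneg (W / T)
        have hs1 : Real.sqrt (W / T) ≤ 1 := by nlinarith
        have hx : W / T ≤ Real.sqrt (W / T) := by nlinarith
        rw [h1]
        have := mul_le_mul_of_nonneg_right hx (Real.sqrt_nonneg T)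
        linarith
      have hy' : (y k / T) * Real.sqrt T = Real.sqrt T - (W / T) * Real.sqrt T := by
        have : y k / T = 1 - W / T := by
          field_simp; linarith
        rw [this]; ring
      rw [hy']
      linarith
    have hsum := Finset.sum_le_sum (fun k (_ : k ∈ univ) => key k)
    have hrw : ∑ k : Fin n, (y k / T) * Real.sqrt T = Real.sqrt T := by
      rw [← Finset.sum_mul, ← Finset.sum_div, ← hT, div_self (ne_of_gt hpos), one_mul]
    linarith

set_option linter.unusedSectionVars false
section prodAux
variable {α β : Type*} [MeasurableSpace α] [MeasurableSpace β]
    (μ : Measure α) (ν : Measure β) [IsProbabilityMeasure μ] [IsProbabilityMeasure ν]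

lemma my_snd_int {g : β → ℝ} (hg : Integrable g ν) :
    Integrable (fun p : α × β => g p.2) (μ.prod ν) := by
  have hmap : (μ.prod ν).map Prod.snd = ν := by
    rw [Measure.map_snd_prod, measure_univ, one_smul]
  have hsm : AEStronglyMeasurable g ((μ.prod ν).map Prod.snd) := by
    rw [hmap]; exact hg.1
  exact (integrable_map_measure hsm measurable_snd.aemeasurable).mp (by rwa [hmap])

lemma my_snd_integral {g : β → ℝ} (hg : AEStronglyMeasurable g ν) :
    ∫ p, g p.2 ∂(μ.prod ν) = ∫ y, g y ∂ν := by
  have hmap : (μ.prod ν).map Prod.snd = ν := by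
    rw [Measure.map_snd_prod, measure_univ, one_smul]
  have hsm : AEStronglyMeasurable g ((μ.prod ν).map Prod.snd) := by
    rw [hmap]; exact hg
  have := integral_map (measurable_snd.aemeasurable (μ := μ.prod ν)) hsm
  rw [hmap] at this
  exact this.symm

lemma my_fst_int {g : α → ℝ} (hg : Integrable g μ) :
    Integrable (fun p : α × β => g p.1) (μ.prod ν) := by
  have hmap : (μ.prod ν).map Prod.fst = μ := by
    rw [Measure.map_fst_prod, measure_univ, one_smul]
  have hsm : AEStronglyMeasurable g ((μ.prod ν).map Prod.fst) := by
    rw [hmap]; exact hg.1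
  exact (integrable_map_measure hsm measurable_fst.aemeasurable).mp (by rwa [hmap])

lemma my_fst_integral {g : α → ℝ} (hg : AEStronglyMeasurable g μ) :
    ∫ p, g p.1 ∂(μ.prod ν) = ∫ x, g x ∂μ := by
  have hmap : (μ.prod ν).map Prod.fst = μ := by
    rw [Measure.map_fst_prod, measure_univ, one_smul]
  have hsm : AEStronglyMeasurable g ((μ.prod ν).map Prod.fst) := by
    rw [hmap]; exact hg
  have := integral_map (measurable_fst.aemeasurable (μ := μ.prod ν)) hsm
  rw [hmap] at this
  exact this.symm

end prodAux

lemma sqrtL1x {a b c : ℝ} (hc : 0 ≤ c) (ha : 0 ≤ a) (hab : a ≤ b) :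
    Real.sqrt (c + b) - Real.sqrt b ≤ Real.sqrt (c + a) - Real.sqrt a := by
  have := sqrtL1 hc ha hab
  rw [add_comm b c, add_comm a c] at this
  exact this

set_option maxHeartbeats 1000000 in
/-- comparison of the `L¹(ℓ²)` norm with the independent-sum norm
(Corollary `2indgeqL1l2`). -/
theorem stmt9 {Ω Ω' : Type*} [MeasurableSpace Ω] [MeasurableSpace Ω']
    (μ : Measure Ω) (μ' : Measure Ω') [IsProbabilityMeasure μ] [IsProbabilityMeasure μ']
    (n : ℕ) (φ : Fin n → Ω → ℝ) (ψ : Fin n → Ω' → ℝ)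
    (hφmeas : ∀ k, Measurable (φ k))
    (hφint : ∀ k, Integrable (φ k) μ)
    (hψmeas : ∀ k, Measurable (ψ k))
    (hindep : ProbabilityTheory.iIndepFun ψ μ')
    (hdist : ∀ k, μ.map (φ k) = μ'.map (ψ k)) :
    (∫ ω, Real.sqrt (∑ k, |φ k ω| ^ 2) ∂μ)
      ≤ 2 * ∫ ω', Real.sqrt (∑ k, |ψ k ω'| ^ 2) ∂μ' := by
  classical
  suffices h : (∫ ω, Real.sqrt (∑ k, φ k ω ^ 2) ∂μ)
      ≤ 2 * ∫ ω', Real.sqrt (∑ k, ψ k ω' ^ 2) ∂μ' by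
    simpa [sq_abs] using h
  -- measurability
  have hXmeas : ∀ k, Measurable (fun ω => φ k ω ^ 2) := fun k => (hφmeas k).pow_const 2
  have hYmeas : ∀ k, Measurable (fun ω' => ψ k ω' ^ 2) := fun k => (hψmeas k).pow_const 2
  have hTmeas : Measurable (fun ω' => ∑ j, ψ j ω' ^ 2) :=
    Finset.measurable_sum _ (fun j _ => hYmeas j)
  have hWmeas : ∀ k, Measurable (fun ω' => ∑ j ∈ univ.erase k, ψ j ω' ^ 2) :=
    fun k => Finset.measurable_sum _ (fun j _ => hYmeas j)
  have hSmeas : Measurable (fun ω => ∑ j, φ j ω ^ 2) :=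
    Finset.measurable_sum _ (fun j _ => hXmeas j)
  have hT0 : ∀ ω', 0 ≤ ∑ j, ψ j ω' ^ 2 := fun ω' => Finset.sum_nonneg fun j _ => sq_nonneg _
  have hW0 : ∀ (k : Fin n) ω', 0 ≤ ∑ j ∈ univ.erase k, ψ j ω' ^ 2 :=
    fun k ω' => Finset.sum_nonneg fun j _ => sq_nonneg _
  have hWT : ∀ (k : Fin n) ω',
      (∑ j ∈ univ.erase k, ψ j ω' ^ 2) + ψ k ω' ^ 2 = ∑ j, ψ j ω' ^ 2 :=
    fun k ω' => Finset.sum_erase_add _ _ (mem_univ k)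
  have hWleT : ∀ (k : Fin n) ω',
      (∑ j ∈ univ.erase k, ψ j ω' ^ 2) ≤ ∑ j, ψ j ω' ^ 2 := fun k ω' => by
    have := hWT k ω'; nlinarith [sq_nonneg (ψ k ω')]
  -- integrability of ψ
  have hψint : ∀ k, Integrable (ψ k) μ' := by
    intro k
    have h1 : Integrable id (μ.map (φ k)) := by
      rw [integrable_map_measure aestronglyMeasurable_id (hφmeas k).aemeasurable]
      simpa [Function.id_comp] using hφint k
    rw [hdist k] at h1
    have h2 := (integrable_map_measure aestronglyMeasurable_id (hψmeas k).aemeasurable).mp h1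
    simpa [Function.id_comp] using h2
  -- integrability of sqrt sums
  have hsqrtT_int : Integrable (fun ω' => Real.sqrt (∑ j, ψ j ω' ^ 2)) μ' := by
    refine Integrable.mono' (integrable_finset_sum univ (fun k _ => (hψint k).abs))
      hTmeas.sqrt.aestronglyMeasurable ?_
    filter_upwards with ω'
    rw [Real.norm_eq_abs, abs_of_nonneg (Real.sqrt_nonneg _)]
    exact sqrtL4 (fun k => ψ k ω')
  have hsqrtS_int : Integrable (fun ω => Real.sqrt (∑ j, φ j ω ^ 2)) μ := by
    refine Integrable.mono' (integrable_finset_sum univ (fun k _ => (hφint k).abs))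
      hSmeas.sqrt.aestronglyMeasurable ?_
    filter_upwards with ω
    rw [Real.norm_eq_abs, abs_of_nonneg (Real.sqrt_nonneg _)]
    exact sqrtL4 (fun k => φ k ω)
  -- the product measure
  have hFint : ∀ k : Fin n, Integrable (fun p : Ω' × Ω =>
      Real.sqrt (φ k p.2 ^ 2 + ∑ j, ψ j p.1 ^ 2) - Real.sqrt (∑ j, ψ j p.1 ^ 2))
      (μ'.prod μ) := by
    intro k
    have hm : Measurable (fun p : Ω' × Ω =>
        Real.sqrt (φ k p.2 ^ 2 + ∑ j, ψ j p.1 ^ 2) - Real.sqrt (∑ j, ψ j p.1 ^ 2)) :=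
      (((hXmeas k).comp measurable_snd).add (hTmeas.comp measurable_fst)).sqrt.sub
        (hTmeas.comp measurable_fst).sqrt
    refine Integrable.mono' (my_snd_int μ' μ (hφint k).abs) hm.aestronglyMeasurable ?_
    filter_upwards with p
    have hnn : (0:ℝ) ≤ Real.sqrt (φ k p.2 ^ 2 + ∑ j, ψ j p.1 ^ 2)
        - Real.sqrt (∑ j, ψ j p.1 ^ 2) :=
      sub_nonneg.mpr (Real.sqrt_le_sqrt (le_add_of_nonneg_left (sq_nonneg _)))
    rw [Real.norm_eq_abs, abs_of_nonneg hnn]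
    have h := sqrtL1' (hT0 p.1) (sq_nonneg (φ k p.2))
    rw [Real.sqrt_sq_eq_abs] at h
    exact h
  have hGint : ∀ k : Fin n, Integrable (fun p : Ω' × Ω =>
      Real.sqrt (φ k p.2 ^ 2 + ∑ j ∈ univ.erase k, ψ j p.1 ^ 2)
        - Real.sqrt (∑ j ∈ univ.erase k, ψ j p.1 ^ 2)) (μ'.prod μ) := by
    intro k
    have hm : Measurable (fun p : Ω' × Ω =>
        Real.sqrt (φ k p.2 ^ 2 + ∑ j ∈ univ.erase k, ψ j p.1 ^ 2)
          - Real.sqrt (∑ j ∈ univ.erase k, ψ j p.1 ^ 2)) :=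
      (((hXmeas k).comp measurable_snd).add ((hWmeas k).comp measurable_fst)).sqrt.sub
        ((hWmeas k).comp measurable_fst).sqrt
    refine Integrable.mono' (my_snd_int μ' μ (hφint k).abs) hm.aestronglyMeasurable ?_
    filter_upwards with p
    have hnn : (0:ℝ) ≤ Real.sqrt (φ k p.2 ^ 2 + ∑ j ∈ univ.erase k, ψ j p.1 ^ 2)
        - Real.sqrt (∑ j ∈ univ.erase k, ψ j p.1 ^ 2) :=
      sub_nonneg.mpr (Real.sqrt_le_sqrt (le_add_of_nonneg_left (sq_nonneg _)))
    rw [Real.norm_eq_abs, abs_of_nonneg hnn]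
    have h := sqrtL1' (hW0 k p.1) (sq_nonneg (φ k p.2))
    rw [Real.sqrt_sq_eq_abs] at h
    exact h
  -- STEP 2 : main pointwise bound, integrated over the product
  have h2 : (∫ ω, Real.sqrt (∑ j, φ j ω ^ 2) ∂μ)
      ≤ (∫ ω', Real.sqrt (∑ j, ψ j ω' ^ 2) ∂μ')
        + ∑ k, ∫ p, (Real.sqrt (φ k p.2 ^ 2 + ∑ j, ψ j p.1 ^ 2)
            - Real.sqrt (∑ j, ψ j p.1 ^ 2)) ∂(μ'.prod μ) := by
    have e1 : (∫ ω, Real.sqrt (∑ j, φ j ω ^ 2) ∂μ)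
        = ∫ p : Ω' × Ω, Real.sqrt (∑ j, φ j p.2 ^ 2) ∂(μ'.prod μ) :=
      (my_snd_integral μ' μ hSmeas.sqrt.aestronglyMeasurable).symm
    have e2 : (∫ ω', Real.sqrt (∑ j, ψ j ω' ^ 2) ∂μ')
        = ∫ p : Ω' × Ω, Real.sqrt (∑ j, ψ j p.1 ^ 2) ∂(μ'.prod μ) :=
      (my_fst_integral μ' μ hTmeas.sqrt.aestronglyMeasurable).symm
    rw [e1, e2, ← integral_finset_sum _ (fun k _ => hFint k),
      ← integral_add (my_fst_int μ' μ hsqrtT_int)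
        (integrable_finset_sum univ (fun k _ => hFint k))]
    refine integral_mono (my_snd_int μ' μ hsqrtS_int)
      ((my_fst_int μ' μ hsqrtT_int).add
        (integrable_finset_sum univ (fun k _ => hFint k))) ?_
    intro p
    exact sqrtL2 univ (fun k => φ k p.2 ^ 2) (fun k => sq_nonneg _) (hT0 p.1)
  -- STEP 3 : replace the full sum T by the partial sum W k
  have h3 : ∀ k : Fin n,
      (∫ p, (Real.sqrt (φ k p.2 ^ 2 + ∑ j, ψ j p.1 ^ 2)
          - Real.sqrt (∑ j, ψ j p.1 ^ 2)) ∂(μ'.prod μ))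
      ≤ ∫ p, (Real.sqrt (φ k p.2 ^ 2 + ∑ j ∈ univ.erase k, ψ j p.1 ^ 2)
          - Real.sqrt (∑ j ∈ univ.erase k, ψ j p.1 ^ 2)) ∂(μ'.prod μ) := by
    intro k
    refine integral_mono (hFint k) (hGint k) ?_
    intro p
    exact sqrtL1x (sq_nonneg (φ k p.2)) (hW0 k p.1) (hWleT k p.1)
  -- STEP 4 : equidistribution + independence
  have h4 : ∀ k : Fin n,
      (∫ p, (Real.sqrt (φ k p.2 ^ 2 + ∑ j ∈ univ.erase k, ψ j p.1 ^ 2)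
          - Real.sqrt (∑ j ∈ univ.erase k, ψ j p.1 ^ 2)) ∂(μ'.prod μ))
      = ∫ ω', (Real.sqrt (∑ j, ψ j ω' ^ 2)
          - Real.sqrt (∑ j ∈ univ.erase k, ψ j ω' ^ 2)) ∂μ' := by
    intro k
    set H : ℝ × ℝ → ℝ := fun q => Real.sqrt (q.2 + q.1) - Real.sqrt q.1 with hH
    have hHmeas : Measurable H := (measurable_snd.add measurable_fst).sqrt.sub
      measurable_fst.sqrt
    set Wk : Ω' → ℝ := fun ω' => ∑ j ∈ univ.erase k, ψ j ω' ^ 2 with hWk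
    set Xk : Ω → ℝ := fun ω => φ k ω ^ 2 with hXk
    set Yk : Ω' → ℝ := fun ω' => ψ k ω' ^ 2 with hYk
    -- distribution transfer
    have hsq : Measurable (fun x : ℝ => x ^ 2) := measurable_id.pow_const 2
    have e3 : μ.map Xk = μ'.map Yk := by
      have h1 : μ.map Xk = (μ.map (φ k)).map (fun x : ℝ => x ^ 2) := by
        rw [Measure.map_map hsq (hφmeas k)]
        rfl
      have h2 : μ'.map Yk = (μ'.map (ψ k)).map (fun x : ℝ => x ^ 2) := by
        rw [Measure.map_map hsq (hψmeas k)]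
        rfl
      rw [h1, h2, hdist k]
    -- independence
    have hindepY : iIndepFun (fun j (ω' : Ω') => ψ j ω' ^ 2) μ' :=
      hindep.comp (fun _ x => x ^ 2) (fun _ => measurable_id.pow_const 2)
    have hIF : IndepFun (∑ j ∈ univ.erase k, fun ω' => ψ j ω' ^ 2)
        (fun ω' => ψ k ω' ^ 2) μ' :=
      hindepY.indepFun_finset_sum_of_notMem hYmeas (Finset.notMem_erase k univ)
    have hWfun : (∑ j ∈ univ.erase k, fun ω' : Ω' => ψ j ω' ^ 2) = Wk := by
      funext ω'
      rw [Finset.sum_apply]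
    rw [hWfun] at hIF
    have hmapPair : μ'.map (fun ω' => (Wk ω', Yk ω'))
        = (μ'.map Wk).prod (μ'.map Yk) :=
      (indepFun_iff_map_prod_eq_prod_map_map (hWmeas k).aemeasurable
        (hYmeas k).aemeasurable).mp hIF
    -- chain of equalities
    have s1 : ∫ q, H q ∂((μ'.prod μ).map (Prod.map Wk Xk))
        = ∫ p, H (Wk p.1, Xk p.2) ∂(μ'.prod μ) :=
      integral_map ((hWmeas k).prodMap (hXmeas k)).aemeasurable
        hHmeas.aestronglyMeasurable
    have s2 : ∫ q, H q ∂(μ'.map (fun ω' => (Wk ω', Yk ω')))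
        = ∫ ω', H (Wk ω', Yk ω') ∂μ' :=
      integral_map ((hWmeas k).prodMk (hYmeas k)).aemeasurable
        hHmeas.aestronglyMeasurable
    have smap : (μ'.prod μ).map (Prod.map Wk Xk)
        = μ'.map (fun ω' => (Wk ω', Yk ω')) := by
      rw [← Measure.map_prod_map _ _ (hWmeas k) (hXmeas k), e3]
      exact hmapPair.symm
    have lhs_eq : (∫ p, (Real.sqrt (φ k p.2 ^ 2 + ∑ j ∈ univ.erase k, ψ j p.1 ^ 2)
          - Real.sqrt (∑ j ∈ univ.erase k, ψ j p.1 ^ 2)) ∂(μ'.prod μ))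
        = ∫ p, H (Wk p.1, Xk p.2) ∂(μ'.prod μ) := rfl
    have rhs_eq : ∀ ω', H (Wk ω', Yk ω') = Real.sqrt (∑ j, ψ j ω' ^ 2)
          - Real.sqrt (∑ j ∈ univ.erase k, ψ j ω' ^ 2) := by
      intro ω'
      show Real.sqrt (Yk ω' + Wk ω') - Real.sqrt (Wk ω') = _
      rw [add_comm, hWk, hYk]
      simp only []
      rw [hWT k ω']
    rw [lhs_eq, ← s1, smap, s2]
    exact integral_congr_ae (Filter.Eventually.of_forall rhs_eq)
  -- STEP 5 : concavity bound for the sum of increments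
  have h5 : (∑ k : Fin n, ∫ ω', (Real.sqrt (∑ j, ψ j ω' ^ 2)
        - Real.sqrt (∑ j ∈ univ.erase k, ψ j ω' ^ 2)) ∂μ')
      ≤ ∫ ω', Real.sqrt (∑ j, ψ j ω' ^ 2) ∂μ' := by
    have hint : ∀ k : Fin n, Integrable (fun ω' => Real.sqrt (∑ j, ψ j ω' ^ 2)
        - Real.sqrt (∑ j ∈ univ.erase k, ψ j ω' ^ 2)) μ' := by
      intro k
      refine Integrable.mono' (hψint k).abs
        (hTmeas.sqrt.sub (hWmeas k).sqrt).aestronglyMeasurable ?_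
      filter_upwards with ω'
      have hnn : (0:ℝ) ≤ Real.sqrt (∑ j, ψ j ω' ^ 2)
          - Real.sqrt (∑ j ∈ univ.erase k, ψ j ω' ^ 2) :=
        sub_nonneg.mpr (Real.sqrt_le_sqrt (hWleT k ω'))
      rw [Real.norm_eq_abs, abs_of_nonneg hnn]
      have h := sqrtL1' (hW0 k ω') (sq_nonneg (ψ k ω'))
      rw [Real.sqrt_sq_eq_abs] at h
      calc Real.sqrt (∑ j, ψ j ω' ^ 2) - Real.sqrt (∑ j ∈ univ.erase k, ψ j ω' ^ 2)
          = Real.sqrt (ψ k ω' ^ 2 + ∑ j ∈ univ.erase k, ψ j ω' ^ 2)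
            - Real.sqrt (∑ j ∈ univ.erase k, ψ j ω' ^ 2) := by
            rw [add_comm, hWT k ω']
        _ ≤ |ψ k ω'| := h
    rw [← integral_finset_sum _ (fun k _ => hint k)]
    refine integral_mono (integrable_finset_sum _ (fun k _ => hint k)) hsqrtT_int ?_
    intro ω'
    exact sqrtL3 (fun j => ψ j ω' ^ 2) (fun j => sq_nonneg _)
  -- assembly
  calc (∫ ω, Real.sqrt (∑ j, φ j ω ^ 2) ∂μ)
      ≤ (∫ ω', Real.sqrt (∑ j, ψ j ω' ^ 2) ∂μ')
        + ∑ k, ∫ p, (Real.sqrt (φ k p.2 ^ 2 + ∑ j, ψ j p.1 ^ 2)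
            - Real.sqrt (∑ j, ψ j p.1 ^ 2)) ∂(μ'.prod μ) := h2
    _ ≤ (∫ ω', Real.sqrt (∑ j, ψ j ω' ^ 2) ∂μ')
        + ∑ k, ∫ ω', (Real.sqrt (∑ j, ψ j ω' ^ 2)
            - Real.sqrt (∑ j ∈ univ.erase k, ψ j ω' ^ 2)) ∂μ' := by
        gcongr with k hk
        exact (h3 k).trans (le_of_eq (h4 k))
    _ ≤ (∫ ω', Real.sqrt (∑ j, ψ j ω' ^ 2) ∂μ')
        + ∫ ω', Real.sqrt (∑ j, ψ j ω' ^ 2) ∂μ' := by linarith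
    _ = 2 * ∫ ω', Real.sqrt (∑ j, ψ j ω' ^ 2) ∂μ' := by ring
end

section
/- Let ‖·‖ be a norm on ℂⁿ satisfying ‖x‖ ≤ ∑_{i=1}^n |x_i| and ‖(x_1,…,x_n)‖ = ‖(|x_1|,…,|x_n|)‖ for every x ∈ ℂⁿ, and let ‖v‖_* = sup{ |⟨v,w⟩| : w ∈ ℂⁿ, ‖w‖ ≤ 1 } denote the dual norm. Let f_1,…,f_n : T → ℂ be continuously differentiable 2π-periodic functions with ∫_T |f_k| dμ > 0 for each k, set Ber f_k = (∫_T |f_k'| dμ)/(∫_T |f_k| dμ), and let h(t) = ‖(f_1(t),…,f_n(t))‖ — a Lipschitz, hence almost everywhere differentiable, function — with ∫_T h dμ > 0. Then (∫_T |h'| dμ)/(∫_T h dμ) ≤ ‖(Ber f_1,…,Ber f_n)‖_*. -/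
open MeasureTheory Real

set_option maxHeartbeats 1000000

/-- Lemma `ber`: for a norm `N` on `ℂⁿ` dominated by the `ℓ¹` norm and
invariant under taking coordinatewise moduli, the Bernstein quotient of
`h(t) = N(f₁(t),…,f_n(t))` is at most the dual norm of the vector of Bernstein
quotients of the `f_k`. -/
theorem stmt14 (n : ℕ) (Nn : (Fin n → ℂ) → ℝ)
    (hN0 : ∀ x, 0 ≤ Nn x)
    (hNeq0 : ∀ x, Nn x = 0 ↔ x = 0)
    (hNsmul : ∀ (a : ℂ) (x : Fin n → ℂ), Nn (a • x) = ‖a‖ * Nn x)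
    (hNadd : ∀ x y : Fin n → ℂ, Nn (x + y) ≤ Nn x + Nn y)
    (hNl1 : ∀ x : Fin n → ℂ, Nn x ≤ ∑ i, ‖x i‖)
    (hNabs : ∀ x : Fin n → ℂ, Nn x = Nn fun i => (‖x i‖ : ℂ))
    (f : Fin n → ℝ → ℂ)
    (hf : ∀ k, ContDiff ℝ 1 (f k))
    (hper : ∀ k, Function.Periodic (f k) (2 * π))
    (hfpos : ∀ k, 0 < ∫ t in (0 : ℝ)..(2 * π), ‖f k t‖)
    (hhpos : 0 < ∫ t in (0 : ℝ)..(2 * π), Nn fun i => f i t) :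
    (∫ t in (0 : ℝ)..(2 * π), |deriv (fun s => Nn fun i => f i s) t|) /
        (∫ t in (0 : ℝ)..(2 * π), Nn fun i => f i t)
      ≤ sSup {r : ℝ | ∃ w : Fin n → ℂ, Nn w ≤ 1 ∧
          r = ‖∑ i, (((∫ t in (0 : ℝ)..(2 * π), ‖deriv (f i) t‖) /
              (∫ t in (0 : ℝ)..(2 * π), ‖f i t‖) : ℝ) : ℂ) * w i‖} := by
  have hπ : (0:ℝ) < 2 * π := by positivity
  set h : ℝ → ℝ := fun s => Nn fun i => f i s with hh
  set I : ℝ := ∫ t in (0:ℝ)..(2*π), h t with hIdef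
  -- handle n = 0
  rcases Nat.eq_zero_or_pos n with hn | hn
  · exfalso
    subst hn
    have h0 : ∀ t : ℝ, h t = 0 := fun t => (hNeq0 _).2 (funext fun i => i.elim0)
    have : I = 0 := by
      rw [hIdef]
      simp [h0]
    rw [this] at hhpos
    exact lt_irrefl 0 hhpos
  -- basic norm facts
  have hNneg : ∀ x : Fin n → ℂ, Nn (-x) = Nn x := by
    intro x
    have : -x = ((-1 : ℂ)) • x := by ext i; simp
    rw [this, hNsmul]; simp
  have hNsub : ∀ x y : Fin n → ℂ, |Nn x - Nn y| ≤ Nn (x - y) := by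
    intro x y
    rw [abs_sub_le_iff]
    constructor
    · have := hNadd (x - y) y; simpa using this
    · have := hNadd (y - x) x
      have h2 : Nn (y - x) = Nn (x - y) := by rw [← hNneg (x - y)]; ring_nf
      simp only [sub_add_cancel] at this
      linarith [this, h2]
  have hNcont : Continuous Nn := by
    have : LipschitzWith n Nn := by
      apply LipschitzWith.of_dist_le_mul
      intro x y
      rw [Real.dist_eq]
      calc |Nn x - Nn y| ≤ Nn (x - y) := hNsub x y
        _ ≤ ∑ i, ‖(x - y) i‖ := hNl1 _
        _ ≤ ∑ _i : Fin n, dist x y := by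
            apply Finset.sum_le_sum
            intro i _
            rw [dist_eq_norm]
            exact norm_le_pi_norm (x - y) i
        _ = n * dist x y := by simp [Finset.sum_const, nsmul_eq_mul]
    exact this.continuous
  -- real smul vs complex smul
  have hsmulR : ∀ (a : ℝ) (x : Fin n → ℂ), a • x = ((a : ℂ)) • x := by
    intro a x; ext i; simp [Complex.real_smul]
  have hNsmulR : ∀ (a : ℝ) (x : Fin n → ℂ), Nn (a • x) = |a| * Nn x := by
    intro a x; rw [hsmulR, hNsmul]; simp
  -- lower bound for Nn via compactness
  haveI : Nonempty (Fin n) := ⟨⟨0, hn⟩⟩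
  obtain ⟨x₀, hx₀s, hx₀m⟩ :=
    (isCompact_sphere (0 : Fin n → ℂ) 1).exists_isMinOn
      (NormedSpace.sphere_nonempty.2 zero_le_one) hNcont.continuousOn
  have hx₀m : ∀ y ∈ Metric.sphere (0 : Fin n → ℂ) 1, Nn x₀ ≤ Nn y := fun y hy => hx₀m hy
  set ε : ℝ := Nn x₀ with hε
  have hεpos : 0 < ε := by
    rcases (hN0 x₀).lt_or_eq with h | h
    · exact h
    · exfalso
      have := (hNeq0 x₀).1 h.symm
      rw [this] at hx₀s
      simp at hx₀s
  have hεle : ∀ w : Fin n → ℂ, ε * ‖w‖ ≤ Nn w := by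
    intro w
    rcases eq_or_ne w 0 with rfl | hw
    · simp [(hNeq0 0).2 rfl]
    · have hnw : (0:ℝ) < ‖w‖ := norm_pos_iff.2 hw
      have hu : (‖w‖⁻¹ • w) ∈ Metric.sphere (0 : Fin n → ℂ) 1 := by
        simp [norm_smul, abs_of_pos (inv_pos.2 hnw), inv_mul_cancel₀ hnw.ne']
      have := hx₀m _ hu
      rw [hNsmulR, abs_of_pos (inv_pos.2 hnw)] at this
      calc ε * ‖w‖ ≤ (‖w‖⁻¹ * Nn w) * ‖w‖ := by nlinarith
        _ = Nn w := by field_simp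
  -- pointwise derivative bound
  have hfd : ∀ i (t : ℝ), HasDerivAt (f i) (deriv (f i) t) t := fun i t =>
    ((hf i).differentiable one_ne_zero).differentiableAt.hasDerivAt
  have hptw : ∀ t : ℝ, |deriv h t| ≤ ∑ i, ‖deriv (f i) t‖ := by
    intro t
    by_cases hd : DifferentiableAt ℝ h t
    · have hds : Filter.Tendsto (slope h t) (nhdsWithin t {t}ᶜ) (nhds (deriv h t)) :=
        hasDerivAt_iff_tendsto_slope.1 hd.hasDerivAt
      have T1 : Filter.Tendsto (fun s => |slope h t s|) (nhdsWithin t {t}ᶜ)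
          (nhds |deriv h t|) := (continuous_abs.tendsto _).comp hds
      have T2 : Filter.Tendsto (fun s => ∑ i, ‖slope (f i) t s‖) (nhdsWithin t {t}ᶜ)
          (nhds (∑ i, ‖deriv (f i) t‖)) := by
        apply tendsto_finset_sum
        intro i _
        exact (continuous_norm.tendsto _).comp (hasDerivAt_iff_tendsto_slope.1 (hfd i t))
      refine le_of_tendsto_of_tendsto' T1 T2 ?_
      intro s
      have h1 : |slope h t s| = |s - t|⁻¹ * |h s - h t| := by
        rw [slope_def_field]
        rw [div_eq_inv_mul, abs_mul, abs_inv]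
      have h2 : ∀ i, ‖slope (f i) t s‖ = |s - t|⁻¹ * ‖f i s - f i t‖ := by
        intro i
        rw [slope_def_module, norm_smul]
        simp [Real.norm_eq_abs, abs_inv]
      have h3 : |h s - h t| ≤ ∑ i, ‖f i s - f i t‖ := by
        calc |h s - h t| ≤ Nn ((fun i => f i s) - fun i => f i t) := hNsub _ _
          _ ≤ ∑ i, ‖((fun i => f i s) - fun i => f i t) i‖ := hNl1 _
          _ = ∑ i, ‖f i s - f i t‖ := by simp
      rw [h1]
      calc |s - t|⁻¹ * |h s - h t| ≤ |s - t|⁻¹ * ∑ i, ‖f i s - f i t‖ := by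
            apply mul_le_mul_of_nonneg_left h3 (by positivity)
        _ = ∑ i, |s - t|⁻¹ * ‖f i s - f i t‖ := Finset.mul_sum _ _ _
        _ = ∑ i, ‖slope (f i) t s‖ := by
            apply Finset.sum_congr rfl
            intro i _
            rw [h2 i]
    · rw [deriv_zero_of_not_differentiableAt hd]
      simp only [abs_zero]
      positivity
  -- integrability
  have hfC : ∀ i, Continuous (f i) := fun i => (hf i).continuous
  have hf'C : ∀ i, Continuous (deriv (f i)) := fun i => (hf i).continuous_deriv le_rfl
  have hBC : Continuous (fun t => ∑ i, ‖deriv (f i) t‖) := by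
    continuity
  have hBint : IntervalIntegrable (fun t => ∑ i, ‖deriv (f i) t‖) volume 0 (2*π) :=
    hBC.intervalIntegrable _ _
  have hDint : IntervalIntegrable (fun t => |deriv h t|) volume 0 (2*π) := by
    apply hBint.mono_fun ((measurable_deriv h).abs.aestronglyMeasurable)
    apply Filter.Eventually.of_forall
    intro t
    have hB0 : (0:ℝ) ≤ ∑ i, ‖deriv (f i) t‖ :=
      Finset.sum_nonneg fun i _ => norm_nonneg _
    simp only [Real.norm_eq_abs, abs_abs, abs_of_nonneg hB0]
    exact hptw t
  have hIneq1 : (∫ t in (0:ℝ)..(2*π), |deriv h t|)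
      ≤ ∑ i, ∫ t in (0:ℝ)..(2*π), ‖deriv (f i) t‖ := by
    rw [← intervalIntegral.integral_finset_sum
      (fun i _ => ((hf'C i).norm.intervalIntegrable _ _))]
    exact intervalIntegral.integral_mono_on hπ.le hDint hBint (fun t _ => hptw t)
  -- Jensen / Minkowski integral inequality
  set μ : Measure ℝ := volume.restrict (Set.Ioc (0:ℝ) (2*π)) with hμdef
  haveI : NeZero μ := by
    constructor
    rw [hμdef]
    intro hc
    have h1 : volume (Set.Ioc (0:ℝ) (2*π)) = 0 := by
      have := congrArg (fun ν : Measure ℝ => ν Set.univ) hc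
      simpa [Measure.restrict_apply_univ] using this
    rw [Real.volume_Ioc] at h1
    simp only [ENNReal.ofReal_eq_zero] at h1
    linarith
  set g : ℝ → (Fin n → ℂ) := fun t i => (‖f i t‖ : ℂ) with hgdef
  have hgC : Continuous g :=
    continuous_pi fun i => Complex.continuous_ofReal.comp (hfC i).norm
  have hgint : Integrable g μ := hgC.integrableOn_Ioc
  have hNgint : Integrable (Nn ∘ g) μ := (hNcont.comp hgC).integrableOn_Ioc
  have hconv : ConvexOn ℝ Set.univ Nn := by
    refine ⟨convex_univ, ?_⟩
    intro x _ y _ a b ha hb _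
    calc Nn (a • x + b • y) ≤ Nn (a • x) + Nn (b • y) := hNadd _ _
      _ = |a| * Nn x + |b| * Nn y := by rw [hNsmulR, hNsmulR]
      _ = a * Nn x + b * Nn y := by rw [abs_of_nonneg ha, abs_of_nonneg hb]
  have hJ := hconv.map_average_le hNcont.continuousOn isClosed_univ
    (Filter.Eventually.of_forall fun _ => Set.mem_univ _) hgint hNgint
  rw [average_eq, average_eq] at hJ
  have hμuniv : (μ Set.univ).toReal = 2*π := by
    rw [hμdef, Measure.restrict_apply_univ, Real.volume_Ioc]
    rw [ENNReal.toReal_ofReal (by linarith)]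
    ring
  rw [measureReal_def, hμuniv] at hJ
  set v : Fin n → ℂ := ∫ x, g x ∂μ with hvdef
  have hNgh : ∀ t, Nn (g t) = h t := fun t => (hNabs _).symm
  have hIμ : ∫ x, Nn (g x) ∂μ = I := by
    rw [hIdef]
    rw [intervalIntegral.integral_of_le hπ.le]
    exact integral_congr_ae (Filter.Eventually.of_forall fun t => hNgh t)
  rw [hIμ] at hJ
  have h2πpos : (0:ℝ) < (2*π)⁻¹ := by positivity
  have hNvI : Nn v ≤ I := by
    have hL : Nn ((2*π)⁻¹ • v) = (2*π)⁻¹ * Nn v := by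
      rw [hNsmulR, abs_of_pos h2πpos]
    rw [hL, smul_eq_mul] at hJ
    have := mul_le_mul_of_nonneg_left hJ (le_of_lt hπ)
    calc Nn v = (2*π) * ((2*π)⁻¹ * Nn v) := by field_simp
      _ ≤ (2*π) * ((2*π)⁻¹ * I) := this
      _ = I := by field_simp
  -- components of v
  have hvi : ∀ i, v i = ((∫ t in (0:ℝ)..(2*π), ‖f i t‖ : ℝ) : ℂ) := by
    intro i
    have hproj := (ContinuousLinearMap.proj (R := ℂ) (φ := fun _ : Fin n => ℂ) i).integral_comp_comm hgint
    have h1 : v i = ∫ x, ((‖f i x‖ : ℝ) : ℂ) ∂μ := hproj.symm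
    have h2 := Complex.ofRealCLM.integral_comp_comm (μ := μ)
      (φ := fun x => ‖f i x‖) ((hfC i).norm.integrableOn_Ioc)
    have h3 : (∫ x, ‖f i x‖ ∂μ) = ∫ t in (0:ℝ)..(2*π), ‖f i t‖ :=
      (intervalIntegral.integral_of_le hπ.le).symm
    rw [h1]
    calc ∫ x, ((‖f i x‖ : ℝ) : ℂ) ∂μ = Complex.ofRealCLM (∫ x, ‖f i x‖ ∂μ) := h2
      _ = _ := by rw [h3]; rfl
  -- the witness
  set w : Fin n → ℂ :=
    fun i => (((∫ t in (0:ℝ)..(2*π), ‖f i t‖) / I : ℝ) : ℂ) with hwdef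
  have hwv : w = (I⁻¹ : ℝ) • v := by
    ext i
    rw [hwdef, Pi.smul_apply, hvi i, Complex.real_smul]
    push_cast
    ring
  have hNw : Nn w ≤ 1 := by
    rw [hwv, hNsmulR, abs_of_pos (inv_pos.2 hhpos)]
    calc I⁻¹ * Nn v ≤ I⁻¹ * I := mul_le_mul_of_nonneg_left hNvI (inv_pos.2 hhpos).le
      _ = 1 := inv_mul_cancel₀ hhpos.ne'
  -- the sup set
  set S : Set ℝ := {r : ℝ | ∃ w : Fin n → ℂ, Nn w ≤ 1 ∧
      r = ‖∑ i, (((∫ t in (0 : ℝ)..(2 * π), ‖deriv (f i) t‖) /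
          (∫ t in (0 : ℝ)..(2 * π), ‖f i t‖) : ℝ) : ℂ) * w i‖} with hSdef
  have hbdd : BddAbove S := by
    refine ⟨(∑ i, |(∫ t in (0:ℝ)..(2*π), ‖deriv (f i) t‖) /
        (∫ t in (0:ℝ)..(2*π), ‖f i t‖)|) * ε⁻¹, ?_⟩
    rintro r ⟨u, hu, rfl⟩
    have hub : ∀ i, ‖u i‖ ≤ ε⁻¹ := by
      intro i
      have h1 : ε * ‖u‖ ≤ 1 := le_trans (hεle u) hu
      have h2 : ‖u i‖ ≤ ‖u‖ := norm_le_pi_norm u i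
      have h3 : ‖u‖ ≤ ε⁻¹ := by
        rw [inv_eq_one_div, le_div_iff₀ hεpos]
        nlinarith
      linarith
    calc ‖∑ i, (((∫ t in (0:ℝ)..(2*π), ‖deriv (f i) t‖) /
            (∫ t in (0:ℝ)..(2*π), ‖f i t‖) : ℝ) : ℂ) * u i‖
        ≤ ∑ i, ‖(((∫ t in (0:ℝ)..(2*π), ‖deriv (f i) t‖) /
            (∫ t in (0:ℝ)..(2*π), ‖f i t‖) : ℝ) : ℂ) * u i‖ := norm_sum_le _ _
      _ = ∑ i, |(∫ t in (0:ℝ)..(2*π), ‖deriv (f i) t‖) /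
            (∫ t in (0:ℝ)..(2*π), ‖f i t‖)| * ‖u i‖ := by
          apply Finset.sum_congr rfl
          intro i _
          rw [norm_mul, Complex.norm_real, Real.norm_eq_abs]
      _ ≤ ∑ i, |(∫ t in (0:ℝ)..(2*π), ‖deriv (f i) t‖) /
            (∫ t in (0:ℝ)..(2*π), ‖f i t‖)| * ε⁻¹ :=
          Finset.sum_le_sum fun i _ => mul_le_mul_of_nonneg_left (hub i) (abs_nonneg _)
      _ = (∑ i, |(∫ t in (0:ℝ)..(2*π), ‖deriv (f i) t‖) /
            (∫ t in (0:ℝ)..(2*π), ‖f i t‖)|) * ε⁻¹ := (Finset.sum_mul _ _ _).symm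
  -- membership of the witness value
  have hF'nonneg : ∀ i, (0:ℝ) ≤ ∫ t in (0:ℝ)..(2*π), ‖deriv (f i) t‖ := fun i =>
    intervalIntegral.integral_nonneg hπ.le (fun t _ => norm_nonneg _)
  have hmem : ((∑ i, ∫ t in (0:ℝ)..(2*π), ‖deriv (f i) t‖) / I) ∈ S := by
    refine ⟨w, hNw, ?_⟩
    have hterm : ∀ i ∈ Finset.univ,
        (((∫ t in (0:ℝ)..(2*π), ‖deriv (f i) t‖) /
          (∫ t in (0:ℝ)..(2*π), ‖f i t‖) : ℝ) : ℂ) * w i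
        = (((∫ t in (0:ℝ)..(2*π), ‖deriv (f i) t‖) / I : ℝ) : ℂ) := by
      intro i _
      rw [hwdef]
      rw [← Complex.ofReal_mul]
      congr 1
      rw [div_mul_div_comm, mul_comm (∫ t in (0:ℝ)..(2*π), ‖deriv (f i) t‖)
        (∫ t in (0:ℝ)..(2*π), ‖f i t‖)]
      exact mul_div_mul_left _ _ (hfpos i).ne'
    rw [Finset.sum_congr rfl hterm]
    have hsum : (∑ i, (((∫ t in (0:ℝ)..(2*π), ‖deriv (f i) t‖) / I : ℝ) : ℂ))
        = (((∑ i, ∫ t in (0:ℝ)..(2*π), ‖deriv (f i) t‖) / I : ℝ) : ℂ) := by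
      rw [← Complex.ofReal_sum]
      congr 1
      rw [Finset.sum_div]
    rw [hsum, Complex.norm_real, Real.norm_eq_abs, abs_of_nonneg]
    apply div_nonneg _ hhpos.le
    exact Finset.sum_nonneg fun i _ => hF'nonneg i
  -- conclusion
  calc (∫ t in (0:ℝ)..(2*π), |deriv h t|) / I
      ≤ (∑ i, ∫ t in (0:ℝ)..(2*π), ‖deriv (f i) t‖) / I := by
        exact div_le_div_of_nonneg_right hIneq1 hhpos.le
    _ ≤ sSup S := le_csSup hbdd hmem
end
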